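/- arXiv:1811.02399 — 8 statements merged into one kernel-verified Lean document; each statement's English description precedes it below -/
import Mathlib

section
/- Let E be a complex Banach space and let F be a closed linear subspace of E such that the quotient space E/F is separable. Then there exists a bounded linear operator T : E → E such that ker T = F. -/
open TopologicalSpace

noncomputable section KSQAux

namespace KSQ

variable {E : Type*} [NormedAddCommGroup E] [NormedSpace ℂ E]

/-- The quotient map as a continuous linear map. -/
def mkQL (F : Submodule ℂ E) : E →L[ℂ] (E ⧸ F) :=
  LinearMap.mkContinuous F.mkQ 1 fun m => by
    simpa using Submodule.Quotient.norm_mk_le F m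

@[simp] lemma mkQL_apply (F : Submodule ℂ E) (x : E) :
    mkQL F x = Submodule.Quotient.mk x := rfl

/-- A separable normed space admits a countable separating family of functionals of norm ≤ 1. -/
lemma exists_separating (X : Type*) [NormedAddCommGroup X] [NormedSpace ℂ X]
    [SeparableSpace X] :
    ∃ f : ℕ → X →L[ℂ] ℂ, (∀ n, ‖f n‖ ≤ 1) ∧ ∀ y : X, (∀ n, f n y = 0) → y = 0 := by
  obtain ⟨u, hu⟩ := TopologicalSpace.exists_dense_seq X
  choose f hf1 hf2 using fun n => exists_dual_vector'' ℂ (u n)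
  refine ⟨f, hf1, fun y hy => ?_⟩
  by_contra h
  have hy0 : 0 < ‖y‖ := norm_pos_iff.mpr h
  obtain ⟨n, hn⟩ := Metric.denseRange_iff.mp hu y (‖y‖ / 2) (by linarith)
  have h1 : ‖y - u n‖ < ‖y‖ / 2 := by rw [← dist_eq_norm]; exact hn
  have h2 : ‖y‖ / 2 < ‖u n‖ := by
    have := norm_sub_norm_le y (u n); linarith
  have h3 : (f n) (u n) = (f n) (u n - y) := by rw [map_sub, hy n, sub_zero]
  have h4 : ‖(f n) (u n - y)‖ ≤ ‖u n - y‖ := by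
    calc ‖(f n) (u n - y)‖ ≤ ‖f n‖ * ‖u n - y‖ := (f n).le_opNorm _
    _ ≤ 1 * ‖u n - y‖ := by
        have := norm_nonneg (u n - y)
        nlinarith [hf1 n]
    _ = ‖u n - y‖ := one_mul _
  rw [← h3, hf2 n] at h4
  have h4' : ‖u n‖ ≤ ‖u n - y‖ := by simpa using h4
  have h6 : ‖u n - y‖ = ‖y - u n‖ := norm_sub_rev _ _
  linarith

/-- Hahn–Banach: a functional vanishing on a closed subspace and equal to 1 at a point
outside it. -/
lemma exists_functional {V : Submodule ℂ E} (hV : IsClosed (V : Set E)) {x : E}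
    (hx : x ∉ V) :
    ∃ φ : E →L[ℂ] ℂ, φ x = 1 ∧ ∀ v ∈ V, φ v = 0 := by
  haveI : IsClosed (V : Set E) := hV
  have hx0 : (mkQL V x : E ⧸ V) ≠ 0 := by
    simpa [mkQL_apply, Submodule.Quotient.mk_eq_zero] using hx
  obtain ⟨g, -, hg2⟩ := exists_dual_vector ℂ (mkQL V x) (norm_ne_zero_iff.mpr hx0)
  have hnorm : (‖mkQL V x‖ : ℂ) ≠ 0 := by
    simpa using norm_ne_zero_iff.mpr hx0
  refine ⟨(‖mkQL V x‖ : ℂ)⁻¹ • (g.comp (mkQL V)), ?_, ?_⟩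
  · simp only [ContinuousLinearMap.smul_apply, ContinuousLinearMap.comp_apply, hg2]
    exact inv_mul_cancel₀ hnorm
  · intro v hv
    have : mkQL V v = 0 := by
      simpa [mkQL_apply, Submodule.Quotient.mk_eq_zero] using hv
    simp [this]

/-- The inductive step for constructing a biorthogonal system. -/
lemma step (h : ¬ FiniteDimensional ℂ E) (l : List (E × (E →L[ℂ] ℂ))) :
    ∃ p : E × (E →L[ℂ] ℂ), ‖p.1‖ ≤ 1 ∧ p.2 p.1 = 1 ∧
      ∀ q ∈ l, q.2 p.1 = 0 ∧ p.2 q.1 = 0 := by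
  classical
  set V : Submodule ℂ E := Submodule.span ℂ (Prod.fst '' {q | q ∈ l}) with hVdef
  haveI hVfin : FiniteDimensional ℂ V :=
    FiniteDimensional.span_of_finite ℂ (l.finite_toSet.image _)
  set K : Submodule ℂ E := ⨅ q ∈ l, LinearMap.ker (q.2 : E →ₗ[ℂ] ℂ) with hKdef
  have hKmem : ∀ x : E, x ∈ K ↔ ∀ q ∈ l, q.2 x = 0 := by
    intro x
    simp [hKdef, Submodule.mem_iInf, LinearMap.mem_ker]
  have hexists : ∃ x ∈ K, x ∉ V := by
    by_contra hcon
    push_neg at hcon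
    have hKV : K ≤ V := fun x hx => hcon x hx
    haveI : FiniteDimensional ℂ K := Submodule.finiteDimensional_of_le hKV
    -- K is the kernel of a map to a finite-dimensional space
    let Φ : E →ₗ[ℂ] (Fin l.length → ℂ) :=
      LinearMap.pi fun i => ((l.get i).2 : E →ₗ[ℂ] ℂ)
    have hker : LinearMap.ker Φ = K := by
      ext x
      simp only [LinearMap.mem_ker, hKmem]
      constructor
      · intro hx q hq
        obtain ⟨i, rfl⟩ := List.mem_iff_get.mp hq
        exact congrFun hx i
      · intro hx
        funext i
        exact hx (l.get i) (l.get_mem i)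
    haveI : FiniteDimensional ℂ (E ⧸ K) := by
      rw [← hker]
      exact LinearEquiv.finiteDimensional (Φ.quotKerEquivRange).symm
    haveI : IsNoetherian ℂ E := (isNoetherian_iff_submodule_quotient K).mpr
      ⟨IsNoetherian.iff_fg.mpr ‹_›, IsNoetherian.iff_fg.mpr ‹_›⟩
    exact h (IsNoetherian.iff_fg.mp ‹_›)
  obtain ⟨x, hxK, hxV⟩ := hexists
  have hx0 : x ≠ 0 := fun hx => hxV (hx ▸ V.zero_mem)
  set e : E := ‖x‖⁻¹ • x with hedef
  have he1 : ‖e‖ = 1 := by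
    rw [hedef, norm_smul, norm_inv, norm_norm, inv_mul_cancel₀ (norm_ne_zero_iff.mpr hx0)]
  have heK : e ∈ K := K.smul_mem _ hxK
  have heV : e ∉ V := by
    intro he
    apply hxV
    have hxe : ‖x‖ • e = x := by
      rw [hedef, smul_smul, mul_inv_cancel₀ (norm_ne_zero_iff.mpr hx0), one_smul]
    rw [← hxe]
    exact V.smul_of_tower_mem _ he
  obtain ⟨φ, hφ1, hφ2⟩ := exists_functional (V.closed_of_finiteDimensional) heV
  refine ⟨(e, φ), le_of_eq he1, hφ1, fun q hq => ⟨?_, ?_⟩⟩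
  · exact (hKmem e).mp heK q hq
  · exact hφ2 q.1 (Submodule.subset_span ⟨q, hq, rfl⟩)

/-- Sequence of lists of biorthogonal pairs. -/
def seqAux (h : ¬ FiniteDimensional ℂ E) : ℕ → List (E × (E →L[ℂ] ℂ))
  | 0 => []
  | n + 1 => seqAux h n ++ [Classical.choose (step h (seqAux h n))]

/-- The `n`-th biorthogonal pair. -/
def nxt (h : ¬ FiniteDimensional ℂ E) (n : ℕ) : E × (E →L[ℂ] ℂ) := Classical.choose (step h (seqAux h n))

lemma nxt_spec (h : ¬ FiniteDimensional ℂ E) (n : ℕ) : ‖(nxt h n).1‖ ≤ 1 ∧ (nxt h n).2 (nxt h n).1 = 1 ∧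
    ∀ q ∈ seqAux h n, q.2 (nxt h n).1 = 0 ∧ (nxt h n).2 q.1 = 0 :=
  Classical.choose_spec (step h (seqAux h n))

lemma mem_seqAux (h : ¬ FiniteDimensional ℂ E) {i n : ℕ} (hin : i < n) : nxt h i ∈ seqAux h n := by
  induction n with
  | zero => omega
  | succ n ih =>
    rw [show seqAux h (n + 1) = seqAux h n ++ [Classical.choose (step h (seqAux h n))] from rfl]
    rcases Nat.lt_succ_iff_lt_or_eq.mp hin with hlt | rfl
    · exact List.mem_append_left _ (ih hlt)
    · exact List.mem_append_right _ (by simp [nxt])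

/-- Existence of a bounded biorthogonal system in an infinite-dimensional Banach space. -/
lemma exists_biorth (h : ¬ FiniteDimensional ℂ E) :
    ∃ (e : ℕ → E) (φ : ℕ → E →L[ℂ] ℂ), (∀ n, ‖e n‖ ≤ 1) ∧ (∀ n, φ n (e n) = 1) ∧
      ∀ i j, i ≠ j → φ i (e j) = 0 := by
  refine ⟨fun n => (nxt h n).1, fun n => (nxt h n).2, fun n => (nxt_spec h n).1,
    fun n => (nxt_spec h n).2.1, fun i j hij => ?_⟩
  rcases hij.lt_or_gt with hlt | hlt
  · exact ((nxt_spec h j).2.2 _ (mem_seqAux h hlt)).1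
  · exact ((nxt_spec h i).2.2 _ (mem_seqAux h hlt)).2

end KSQ

end KSQAux

set_option maxHeartbeats 1000000 in
/-- **Proposition 2.0.** Let `E` be a complex Banach space and let `F` be a closed linear
subspace of `E` such that the quotient space `E/F` is separable. Then there exists a bounded
linear operator `T : E → E` such that `ker T = F`. -/
theorem kernel_of_separable_quotient
    (E : Type*) [NormedAddCommGroup E] [NormedSpace ℂ E] [CompleteSpace E]
    (F : Submodule ℂ E) (hF : IsClosed (F : Set E))
    (hsep : TopologicalSpace.SeparableSpace (E ⧸ F)) :
    ∃ T : E →L[ℂ] E, LinearMap.ker (T : E →ₗ[ℂ] E) = F := by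
  classical
  haveI : IsClosed (F : Set E) := hF
  by_cases hfd : FiniteDimensional ℂ (E ⧸ F)
  · -- finite-dimensional quotient: use a linear section of the quotient map
    obtain ⟨j, hj⟩ := F.mkQ.exists_rightInverse_of_surjective F.range_mkQ
    let jc : (E ⧸ F) →L[ℂ] E := LinearMap.toContinuousLinearMap j
    refine ⟨jc.comp (KSQ.mkQL F), ?_⟩
    ext x
    simp only [LinearMap.mem_ker, ContinuousLinearMap.coe_coe, ContinuousLinearMap.coe_comp', Function.comp_apply,
      KSQ.mkQL_apply]
    constructor
    · intro hx
      have hj' : F.mkQ (j (Submodule.Quotient.mk x)) = Submodule.Quotient.mk x := by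
        have := LinearMap.congr_fun hj (Submodule.Quotient.mk x)
        simpa using this
      have hjc : jc (Submodule.Quotient.mk x) = j (Submodule.Quotient.mk x) := rfl
      rw [hjc] at hx
      rw [hx] at hj'
      simp only [map_zero] at hj'
      rw [← Submodule.Quotient.mk_eq_zero F]
      exact hj'.symm
    · intro hx
      have : (Submodule.Quotient.mk x : E ⧸ F) = 0 := (Submodule.Quotient.mk_eq_zero F).mpr hx
      rw [this]
      simp
  · -- infinite-dimensional quotient
    have hE : ¬ FiniteDimensional ℂ E := fun hEfd => hfd inferInstance
    obtain ⟨f, hf1, hf2⟩ := KSQ.exists_separating (E ⧸ F)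
    obtain ⟨e, φ, he1, hφ1, hφ2⟩ := KSQ.exists_biorth (E := E) hE
    -- the summands
    -- pointwise sums
    have hcn : ∀ n : ℕ, ‖((1:ℂ)/2) ^ n‖ = ((1:ℝ)/2) ^ n := by
      intro n
      rw [norm_pow]
      norm_num
    have hterm : ∀ (y : E ⧸ F) (n : ℕ),
        ‖((1:ℂ)/2) ^ n • (f n y) • (e n)‖ ≤ ((1:ℝ)/2) ^ n * ‖y‖ := by
      intro y n
      rw [norm_smul, norm_smul, hcn]
      have h1 : ‖f n y‖ ≤ ‖y‖ := by
        calc ‖f n y‖ ≤ ‖f n‖ * ‖y‖ := (f n).le_opNorm y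
          _ ≤ 1 * ‖y‖ := mul_le_mul_of_nonneg_right (hf1 n) (norm_nonneg y)
          _ = ‖y‖ := one_mul _
      calc ((1:ℝ)/2) ^ n * (‖f n y‖ * ‖e n‖) ≤ ((1:ℝ)/2) ^ n * (‖y‖ * 1) := by
            apply mul_le_mul_of_nonneg_left _ (by positivity)
            exact mul_le_mul h1 (he1 n) (norm_nonneg _) (norm_nonneg _)
        _ = ((1:ℝ)/2) ^ n * ‖y‖ := by ring
    have hgeo : Summable (fun n : ℕ => ((1:ℝ)/2) ^ n) :=
      summable_geometric_of_lt_one (by norm_num) (by norm_num)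
    have hsum : ∀ y : E ⧸ F, Summable (fun n => ((1:ℂ)/2) ^ n • (f n y) • (e n)) := by
      intro y
      apply Summable.of_norm
      exact Summable.of_nonneg_of_le (fun n => norm_nonneg _) (hterm y) (hgeo.mul_right ‖y‖)
    set Slin : (E ⧸ F) →ₗ[ℂ] E :=
      { toFun := fun y => ∑' n, ((1:ℂ)/2) ^ n • (f n y) • (e n)
        map_add' := by
          intro a b
          have h1 : HasSum (fun n => ((1:ℂ)/2) ^ n • (f n (a + b)) • (e n))
              ((∑' n, ((1:ℂ)/2) ^ n • (f n a) • (e n)) +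
                (∑' n, ((1:ℂ)/2) ^ n • (f n b) • (e n))) := by
            have h0 := (hsum a).hasSum.add (hsum b).hasSum
            exact h0.congr_fun fun n => by rw [map_add, add_smul, smul_add]
          exact h1.tsum_eq
        map_smul' := by
          intro a y
          have h1 : HasSum (fun n => ((1:ℂ)/2) ^ n • (f n (a • y)) • (e n))
              (a • ∑' n, ((1:ℂ)/2) ^ n • (f n y) • (e n)) := by
            have h0 := (hsum y).hasSum.const_smul a
            exact h0.congr_fun fun n => by
              rw [map_smul, smul_eq_mul, mul_smul, smul_comm]
          exact h1.tsum_eq } with hSlindef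
    have hSlin_apply : ∀ y : E ⧸ F, Slin y = ∑' n, ((1:ℂ)/2) ^ n • (f n y) • (e n) :=
      fun y => rfl
    have hbound : ∀ y : E ⧸ F, ‖Slin y‖ ≤ 2 * ‖y‖ := by
      intro y
      rw [hSlin_apply]
      calc ‖∑' n, ((1:ℂ)/2) ^ n • (f n y) • (e n)‖
          ≤ ∑' n, ‖((1:ℂ)/2) ^ n • (f n y) • (e n)‖ := by
            apply norm_tsum_le_tsum_norm
            exact Summable.of_nonneg_of_le (fun n => norm_nonneg _) (hterm y)
              (hgeo.mul_right ‖y‖)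
        _ ≤ ∑' n, ((1:ℝ)/2) ^ n * ‖y‖ := by
            apply Summable.tsum_le_tsum (hterm y)
              (Summable.of_nonneg_of_le (fun n => norm_nonneg _) (hterm y)
                (hgeo.mul_right ‖y‖))
              (hgeo.mul_right ‖y‖)
        _ = (∑' n : ℕ, ((1:ℝ)/2) ^ n) * ‖y‖ := tsum_mul_right
        _ = 2 * ‖y‖ := by
            rw [tsum_geometric_of_lt_one (by norm_num) (by norm_num)]
            norm_num
    set S : (E ⧸ F) →L[ℂ] E := LinearMap.mkContinuous Slin 2 hbound with hSdef
    have hS_apply : ∀ y : E ⧸ F, S y = ∑' n, ((1:ℂ)/2) ^ n • (f n y) • (e n) :=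
      fun y => rfl
    have hφS : ∀ (k : ℕ) (y : E ⧸ F),
        φ k (S y) = ((1 : ℂ) / 2) ^ k * (f k y) := by
      intro k y
      rw [hS_apply]
      have h1 : HasSum (fun n => φ k (((1:ℂ)/2) ^ n • (f n y) • (e n)))
          (φ k (∑' n, ((1:ℂ)/2) ^ n • (f n y) • (e n))) :=
        (φ k).hasSum (hsum y).hasSum
      have h2 : ∀ n, n ≠ k → φ k (((1:ℂ)/2) ^ n • (f n y) • (e n)) = 0 := by
        intro n hn
        rw [map_smul, map_smul, hφ2 k n (Ne.symm hn)]
        simp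
      have h3 : φ k (((1:ℂ)/2) ^ k • (f k y) • (e k)) = ((1 : ℂ) / 2) ^ k * (f k y) := by
        rw [map_smul, map_smul, hφ1 k]
        simp [smul_eq_mul]
      rw [← h1.tsum_eq, tsum_eq_single k (fun n hn => h2 n hn), h3]
    have hSinj : ∀ y : E ⧸ F, S y = 0 → y = 0 := by
      intro y hy
      apply hf2
      intro n
      have hn := hφS n y
      rw [hy, map_zero] at hn
      have hne : ((1 : ℂ) / 2) ^ n ≠ 0 := by
        apply pow_ne_zero
        norm_num
      exact (mul_eq_zero.mp hn.symm).resolve_left hne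
    refine ⟨S.comp (KSQ.mkQL F), ?_⟩
    ext x
    simp only [LinearMap.mem_ker, ContinuousLinearMap.coe_coe, ContinuousLinearMap.coe_comp', Function.comp_apply,
      KSQ.mkQL_apply]
    constructor
    · intro hx
      have := hSinj _ hx
      rwa [Submodule.Quotient.mk_eq_zero F] at this
    · intro hx
      rw [(Submodule.Quotient.mk_eq_zero F).mpr hx, map_zero]
end

section
/- Let E be a separable complex Banach space. Then every closed linear subspace F of E is the kernel of some bounded linear operator T : E → E. -/
/-- Auxiliary sequence: given a rule `G` assigning a functional to each vector, and the
hypothesis `H` that any finitely many such functionals have a common nonzero kernel vector,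
`bseqAux G H` is a sequence of nonzero vectors, each killed by the functionals of all
previous ones. -/
noncomputable def bseqAux {E : Type*} [NormedAddCommGroup E] [NormedSpace ℂ E]
    (G : E → (E →L[ℂ] ℂ))
    (H : ∀ (n : ℕ) (v : Fin n → E), ∃ z : E, z ≠ 0 ∧ ∀ i, G (v i) z = 0) : ℕ → E :=
  fun n => Nat.strongRec (motive := fun _ => E)
    (fun n ih => (H n (fun i : Fin n => ih i i.isLt)).choose) n

theorem bseqAux_spec {E : Type*} [NormedAddCommGroup E] [NormedSpace ℂ E]
    (G : E → (E →L[ℂ] ℂ))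
    (H : ∀ (n : ℕ) (v : Fin n → E), ∃ z : E, z ≠ 0 ∧ ∀ i, G (v i) z = 0) (n : ℕ) :
    bseqAux G H n ≠ 0 ∧ ∀ k, k < n → G (bseqAux G H k) (bseqAux G H n) = 0 := by
  have e : bseqAux G H n = (H n (fun i : Fin n => bseqAux G H i)).choose := by
    show Nat.strongRec (motive := fun _ => E) _ n = _
    rw [Nat.strongRec_eq]
    rfl
  have h := (H n (fun i : Fin n => bseqAux G H i)).choose_spec
  rw [e]
  exact ⟨h.1, fun k hk => h.2 ⟨k, hk⟩⟩

/-- In a non-finite-dimensional space, finitely many continuous functionals always have a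
common nonzero kernel vector. -/
theorem exists_ne_zero_forall_eq_zero {E : Type*} [NormedAddCommGroup E] [NormedSpace ℂ E]
    (hE : ¬ FiniteDimensional ℂ E) (n : ℕ) (φ : Fin n → (E →L[ℂ] ℂ)) :
    ∃ z : E, z ≠ 0 ∧ ∀ i, φ i z = 0 := by
  by_contra h
  push_neg at h
  have hinj : Function.Injective (LinearMap.pi (fun i => (φ i : E →ₗ[ℂ] ℂ))) := by
    rw [← LinearMap.ker_eq_bot, LinearMap.ker_eq_bot']
    intro z hz
    by_contra hz0
    obtain ⟨i, hi⟩ := h z hz0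
    exact hi (congr_fun hz i)
  exact hE (FiniteDimensional.of_injective _ hinj)

/-- In a separable normed space, there is a countable total family of continuous functionals
of norm at most one. -/
theorem exists_total_seq (Q : Type*) [NormedAddCommGroup Q] [NormedSpace ℂ Q]
    [TopologicalSpace.SeparableSpace Q] :
    ∃ g : ℕ → (Q →L[ℂ] ℂ), (∀ n, ‖g n‖ ≤ 1) ∧ ∀ q : Q, (∀ n, g n q = 0) → q = 0 := by
  haveI : Nonempty Q := ⟨0⟩
  let u := TopologicalSpace.denseSeq Q
  have hdense : DenseRange u := TopologicalSpace.denseRange_denseSeq Q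
  have hex : ∀ n, ∃ φ : Q →L[ℂ] ℂ, ‖φ‖ ≤ 1 ∧ (u n ≠ 0 → φ (u n) = ‖u n‖) := by
    intro n
    by_cases h : u n = 0
    · exact ⟨0, by simp, fun h' => absurd h h'⟩
    · obtain ⟨φ, h1, h2⟩ := exists_dual_vector ℂ (u n) (norm_ne_zero_iff.mpr h)
      exact ⟨φ, le_of_eq h1, fun _ => h2⟩
  choose g hg1 hg2 using hex
  refine ⟨g, hg1, fun q hq => ?_⟩
  by_contra hq0
  have h3 : 0 < ‖q‖ := norm_pos_iff.mpr hq0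
  obtain ⟨n, hn⟩ := Metric.denseRange_iff.mp hdense q (‖q‖ / 3) (by positivity)
  rw [dist_eq_norm] at hn
  have hun : u n ≠ 0 := by
    intro h0
    rw [h0, sub_zero] at hn
    linarith
  have h5 : ‖u n‖ ≤ ‖q‖ / 3 := by
    have e1 : g n (u n) = ((‖u n‖ : ℝ) : ℂ) := hg2 n hun
    have e2 : g n (u n) - g n q = g n (u n - q) := (map_sub (g n) _ _).symm
    have e3 : ‖g n (u n - q)‖ ≤ ‖u n - q‖ := by
      calc ‖g n (u n - q)‖ ≤ ‖g n‖ * ‖u n - q‖ := (g n).le_opNorm _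
        _ ≤ 1 * ‖u n - q‖ := mul_le_mul_of_nonneg_right (hg1 n) (norm_nonneg _)
        _ = ‖u n - q‖ := one_mul _
    have e5 : ‖g n (u n)‖ = ‖u n‖ := by rw [e1]; simp
    calc ‖u n‖ = ‖g n (u n)‖ := e5.symm
      _ = ‖g n (u n) - g n q‖ := by rw [hq n, sub_zero]
      _ = ‖g n (u n - q)‖ := by rw [e2]
      _ ≤ ‖u n - q‖ := e3
      _ = ‖q - u n‖ := norm_sub_rev _ _
      _ ≤ ‖q‖ / 3 := le_of_lt hn
  have h6 : ‖q‖ - ‖u n‖ ≤ ‖q - u n‖ := norm_sub_norm_le _ _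
  linarith

/-- Given a triangular biorthogonal-type system `(y, g)` in a Banach space, any sequence of
functionals `f` arises as the "coordinates" of the kernel of a single bounded operator. -/
theorem exists_operator_kernel {E : Type*} [NormedAddCommGroup E] [NormedSpace ℂ E]
    [CompleteSpace E]
    (y : ℕ → E) (g : ℕ → (E →L[ℂ] ℂ)) (f : ℕ → (E →L[ℂ] ℂ))
    (hgy : ∀ n, g n (y n) = 1) (hgy0 : ∀ k n, k < n → g k (y n) = 0) :
    ∃ T : E →L[ℂ] E, ∀ x : E, (T x = 0 ↔ ∀ m, f m x = 0) := by
  set w : ℕ → ℝ := fun n => (1 / 2 : ℝ) ^ n * (1 + ‖f n‖ * ‖y n‖)⁻¹ with hw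
  have hwpos : ∀ n, 0 < w n := by
    intro n
    have h1 : (0:ℝ) < 1 + ‖f n‖ * ‖y n‖ := by positivity
    positivity
  set A : ℕ → (E →L[ℂ] E) := fun n => (((w n : ℝ) : ℂ) • f n).smulRight (y n) with hA
  have hAnorm : ∀ n, ‖A n‖ ≤ (1 / 2 : ℝ) ^ n := by
    intro n
    have h1 : (0:ℝ) < 1 + ‖f n‖ * ‖y n‖ := by positivity
    have : ‖A n‖ = w n * (‖f n‖ * ‖y n‖) := by
      rw [hA]
      rw [ContinuousLinearMap.norm_smulRight_apply, norm_smul]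
      simp [abs_of_pos (hwpos n), mul_assoc]
    rw [this, hw]
    have h2 : (1 + ‖f n‖ * ‖y n‖)⁻¹ * (‖f n‖ * ‖y n‖) ≤ 1 := by
      rw [inv_mul_le_iff₀ h1]
      nlinarith [norm_nonneg (f n), norm_nonneg (y n)]
    calc (1/2:ℝ)^n * (1 + ‖f n‖ * ‖y n‖)⁻¹ * (‖f n‖ * ‖y n‖)
        = (1/2:ℝ)^n * ((1 + ‖f n‖ * ‖y n‖)⁻¹ * (‖f n‖ * ‖y n‖)) := by ring
      _ ≤ (1/2:ℝ)^n * 1 := mul_le_mul_of_nonneg_left h2 (by positivity)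
      _ = (1/2:ℝ)^n := mul_one _
  have hAsum : Summable A :=
    Summable.of_norm_bounded summable_geometric_two hAnorm
  set T : E →L[ℂ] E := ∑' n, A n with hT
  have hTx : ∀ x : E, T x = ∑' n, A n x := by
    intro x
    have := (ContinuousLinearMap.apply ℂ E x).map_tsum hAsum
    simpa [hT] using this
  have hAsx : ∀ x : E, Summable (fun n => A n x) := by
    intro x
    exact (hAsum.hasSum.mapL (ContinuousLinearMap.apply ℂ E x)).summable
  have hAapp : ∀ n x, A n x = (((w n : ℝ) : ℂ) * f n x) • y n := by
    intro n x
    simp [hA, mul_smul]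
  refine ⟨T, fun x => ⟨?_, ?_⟩⟩
  · intro hx m
    induction m using Nat.strong_induction_on with
    | _ m ih =>
      have h0 : g m (T x) = 0 := by rw [hx, map_zero]
      have h1 : g m (T x) = ∑' n, g m (A n x) := by
        rw [hTx x]
        exact (g m).map_tsum (hAsx x)
      have h2 : (∑' n, g m (A n x)) = g m (A m x) := by
        refine tsum_eq_single m (fun n hn => ?_)
        rcases lt_or_gt_of_ne hn with h | h
        · rw [hAapp, map_smul, ih n h]
          simp
        · rw [hAapp, map_smul, hgy0 m n h]
          simp
      have h3 : g m (A m x) = ((w m : ℝ) : ℂ) * f m x := by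
        rw [hAapp, map_smul, hgy m]
        simp [smul_eq_mul]
      have h4 : ((w m : ℝ) : ℂ) * f m x = 0 := by rw [← h3, ← h2, ← h1, h0]
      have h5 : ((w m : ℝ) : ℂ) ≠ 0 := by
        simp only [ne_eq, Complex.ofReal_eq_zero]
        exact ne_of_gt (hwpos m)
      exact (mul_eq_zero.mp h4).resolve_left h5
  · intro hfx
    rw [hTx x]
    have : ∀ n, A n x = 0 := by
      intro n
      rw [hAapp, hfx n]
      simp
    simp [this]

/-- Let `E` be a separable complex Banach space. Then every closed linear subspace `F` of `E`
is the kernel of some bounded linear operator `T : E → E`. -/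
theorem every_closed_subspace_is_kernel_of_separable
    (E : Type*) [NormedAddCommGroup E] [NormedSpace ℂ E] [CompleteSpace E]
    [TopologicalSpace.SeparableSpace E]
    (F : Submodule ℂ E) (hF : IsClosed (F : Set E)) :
    ∃ T : E →L[ℂ] E, LinearMap.ker (T : E →ₗ[ℂ] E) = F := by
  classical
  haveI : IsClosed (F : Set E) := hF
  -- the continuous quotient map
  let πL : E →L[ℂ] (E ⧸ F) := LinearMap.mkContinuous F.mkQ 1
    (fun x => by simpa using Submodule.Quotient.norm_mk_le F x)
  have hπL : ∀ x : E, πL x = Submodule.Quotient.mk x := fun x => rfl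
  have hπsurj : Function.Surjective πL := Submodule.Quotient.mk_surjective F
  haveI : TopologicalSpace.SeparableSpace (E ⧸ F) :=
    hπsurj.denseRange.separableSpace πL.continuous
  by_cases hfd : FiniteDimensional ℂ (E ⧸ F)
  · -- finite-dimensional quotient: lift a basis to get a continuous right inverse
    let b := Module.finBasis ℂ (E ⧸ F)
    have hlift : ∀ i, ∃ e : E, Submodule.Quotient.mk e = b i :=
      fun i => Submodule.Quotient.mk_surjective F (b i)
    choose e he using hlift
    let j : (E ⧸ F) →ₗ[ℂ] E := b.constr ℂ e
    have hcomp : ∀ q : E ⧸ F, F.mkQ (j q) = q := by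
      have : F.mkQ.comp j = LinearMap.id := b.ext fun i => by
        simp [j, Module.Basis.constr_basis, Submodule.mkQ_apply, he i]
      intro q
      simpa using LinearMap.congr_fun this q
    refine ⟨(LinearMap.toContinuousLinearMap j).comp πL, ?_⟩
    ext x
    simp only [LinearMap.mem_ker]
    constructor
    · intro hx
      have hx' : j (πL x) = 0 := hx
      have h0 : πL x = 0 := by
        have := hcomp (πL x)
        rw [hx'] at this
        simpa using this.symm
      rw [hπL] at h0
      exact (Submodule.Quotient.mk_eq_zero F).mp h0
    · intro hx
      have h0 : πL x = 0 := by rw [hπL]; exact (Submodule.Quotient.mk_eq_zero F).mpr hx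
      show j (πL x) = 0
      rw [h0, map_zero]
  · -- infinite-dimensional quotient; then `E` is infinite-dimensional too
    have hE : ¬ FiniteDimensional ℂ E := fun h => hfd inferInstance
    -- a total sequence of functionals on the quotient
    obtain ⟨g', hg'1, hg'2⟩ := exists_total_seq (E ⧸ F)
    set f : ℕ → (E →L[ℂ] ℂ) := fun n => (g' n).comp πL with hf
    -- the triangular biorthogonal system in `E`
    set G : E → (E →L[ℂ] ℂ) := fun z =>
      if h : z = 0 then 0 else ((‖z‖ : ℝ) : ℂ)⁻¹ • (exists_dual_vector ℂ z (norm_ne_zero_iff.mpr h)).choose with hG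
    have hGz : ∀ z : E, z ≠ 0 → G z z = 1 := by
      intro z hz
      rw [hG]
      simp only [dif_neg hz]
      have h2 := (exists_dual_vector ℂ z (norm_ne_zero_iff.mpr hz)).choose_spec.2
      rw [ContinuousLinearMap.smul_apply, h2, smul_eq_mul]
      have h3 : ((‖z‖ : ℝ) : ℂ) ≠ 0 := by
        simp only [ne_eq, Complex.ofReal_eq_zero]
        exact ne_of_gt (norm_pos_iff.mpr hz)
      exact inv_mul_cancel₀ h3
    have H : ∀ (n : ℕ) (v : Fin n → E), ∃ z : E, z ≠ 0 ∧ ∀ i, G (v i) z = 0 :=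
      fun n v => exists_ne_zero_forall_eq_zero hE n (fun i => G (v i))
    set y : ℕ → E := bseqAux G H with hy
    set g : ℕ → (E →L[ℂ] ℂ) := fun n => G (y n) with hg
    have hgy : ∀ n, g n (y n) = 1 := fun n => hGz (y n) (bseqAux_spec G H n).1
    have hgy0 : ∀ k n, k < n → g k (y n) = 0 := fun k n hk => (bseqAux_spec G H n).2 k hk
    obtain ⟨T, hT⟩ := exists_operator_kernel y g f hgy hgy0
    refine ⟨T, ?_⟩
    ext x
    rw [LinearMap.mem_ker]
    rw [ContinuousLinearMap.coe_coe, hT x]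
    constructor
    · intro hfx
      have : πL x = 0 := hg'2 (πL x) (fun n => hfx n)
      rw [hπL] at this
      exact (Submodule.Quotient.mk_eq_zero F).mp this
    · intro hx m
      have h0 : πL x = 0 := by rw [hπL]; exact (Submodule.Quotient.mk_eq_zero F).mpr hx
      show g' m (πL x) = 0
      rw [h0, map_zero]
end

section
/- Let E be a complex Banach space containing an uncountable biorthogonal system, i.e. there exist an uncountable index set Γ and families (x_γ)_{γ∈Γ} in E and (λ_γ)_{γ∈Γ} in the continuous dual E' such that λ_β(x_α) = 1 if α = β and λ_β(x_α) = 0 if α ≠ β. Then E contains a closed linear subspace F such that both F and the quotient E/F are non-separable. -/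
lemma countable_of_isSeparable_of_separated {X : Type*} [PseudoMetricSpace X]
    {s : Set X} (hs : TopologicalSpace.IsSeparable s) {ε : ℝ} (hε : 0 < ε)
    (h : s.Pairwise (fun a b => ε ≤ dist a b)) : s.Countable := by
  obtain ⟨c, hc, hcc⟩ := hs
  have key : ∀ a ∈ s, ∃ y ∈ c, dist a y < ε / 2 := by
    intro a ha
    rcases Metric.mem_closure_iff.mp (hcc ha) (ε/2) (by linarith) with ⟨y, hy, hd⟩
    exact ⟨y, hy, hd⟩
  choose f hf hfd using key
  have hcnt : Countable c := hc.to_subtype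
  have : Countable s := by
    refine (Function.Injective.countable (f := fun a : s => (⟨f a a.2, hf a a.2⟩ : c)))
      fun a b hab => ?_
    by_contra hne
    have hne' : (a : X) ≠ (b : X) := fun hh => hne (Subtype.ext hh)
    have h1 : ε ≤ dist (a : X) (b : X) := h a.2 b.2 hne'
    have h2 : f a a.2 = f b b.2 := congrArg Subtype.val hab
    have h3 : dist (a : X) (f b b.2) < ε / 2 := h2 ▸ hfd a a.2
    have h4 : dist (b : X) (f b b.2) < ε / 2 := hfd b b.2
    have h5 := dist_triangle (a : X) (f b b.2) (b : X)
    rw [dist_comm (f b b.2) (b : X)] at h5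
    linarith
  exact Set.countable_coe_iff.mp this

/-- **Lemma 2.5.8.** Let `E` be a complex Banach space containing an uncountable biorthogonal
system `{(x_γ, λ_γ) : γ ∈ Γ}`. Then `E` contains a closed linear subspace `F` such that both
`F` and `E/F` are non-separable. -/
theorem exists_nonseparable_subspace_with_nonseparable_quotient_of_biorthogonal
    (E : Type*) [NormedAddCommGroup E] [NormedSpace ℂ E] [CompleteSpace E]
    (Γ : Type*) [Uncountable Γ]
    (x : Γ → E) (lam : Γ → (E →L[ℂ] ℂ))
    (hbi₁ : ∀ α : Γ, lam α (x α) = 1)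
    (hbi₂ : ∀ α β : Γ, α ≠ β → lam β (x α) = 0) :
    ∃ F : Submodule ℂ E, IsClosed (F : Set E) ∧
      ¬ TopologicalSpace.IsSeparable (F : Set E) ∧
      ¬ TopologicalSpace.SeparableSpace (E ⧸ F) := by
  classical
  -- Step 1: pigeonhole, find `n` with uncountably many `γ` having `‖lam γ‖ ≤ n`
  have huniv : ¬ (Set.univ : Set Γ).Countable := by
    rw [Set.countable_univ_iff]
    exact not_countable
  obtain ⟨n, hT⟩ : ∃ n : ℕ, ¬ {γ : Γ | ‖lam γ‖ ≤ (n : ℝ)}.Countable := by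
    by_contra hypo
    push_neg at hypo
    apply huniv
    have hcover : (Set.univ : Set Γ) = ⋃ n : ℕ, {γ : Γ | ‖lam γ‖ ≤ (n : ℝ)} := by
      ext γ
      simp only [Set.mem_univ, Set.mem_iUnion, Set.mem_setOf_eq, true_iff]
      exact exists_nat_ge _
    rw [hcover]
    exact Set.countable_iUnion hypo
  set T : Set Γ := {γ : Γ | ‖lam γ‖ ≤ (n : ℝ)} with hTdef
  set N : ℝ := (n : ℝ) + 1 with hNdef
  have hN0 : 0 < N := by positivity
  have hbound : ∀ γ ∈ T, ‖lam γ‖ ≤ N := fun γ hγ => le_trans hγ (by linarith)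
  -- general lower bound: if `‖lam β‖ ≤ N` and `lam β v = -1` then `1/N ≤ ‖v‖`
  have hlow : ∀ β ∈ T, ∀ v : E, lam β v = -1 → 1 / N ≤ ‖v‖ := by
    intro β hβ v hv
    have h1 : (1 : ℝ) ≤ ‖lam β v‖ := by rw [hv]; simp
    have h2 : ‖lam β v‖ ≤ ‖lam β‖ * ‖v‖ := (lam β).le_opNorm v
    have h3 : ‖lam β‖ * ‖v‖ ≤ N * ‖v‖ :=
      mul_le_mul_of_nonneg_right (hbound β hβ) (norm_nonneg v)
    rw [div_le_iff₀ hN0, mul_comm]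
    linarith
  -- Step 2: split T into two disjoint uncountable pieces A and B
  have hTinf : Infinite T := by
    rw [Set.infinite_coe_iff]
    exact fun hfin => hT hfin.countable
  have hcard : Cardinal.mk (↥T ⊕ ↥T) = Cardinal.mk ↥T := by
    simp only [Cardinal.mk_sum, Cardinal.lift_id]
    exact Cardinal.add_eq_self (Cardinal.aleph0_le_mk T)
  obtain ⟨e⟩ := Cardinal.eq.mp hcard
  set g₁ : T → Γ := fun t => ↑(e (Sum.inl t)) with hg₁
  set g₂ : T → Γ := fun t => ↑(e (Sum.inr t)) with hg₂
  have hg₁inj : Function.Injective g₁ := fun a b hab => by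
    have := Subtype.val_injective hab
    exact Sum.inl_injective (e.injective this)
  have hg₂inj : Function.Injective g₂ := fun a b hab => by
    have := Subtype.val_injective hab
    exact Sum.inr_injective (e.injective this)
  set A : Set Γ := Set.range g₁ with hA
  set B : Set Γ := Set.range g₂ with hB
  have hAT : A ⊆ T := by rintro _ ⟨t, rfl⟩; exact (e (Sum.inl t)).2
  have hBT : B ⊆ T := by rintro _ ⟨t, rfl⟩; exact (e (Sum.inr t)).2
  have hdisj : ∀ α ∈ A, ∀ β ∈ B, α ≠ β := by
    rintro _ ⟨s, rfl⟩ _ ⟨t, rfl⟩ hcon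
    have : e (Sum.inl s) = e (Sum.inr t) := Subtype.val_injective hcon
    exact Sum.inl_ne_inr (e.injective this)
  have hAunc : ¬ A.Countable := by
    intro hcnt
    apply hT
    have : (g₁ ⁻¹' A).Countable := hcnt.preimage hg₁inj
    have huniv' : (g₁ ⁻¹' A) = Set.univ := by
      ext t; simp [hA, Set.mem_preimage]
    rw [huniv', Set.countable_univ_iff] at this
    exact Set.countable_coe_iff.mpr this
  have hBunc : ¬ B.Countable := by
    intro hcnt
    apply hT
    have : (g₂ ⁻¹' B).Countable := hcnt.preimage hg₂inj
    have huniv' : (g₂ ⁻¹' B) = Set.univ := by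
      ext t; simp [hB, Set.mem_preimage]
    rw [huniv', Set.countable_univ_iff] at this
    exact Set.countable_coe_iff.mpr this
  -- Step 3: define F
  set F : Submodule ℂ E := (Submodule.span ℂ (x '' A)).topologicalClosure with hF
  have hclosed : IsClosed (F : Set E) := Submodule.isClosed_topologicalClosure _
  have hmem : ∀ γ ∈ A, x γ ∈ F := fun γ hγ =>
    Submodule.le_topologicalClosure _ (Submodule.subset_span ⟨γ, hγ, rfl⟩)
  -- the functionals `lam β` for `β ∈ B` vanish on F
  have hvanish : ∀ β ∈ B, ∀ v ∈ F, lam β v = 0 := by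
    intro β hβ v hv
    have hker : F ≤ LinearMap.ker (lam β : E →ₗ[ℂ] ℂ) := by
      apply Submodule.topologicalClosure_minimal
      · rw [Submodule.span_le]
        rintro _ ⟨γ, hγ, rfl⟩
        exact LinearMap.mem_ker.mpr (hbi₂ γ β (hdisj γ hγ β hβ))
      · exact ContinuousLinearMap.isClosed_ker (lam β)
    exact LinearMap.mem_ker.mp (hker hv)
  -- x is injective
  have hxinj : Function.Injective x := by
    intro α β hab
    by_contra hne
    have h0 := hbi₂ α β hne
    rw [hab, hbi₁ β] at h0
    exact one_ne_zero h0
  refine ⟨F, hclosed, ?_, ?_⟩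
  · -- F is not separable
    intro hsep
    apply hAunc
    have hsub : x '' A ⊆ (F : Set E) := by
      rintro _ ⟨γ, hγ, rfl⟩; exact hmem γ hγ
    have hsep' : TopologicalSpace.IsSeparable (x '' A) := hsep.mono hsub
    have hpair : (x '' A).Pairwise (fun a b => 1 / N ≤ dist a b) := by
      rintro _ ⟨α, hα, rfl⟩ _ ⟨β, hβ, rfl⟩ hne
      have hαβ : α ≠ β := fun h => hne (congrArg x h)
      have hv : lam β (x α - x β) = -1 := by
        rw [map_sub, hbi₁ β, hbi₂ α β hαβ]; ring
      rw [dist_eq_norm]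
      exact hlow β (hAT hβ) _ hv
    have hcnt : (x '' A).Countable :=
      countable_of_isSeparable_of_separated hsep' (by positivity) hpair
    exact (hcnt.preimage hxinj).mono (Set.subset_preimage_image x A)
  · -- E ⧸ F is not separable
    intro hsep
    apply hBunc
    set q : Γ → E ⧸ F := fun γ => Submodule.Quotient.mk (x γ) with hq
    have hsep' : TopologicalSpace.IsSeparable (q '' B) :=
      TopologicalSpace.IsSeparable.of_separableSpace _
    -- separation in the quotient
    have hqsep : ∀ α ∈ B, ∀ β ∈ B, α ≠ β → 1 / N ≤ dist (q α) (q β) := by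
      intro α hα β hβ hαβ
      rw [dist_eq_norm, hq]
      have hsub : (Submodule.Quotient.mk (x α) : E ⧸ F) - Submodule.Quotient.mk (x β)
          = Submodule.Quotient.mk (x α - x β) := by
        rw [Submodule.Quotient.mk_sub]
      rw [hsub]
      by_contra hlt
      push_neg at hlt
      have hε : (0 : ℝ) < 1 / N - ‖(Submodule.Quotient.mk (x α - x β) : E ⧸ F)‖ := by
        linarith
      obtain ⟨m, hm, hmn⟩ := Submodule.Quotient.norm_mk_lt
        (Submodule.Quotient.mk (x α - x β) : E ⧸ F) hε
      have hmF : m - (x α - x β) ∈ F := by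
        rwa [Submodule.Quotient.eq] at hm
      have hm1 : lam β m = -1 := by
        have h0 : lam β (m - (x α - x β)) = 0 := hvanish β hβ _ hmF
        have : lam β m - lam β (x α - x β) = 0 := by rw [← map_sub]; exact h0
        have h2 : lam β (x α - x β) = -1 := by
          rw [map_sub, hbi₁ β, hbi₂ α β hαβ]; ring
        rw [h2] at this
        linear_combination this
      have := hlow β (hBT hβ) m hm1
      linarith
    have hpair : (q '' B).Pairwise (fun a b => 1 / N ≤ dist a b) := by
      rintro _ ⟨α, hα, rfl⟩ _ ⟨β, hβ, rfl⟩ hne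
      exact hqsep α hα β hβ (fun h => hne (congrArg q h))
    have hcnt : (q '' B).Countable :=
      countable_of_isSeparable_of_separated hsep' (by positivity) hpair
    -- q is injective on B
    have hqinjB : Set.InjOn q B := by
      intro α hα β hβ hab
      by_contra hne
      have hmF : x α - x β ∈ F := by
        rw [← Submodule.Quotient.eq]
        simpa [hq, Submodule.Quotient.mk_sub] using hab
      have h0 : lam β (x α - x β) = 0 := hvanish β hβ _ hmF
      rw [map_sub, hbi₁ β, hbi₂ α β hne] at h0
      simp at h0
    exact (Set.mapsTo_image q B).countable_of_injOn hqinjB hcnt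
end

section
/- Let E be a non-separable, reflexive complex Banach space. Then E contains a closed linear subspace F such that both F and the quotient E/F are non-separable. -/
open TopologicalSpace Set NormedSpace

set_option linter.unusedSectionVars false
set_option maxHeartbeats 1000000

namespace Cor257Aux

variable {X : Type*} [SeminormedAddCommGroup X] [NormedSpace ℂ X]

/-- An uncountable 1-separated subset precludes separability. -/
lemma not_isSeparable_of_sep {s t : Set X} (hts : t ⊆ s) (hunc : ¬ t.Countable)
    (hsep : ∀ x ∈ t, ∀ y ∈ t, x ≠ y → 1 ≤ dist x y) :
    ¬ TopologicalSpace.IsSeparable s := by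
  rintro ⟨c, hc, hsc⟩
  apply hunc
  have hex : ∀ x ∈ t, ∃ y ∈ c, dist x y < 1/2 := fun x hx =>
    Metric.mem_closure_iff.1 (hsc (hts hx)) _ (by norm_num)
  choose! f hfc hfd using hex
  have hinj : InjOn f t := by
    intro x hx y hy hxy
    by_contra hne
    have h1 := hsep x hx y hy hne
    have h2 : dist x y < 1 := by
      calc dist x y ≤ dist x (f x) + dist (f x) y := dist_triangle _ _ _
        _ = dist x (f x) + dist (f y) y := by rw [hxy]
        _ < 1/2 + 1/2 := by
            have h3 := hfd y hy
            rw [dist_comm (f y) y]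
            exact add_lt_add (hfd x hx) h3
        _ = 1 := by norm_num
    linarith
  exact countable_of_injective_of_countable_image hinj (hc.mono (image_subset_iff.2 hfc))


/-- Hahn–Banach separation from a closed subspace. -/
lemma exists_functional (S : Submodule ℂ X) (hS : IsClosed (S : Set X)) {x : X} (hx : x ∉ S) :
    ∃ f : X →L[ℂ] ℂ, ‖f‖ ≤ 1 ∧ (∀ y ∈ S, f y = 0) ∧ f x ≠ 0 := by
  haveI := hS
  have hmk : (Submodule.Quotient.mk x : X ⧸ S) ≠ 0 := by
    simpa [Submodule.Quotient.mk_eq_zero] using hx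
  obtain ⟨g, hg1, hg2⟩ := exists_dual_vector ℂ (Submodule.Quotient.mk x : X ⧸ S) (norm_ne_zero_iff.2 hmk)
  have hbound : ∀ y : X, ‖(g.toLinearMap.comp S.mkQ) y‖ ≤ 1 * ‖y‖ := by
    intro y
    calc ‖g (Submodule.Quotient.mk y)‖ ≤ ‖g‖ * ‖(Submodule.Quotient.mk y : X ⧸ S)‖ :=
          g.le_opNorm _
      _ ≤ 1 * ‖y‖ := by
          rw [hg1]
          simpa using Submodule.Quotient.norm_mk_le S y
  refine ⟨(g.toLinearMap.comp S.mkQ).mkContinuous 1 hbound, ?_, ?_, ?_⟩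
  · exact LinearMap.mkContinuous_norm_le _ zero_le_one _
  · intro y hy
    have : (Submodule.Quotient.mk y : X ⧸ S) = 0 := (Submodule.Quotient.mk_eq_zero S).2 hy
    simp [LinearMap.mkContinuous_apply, this]
  · have : g (Submodule.Quotient.mk x : X ⧸ S) ≠ 0 := by
      rw [hg2]
      simpa using norm_ne_zero_iff.2 hmk
    simpa [LinearMap.mkContinuous_apply] using this


lemma norm_pos_of_ne {φ : X →L[ℂ] ℂ} {x : X} (h : φ x ≠ 0) : 0 < ‖φ‖ := by
  have h1 : 0 < ‖φ x‖ := norm_pos_iff.2 h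
  have h2 := φ.le_opNorm x
  nlinarith [norm_nonneg x, norm_nonneg φ]

/-- If the dual is separable then the space is separable. -/
lemma separableSpace_of_dual (h : SeparableSpace (X →L[ℂ] ℂ)) : SeparableSpace X := by
  obtain ⟨c, hc, hcd⟩ := TopologicalSpace.exists_countable_dense (X →L[ℂ] ℂ)
  have hpick : ∀ φ : X →L[ℂ] ℂ, ∃ x : X, ‖x‖ ≤ 1 ∧ ‖φ‖ ≤ 2 * ‖φ x‖ := by
    intro φ
    rcases eq_or_ne φ 0 with rfl | hφ
    · exact ⟨0, by simp⟩
    · obtain ⟨x₀, hx₀⟩ : ∃ x₀, φ x₀ ≠ 0 := by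
        by_contra hcon
        push_neg at hcon
        exact hφ (ContinuousLinearMap.ext fun y => by simp [hcon y])
      have hφpos : 0 < ‖φ‖ := norm_pos_of_ne hx₀
      have hne : ¬ (∀ x, ‖φ x‖ ≤ (‖φ‖/2) * ‖x‖) := by
        intro H
        have := φ.opNorm_le_bound (by positivity) H
        linarith
      push_neg at hne
      obtain ⟨x, hxlt⟩ := hne
      have hxpos : 0 < ‖x‖ := by
        rcases (norm_nonneg x).lt_or_eq with h | h
        · exact h
        · exfalso
          have h2 := φ.le_opNorm x
          rw [← h, mul_zero] at hxlt h2
          have : ‖φ x‖ ≤ 0 := by simpa using h2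
          linarith [hxlt, this]
      refine ⟨(‖x‖⁻¹ : ℂ) • x, ?_, ?_⟩
      · rw [norm_smul]
        simp [abs_of_pos hxpos, inv_mul_cancel₀ hxpos.ne']
      · rw [map_smul, norm_smul]
        have : ‖(‖x‖⁻¹ : ℂ)‖ = ‖x‖⁻¹ := by
          simp [abs_of_pos hxpos]
        rw [this]
        rw [mul_comm 2]
        have h3 : ‖φ‖ * ‖x‖ ≤ ‖φ x‖ * 2 := by nlinarith
        calc ‖φ‖ = ‖x‖⁻¹ * (‖φ‖ * ‖x‖) := by field_simp
          _ ≤ ‖x‖⁻¹ * (‖φ x‖ * 2) := mul_le_mul_of_nonneg_left h3 (by positivity)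
          _ = ‖x‖⁻¹ * ‖φ x‖ * 2 := by ring
  choose xf hx1 hx2 using hpick
  set s : Set X := xf '' c with hs
  set S : Submodule ℂ X := (Submodule.span ℂ s).topologicalClosure with hSdef
  have hall : ∀ z : X, z ∈ S := by
    by_contra hcon
    push_neg at hcon
    obtain ⟨z, hz⟩ := hcon
    obtain ⟨f, hf1, hf2, hf3⟩ :=
      exists_functional S (Submodule.isClosed_topologicalClosure _) hz
    have hfpos : 0 < ‖f‖ := norm_pos_of_ne hf3
    obtain ⟨φ, hφc, hφd⟩ := Metric.mem_closure_iff.1 (hcd f) (‖f‖/4) (by linarith)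
    rw [dist_eq_norm] at hφd
    have hfs : ∀ y ∈ s, f y = 0 := fun y hy =>
      hf2 y (Submodule.le_topologicalClosure _ (Submodule.subset_span hy))
    have hφlb : 3/4 * ‖f‖ ≤ ‖φ‖ := by
      have h4 := norm_sub_norm_le f φ
      linarith
    have hφx : ‖φ (xf φ)‖ ≤ ‖f‖/4 := by
      have h0 : f (xf φ) = 0 := hfs _ (mem_image_of_mem _ hφc)
      have heq : φ (xf φ) = (φ - f) (xf φ) := by simp [h0]
      rw [heq]
      calc ‖(φ - f) (xf φ)‖ ≤ ‖φ - f‖ * ‖xf φ‖ := (φ - f).le_opNorm _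
        _ ≤ ‖φ - f‖ * 1 := mul_le_mul_of_nonneg_left (hx1 φ) (norm_nonneg _)
        _ = ‖φ - f‖ := mul_one _
        _ ≤ ‖f‖/4 := by rw [norm_sub_rev]; linarith
    have h5 := hx2 φ
    linarith
  have huniv : closure ((Submodule.span ℂ s : Submodule ℂ X) : Set X) = univ := by
    apply eq_univ_of_forall
    intro z
    have hz := hall z
    rw [hSdef] at hz
    rwa [← Submodule.topologicalClosure_coe]
  have hsep2 : IsSeparable (univ : Set X) := by
    rw [← huniv]
    exact ((hc.image xf).isSeparable.span).closure
  exact isSeparable_univ_iff.1 hsep2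


lemma key {E : Type*} [NormedAddCommGroup E] [NormedSpace ℂ E] [CompleteSpace E]
    (hrefl : Function.Surjective (NormedSpace.inclusionInDoubleDual ℂ E))
    (hnonsep : ¬ SeparableSpace E) (T : Set (E →L[ℂ] ℂ)) (hT : T.Countable) :
    ¬ TopologicalSpace.IsSeparable {x : E | ∀ f ∈ T, f x = 0} := by
  intro hNsep
  set N : Submodule ℂ E := ⨅ f ∈ T, LinearMap.ker (f : E →ₗ[ℂ] ℂ) with hNdef
  have hNmem : ∀ x : E, x ∈ N ↔ ∀ f ∈ T, f x = 0 := by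
    intro x
    simp [hNdef, Submodule.mem_iInf, LinearMap.mem_ker]
  have hNset : (N : Set E) = {x : E | ∀ f ∈ T, f x = 0} := by
    ext x; simpa using hNmem x
  have hNclosed : IsClosed (N : Set E) := by
    have h1 : (N : Set E) = ⋂ (f : T), (LinearMap.ker ((f : E →L[ℂ] ℂ) : E →ₗ[ℂ] ℂ) : Set E) := by
      ext x
      simp only [SetLike.mem_coe, hNmem, mem_iInter, LinearMap.mem_ker, Subtype.forall, ContinuousLinearMap.coe_coe]
    rw [h1]
    exact isClosed_iInter fun f => ContinuousLinearMap.isClosed_ker (f : E →L[ℂ] ℂ)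
  haveI := hNclosed
  set M : Submodule ℂ (StrongDual ℂ E) := (Submodule.span ℂ T).topologicalClosure with hMdef
  have hTM : T ⊆ (M : Set (StrongDual ℂ E)) :=
    subset_trans Submodule.subset_span (Submodule.le_topologicalClosure _)
  have hMsep : TopologicalSpace.IsSeparable (M : Set (StrongDual ℂ E)) := by
    rw [hMdef, Submodule.topologicalClosure_coe]
    exact (hT.isSeparable.span).closure
  have hMvanish : ∀ g ∈ M, ∀ x, x ∈ N → g x = 0 := by
    intro g hg x hx
    have hker : M ≤ LinearMap.ker ((inclusionInDoubleDual ℂ E x : StrongDual ℂ E →L[ℂ] ℂ) : StrongDual ℂ E →ₗ[ℂ] ℂ) := by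
      apply Submodule.topologicalClosure_minimal
      · rw [Submodule.span_le]
        intro f hf
        simp only [SetLike.mem_coe, LinearMap.mem_ker, ContinuousLinearMap.coe_coe]
        rw [dual_def]
        exact (hNmem x).1 hx f hf
      · exact ContinuousLinearMap.isClosed_ker (inclusionInDoubleDual ℂ E x)
    have h2 := hker hg
    rw [LinearMap.mem_ker, ContinuousLinearMap.coe_coe, dual_def] at h2
    exact h2
  -- the lift of a functional vanishing on N
  have hlift : ∀ g : E →L[ℂ] ℂ, (∀ x ∈ N, g x = 0) →
      ∃ ψ : (E ⧸ N) →L[ℂ] ℂ, (∀ x : E, ψ (Submodule.Quotient.mk x) = g x) ∧ ‖ψ‖ ≤ ‖g‖ := by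
    intro g hg
    have hle : N ≤ LinearMap.ker g.toLinearMap := fun x hx => by
      simpa [LinearMap.mem_ker] using hg x hx
    set ψ₀ : E ⧸ N →ₗ[ℂ] ℂ := N.liftQ g.toLinearMap hle with hψ₀
    have hψ₀app : ∀ x : E, ψ₀ (Submodule.Quotient.mk x) = g x := fun x => rfl
    have hb : ∀ q : E ⧸ N, ‖ψ₀ q‖ ≤ ‖g‖ * ‖q‖ := by
      intro q
      obtain ⟨x, rfl⟩ := Submodule.Quotient.mk_surjective N q
      rw [hψ₀app]
      refine le_of_forall_pos_le_add ?_
      intro ε hε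
      obtain ⟨m, hm, hmlt⟩ := Submodule.Quotient.norm_mk_lt
        (Submodule.Quotient.mk x : E ⧸ N) (show (0:ℝ) < ε/(‖g‖+1) by positivity)
      have hmx : m - x ∈ N := by
        rw [← Submodule.Quotient.mk_eq_zero]
        rw [Submodule.Quotient.mk_sub, hm, sub_self]
      have hgm : g m = g x := by
        have h3 := hg _ hmx
        rw [map_sub] at h3
        exact (sub_eq_zero.1 h3)
      calc ‖g x‖ = ‖g m‖ := by rw [hgm]
        _ ≤ ‖g‖ * ‖m‖ := g.le_opNorm m
        _ ≤ ‖g‖ * (‖(Submodule.Quotient.mk x : E ⧸ N)‖ + ε/(‖g‖+1)) := by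
            apply mul_le_mul_of_nonneg_left hmlt.le (norm_nonneg g)
        _ ≤ ‖g‖ * ‖(Submodule.Quotient.mk x : E ⧸ N)‖ + ε := by
            have h4 : ‖g‖ * (ε/(‖g‖+1)) ≤ ε := by
              rw [mul_div_assoc']
              rw [div_le_iff₀ (by positivity : (0:ℝ) < ‖g‖ + 1)]
              nlinarith [norm_nonneg g, hε.le]
            nlinarith [norm_nonneg g]
    refine ⟨ψ₀.mkContinuous ‖g‖ hb, fun x => ?_, LinearMap.mkContinuous_norm_le _ (norm_nonneg g) _⟩
    rw [LinearMap.mkContinuous_apply, hψ₀app]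
  have huniq : ∀ ψ ψ' : (E ⧸ N) →L[ℂ] ℂ,
      (∀ x : E, ψ (Submodule.Quotient.mk x) = ψ' (Submodule.Quotient.mk x)) → ψ = ψ' := by
    intro ψ ψ' hagree
    apply ContinuousLinearMap.ext
    intro q
    obtain ⟨x, rfl⟩ := Submodule.Quotient.mk_surjective N q
    exact hagree x
  have hvan : ∀ m : M, ∀ x ∈ N, (m : E →L[ℂ] ℂ) x = 0 := fun m x hx => hMvanish m.1 m.2 x hx
  let L : M → (E ⧸ N) →L[ℂ] ℂ := fun m => (hlift m.1 (hvan m)).choose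
  have hLspec : ∀ m : M, ∀ x : E, L m (Submodule.Quotient.mk x) = (m : E →L[ℂ] ℂ) x :=
    fun m => (hlift m.1 (hvan m)).choose_spec.1
  have hLnorm : ∀ m : M, ‖L m‖ ≤ ‖(m : E →L[ℂ] ℂ)‖ := fun m => (hlift m.1 (hvan m)).choose_spec.2
  let L₀ : M →ₗ[ℂ] ((E ⧸ N) →L[ℂ] ℂ) :=
    { toFun := L
      map_add' := by
        intro m m'
        apply huniq
        intro x
        simp [hLspec, ContinuousLinearMap.add_apply]
      map_smul' := by
        intro cc m
        apply huniq
        intro x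
        simp [hLspec, ContinuousLinearMap.smul_apply] }
  have hLbound : ∀ m : M, ‖L₀ m‖ ≤ 1 * ‖m‖ := by
    intro m
    rw [one_mul]
    exact hLnorm m
  have hLcont : Continuous L := by
    have h := AddMonoidHomClass.continuous_of_bound L₀ 1 hLbound
    exact h
  -- the canonical projection as a continuous linear map
  have hmkb : ∀ x : E, ‖N.mkQ x‖ ≤ 1 * ‖x‖ := fun x => by
    simpa using Submodule.Quotient.norm_mk_le N x
  set mkc : E →L[ℂ] E ⧸ N := N.mkQ.mkContinuous 1 hmkb with hmkc
  have hmkc_apply : ∀ x : E, mkc x = Submodule.Quotient.mk x := fun x => rfl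
  have hLsurj : Function.Surjective L := by
    intro φ
    set f : E →L[ℂ] ℂ := φ.comp mkc with hf
    have hfM : f ∈ M := by
      by_contra hfnot
      obtain ⟨Φ, hΦ1, hΦ2, hΦ3⟩ :=
        exists_functional M (Submodule.isClosed_topologicalClosure _) hfnot
      obtain ⟨x₀, hx₀⟩ := hrefl Φ
      have hx₀N : x₀ ∈ N := by
        rw [hNmem]
        intro f' hf'
        have h5 : Φ f' = 0 := hΦ2 f' (hTM hf')
        rw [← hx₀, dual_def] at h5
        exact h5
      have h6 : f x₀ = 0 := by
        rw [hf]
        simp only [ContinuousLinearMap.comp_apply]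
        rw [hmkc_apply]
        have : (Submodule.Quotient.mk x₀ : E ⧸ N) = 0 := (Submodule.Quotient.mk_eq_zero N).2 hx₀N
        rw [this, map_zero]
      apply hΦ3
      rw [← hx₀, dual_def, h6]
    refine ⟨⟨f, hfM⟩, ?_⟩
    apply huniq
    intro x
    rw [hLspec]
    rfl
  haveI hMS : SeparableSpace M := by
    have := hMsep.separableSpace
    exact this
  haveI hdualsep : SeparableSpace ((E ⧸ N) →L[ℂ] ℂ) :=
    (hLsurj.denseRange).separableSpace hLcont
  haveI hQsep : SeparableSpace (E ⧸ N) := separableSpace_of_dual hdualsep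
  -- now glue: N separable and E ⧸ N separable imply E separable
  apply hnonsep
  have hNsep' : TopologicalSpace.IsSeparable (N : Set E) := by rw [hNset]; exact hNsep
  obtain ⟨c₁, hc₁, hc₁d⟩ := hNsep'
  obtain ⟨c₂, hc₂, hc₂d⟩ := TopologicalSpace.exists_countable_dense (E ⧸ N)
  choose rep hrepq using Submodule.Quotient.mk_surjective N
  set D : Set E := image2 (· + ·) (rep '' c₂) c₁ with hD
  have hDc : D.Countable := (hc₂.image rep).image2 hc₁ _
  have hDdense : Dense D := by
    rw [Metric.dense_iff]
    intro x r hr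
    have hx : (Submodule.Quotient.mk x : E ⧸ N) ∈ closure c₂ := hc₂d _
    obtain ⟨q, hq, hdq⟩ := Metric.mem_closure_iff.1 hx (r/4) (by linarith)
    have h1 : ‖(Submodule.Quotient.mk (x - rep q) : E ⧸ N)‖ < r/4 := by
      rw [Submodule.Quotient.mk_sub, hrepq q, ← dist_eq_norm]
      exact hdq
    obtain ⟨m, hm, hmlt⟩ := Submodule.Quotient.norm_mk_lt
      (Submodule.Quotient.mk (x - rep q) : E ⧸ N) (show (0:ℝ) < r/4 by linarith)
    have hn : x - rep q - m ∈ N := by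
      rw [← Submodule.Quotient.mk_eq_zero]
      rw [Submodule.Quotient.mk_sub, hm, sub_self]
    obtain ⟨b, hb, hbd⟩ := Metric.mem_closure_iff.1 (hc₁d hn) (r/4) (by linarith)
    refine ⟨rep q + b, ?_, mem_image2_of_mem (mem_image_of_mem _ hq) hb⟩
    rw [Metric.mem_ball, dist_comm, dist_eq_norm]
    have heq : x - (rep q + b) = m + ((x - rep q - m) - b) := by abel
    rw [heq]
    have h7 : ‖m‖ < r/2 := by linarith
    have h8 : ‖(x - rep q - m) - b‖ < r/4 := by rw [← dist_eq_norm]; exact hbd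
    calc ‖m + ((x - rep q - m) - b)‖ ≤ ‖m‖ + ‖(x - rep q - m) - b‖ := norm_add_le _ _
      _ < r/2 + r/4 := add_lt_add h7 h8
      _ < r := by linarith
  exact ⟨⟨D, hDc, hDdense⟩⟩


end Cor257Aux

open Cor257Aux in
/-- **Corollary 2.5.7.** Let `E` be a non-separable, reflexive complex Banach space. Then `E`
contains a closed linear subspace `F` such that both `F` and `E/F` are non-separable. -/
theorem exists_nonseparable_subspace_with_nonseparable_quotient_of_reflexive
    (E : Type*) [NormedAddCommGroup E] [NormedSpace ℂ E] [CompleteSpace E]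
    (hnonsep : ¬ TopologicalSpace.SeparableSpace E)
    (hrefl : Function.Surjective (NormedSpace.inclusionInDoubleDual ℂ E)) :
    ∃ F : Submodule ℂ E, IsClosed (F : Set E) ∧
      ¬ TopologicalSpace.IsSeparable (F : Set E) ∧
      ¬ TopologicalSpace.SeparableSpace (E ⧸ F) := by
  classical
  set Good : Set (Set (E × (E →L[ℂ] ℂ))) :=
    {P | ∀ p ∈ P, ‖p.2‖ ≤ 1 ∧ p.2 p.1 = 1 ∧ ∀ q ∈ P, q ≠ p → p.2 q.1 = 0} with hGoodDef
  have hchain : ∀ c ⊆ Good, IsChain (· ⊆ ·) c → ∃ ub ∈ Good, ∀ s ∈ c, s ⊆ ub := by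
    intro c hc hch
    refine ⟨⋃₀ c, ?_, fun s hs => subset_sUnion_of_mem hs⟩
    rintro p ⟨s, hs, hps⟩
    obtain ⟨h1, h2, h3⟩ := hc hs p hps
    refine ⟨h1, h2, ?_⟩
    rintro q ⟨s', hs', hqs'⟩ hqp
    rcases hch.total hs hs' with hss | hss
    · exact (hc hs' p (hss hps)).2.2 q hqs' hqp
    · exact h3 q (hss hqs') hqp
  obtain ⟨P, hPmax⟩ := zorn_subset Good hchain
  have hPGood : ∀ p ∈ P, ‖p.2‖ ≤ 1 ∧ p.2 p.1 = 1 ∧ ∀ q ∈ P, q ≠ p → p.2 q.1 = 0 := hPmax.1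
  -- P is uncountable
  have hPunc : ¬ P.Countable := by
    intro hPc
    set S : Submodule ℂ E := (Submodule.span ℂ (Prod.fst '' P)).topologicalClosure with hSdef
    have hSsep : TopologicalSpace.IsSeparable (S : Set E) := by
      rw [hSdef, Submodule.topologicalClosure_coe]
      exact ((hPc.image _).isSeparable.span).closure
    have hkey := key hrefl hnonsep (Prod.snd '' P) (hPc.image _)
    have hnot : ¬ ({x : E | ∀ f ∈ Prod.snd '' P, f x = 0} ⊆ (S : Set E)) :=
      fun hsub => hkey (hSsep.mono hsub)
    obtain ⟨x, hxN, hxS⟩ := not_subset.1 hnot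
    obtain ⟨f, hf1, hf2, hf3⟩ :=
      exists_functional S (Submodule.isClosed_topologicalClosure _) hxS
    have hxker : ∀ q ∈ P, q.2 x = 0 := fun q hq => hxN _ (mem_image_of_mem _ hq)
    set p₀ : E × (E →L[ℂ] ℂ) := ((f x)⁻¹ • x, f) with hp₀def
    have hp₀1 : f p₀.1 = 1 := by
      rw [hp₀def]
      simp only [map_smul, smul_eq_mul]
      exact inv_mul_cancel₀ hf3
    have hp₀P : p₀ ∉ P := by
      intro hmem
      have h0 := hxker p₀ hmem
      exact hf3 h0
    have hGood' : insert p₀ P ∈ Good := by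
      intro p hp
      rcases hp with rfl | hpP
      · refine ⟨hf1, hp₀1, ?_⟩
        rintro q (rfl | hqP) hqp
        · exact absurd rfl hqp
        · exact hf2 _ (Submodule.le_topologicalClosure _
            (Submodule.subset_span (mem_image_of_mem _ hqP)))
      · obtain ⟨h1, h2, h3⟩ := hPGood p hpP
        refine ⟨h1, h2, ?_⟩
        rintro q (rfl | hqP) hqp
        · show p.2 ((f x)⁻¹ • x) = 0
          rw [map_smul, hxker p hpP, smul_zero]
        · exact h3 q hqP hqp
    exact hp₀P (hPmax.2 hGood' (subset_insert _ _) (mem_insert _ _))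
  -- separation within P
  have hsep : ∀ p ∈ P, ∀ q ∈ P, p ≠ q → 1 ≤ ‖p.1 - q.1‖ := by
    intro p hp q hq hne
    obtain ⟨h1, h2, h3⟩ := hPGood p hp
    have h0 := h3 q hq (Ne.symm hne)
    have hval : p.2 (p.1 - q.1) = 1 := by rw [map_sub, h2, h0, sub_zero]
    have hb : ‖p.2 (p.1 - q.1)‖ ≤ ‖p.2‖ * ‖p.1 - q.1‖ := p.2.le_opNorm _
    rw [hval] at hb
    have hone : ‖(1 : ℂ)‖ = 1 := norm_one
    rw [hone] at hb
    nlinarith [norm_nonneg (p.1 - q.1), norm_nonneg p.2]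
  -- split P into two uncountable disjoint pieces
  have hPale : ¬ (Cardinal.mk P ≤ Cardinal.aleph0) := by
    rw [Cardinal.le_aleph0_iff_set_countable]
    exact hPunc
  have hPinf : Cardinal.aleph0 ≤ Cardinal.mk P := (lt_of_not_ge hPale).le
  obtain ⟨e⟩ : Nonempty ((↥P ⊕ ↥P) ≃ ↥P) := by
    rw [← Cardinal.eq]
    simp only [Cardinal.mk_sum, Cardinal.lift_id]
    exact Cardinal.add_eq_self hPinf
  set A : Set (E × (E →L[ℂ] ℂ)) := Set.range (fun p : ↥P => (e (Sum.inl p) : E × (E →L[ℂ] ℂ)))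
    with hAdef
  set B : Set (E × (E →L[ℂ] ℂ)) := Set.range (fun p : ↥P => (e (Sum.inr p) : E × (E →L[ℂ] ℂ)))
    with hBdef
  have hAP : A ⊆ P := by rintro _ ⟨p, rfl⟩; exact (e (Sum.inl p)).2
  have hBP : B ⊆ P := by rintro _ ⟨p, rfl⟩; exact (e (Sum.inr p)).2
  have hAB : ∀ p ∈ A, p ∉ B := by
    rintro _ ⟨a, rfl⟩ ⟨b, hb⟩
    have : e (Sum.inr b) = e (Sum.inl a) := Subtype.val_injective hb
    exact Sum.inr_ne_inl (e.injective this)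
  have huncA : ¬ A.Countable := by
    intro hA
    apply hPunc
    rw [← Set.countable_coe_iff] at hA ⊢
    have hinj : Function.Injective (fun p : ↥P => (e (Sum.inl p) : E × (E →L[ℂ] ℂ))) := by
      intro a b hab
      exact Sum.inl_injective (e.injective (Subtype.val_injective hab))
    have : Countable ↥A := hA
    exact Function.Injective.countable (f := fun p : ↥P => (⟨_, mem_range_self p⟩ : ↥A))
      (fun a b hab => hinj (by simpa using congrArg Subtype.val hab))
  have huncB : ¬ B.Countable := by
    intro hB
    apply hPunc
    rw [← Set.countable_coe_iff] at hB ⊢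
    have hinj : Function.Injective (fun p : ↥P => (e (Sum.inr p) : E × (E →L[ℂ] ℂ))) := by
      intro a b hab
      exact Sum.inr_injective (e.injective (Subtype.val_injective hab))
    have : Countable ↥B := hB
    exact Function.Injective.countable (f := fun p : ↥P => (⟨_, mem_range_self p⟩ : ↥B))
      (fun a b hab => hinj (by simpa using congrArg Subtype.val hab))
  -- the subspace
  set F : Submodule ℂ E := (Submodule.span ℂ (Prod.fst '' A)).topologicalClosure with hFdef
  have hFclosed : IsClosed (F : Set E) := Submodule.isClosed_topologicalClosure _
  have hfst_injA : InjOn Prod.fst A := by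
    intro p hp q hq hpq
    by_contra hne
    have hqp : q ≠ p := by
      intro h
      exact hne (by rw [h])
    have h2 := (hPGood p (hAP hp)).2.2 q (hAP hq) hqp
    have h1 := (hPGood p (hAP hp)).2.1
    rw [← hpq] at h2
    rw [h2] at h1
    exact zero_ne_one h1
  refine ⟨F, hFclosed, ?_, ?_⟩
  · -- F is not separable
    apply not_isSeparable_of_sep (t := Prod.fst '' A)
    · intro y hy
      exact Submodule.le_topologicalClosure _ (Submodule.subset_span hy)
    · intro hc
      exact huncA (countable_of_injective_of_countable_image hfst_injA hc)
    · rintro _ ⟨p, hp, rfl⟩ _ ⟨q, hq, rfl⟩ hne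
      have hpq : p ≠ q := fun h => hne (by rw [h])
      rw [dist_eq_norm]
      exact hsep p (hAP hp) q (hAP hq) hpq
  · -- E ⧸ F is not separable
    intro hQ
    have hFvanish : ∀ p ∈ B, ∀ y ∈ F, p.2 y = 0 := by
      intro p hp y hy
      have hker : F ≤ LinearMap.ker (p.2 : E →ₗ[ℂ] ℂ) := by
        rw [hFdef]
        apply Submodule.topologicalClosure_minimal
        · rw [Submodule.span_le]
          rintro _ ⟨q, hq, rfl⟩
          simp only [SetLike.mem_coe, LinearMap.mem_ker]
          have hqp : q ≠ p := fun h => hAB q hq (h ▸ hp)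
          exact (hPGood p (hBP hp)).2.2 q (hAP hq) hqp
        · exact ContinuousLinearMap.isClosed_ker p.2
      simpa [LinearMap.mem_ker] using hker hy
    have hqsep : ∀ p ∈ B, ∀ q ∈ B, p ≠ q →
        1 ≤ ‖(Submodule.Quotient.mk (p.1 - q.1) : E ⧸ F)‖ := by
      intro p hp q hq hne
      by_contra hlt
      push_neg at hlt
      obtain ⟨m, hm, hmlt⟩ := Submodule.Quotient.norm_mk_lt
        (Submodule.Quotient.mk (p.1 - q.1) : E ⧸ F)
        (show (0:ℝ) < 1 - ‖(Submodule.Quotient.mk (p.1 - q.1) : E ⧸ F)‖ by linarith)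
      have hmF : m - (p.1 - q.1) ∈ F := by
        rw [← Submodule.Quotient.mk_eq_zero, Submodule.Quotient.mk_sub, hm, sub_self]
      have hval : p.2 m = 1 := by
        have h4 : p.2 (m - (p.1 - q.1)) = 0 := hFvanish p hp _ hmF
        rw [map_sub] at h4
        have h5 : p.2 (p.1 - q.1) = 1 := by
          rw [map_sub, (hPGood p (hBP hp)).2.1,
            (hPGood p (hBP hp)).2.2 q (hBP hq) (Ne.symm hne), sub_zero]
        rw [h5] at h4
        calc p.2 m = p.2 m - (p.2 m - 1) := by rw [h4]; ring
          _ = 1 := by ring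
      have hb : ‖p.2 m‖ ≤ ‖p.2‖ * ‖m‖ := p.2.le_opNorm m
      rw [hval, norm_one] at hb
      have hm1 : ‖m‖ < 1 := by linarith
      nlinarith [norm_nonneg m, norm_nonneg p.2, (hPGood p (hBP hp)).1]
    have himg := not_isSeparable_of_sep
      (t := (fun p : E × (E →L[ℂ] ℂ) => (Submodule.Quotient.mk p.1 : E ⧸ F)) '' B)
      (s := (univ : Set (E ⧸ F))) (subset_univ _) ?_ ?_
    · exact himg (isSeparable_univ_iff.2 hQ)
    · -- uncountable
      intro hc
      apply huncB
      apply countable_of_injective_of_countable_image _ hc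
      intro p hp q hq hpq
      by_contra hne
      have h6 := hqsep p hp q hq hne
      simp only at hpq
      have h7 : (Submodule.Quotient.mk (p.1 - q.1) : E ⧸ F) = 0 := by
        rw [Submodule.Quotient.mk_sub]
        exact sub_eq_zero.2 hpq
      rw [h7, norm_zero] at h6
      linarith
    · -- separation
      rintro _ ⟨p, hp, rfl⟩ _ ⟨q, hq, rfl⟩ hne
      have hpq : p ≠ q := fun h => hne (by rw [h])
      have h6 := hqsep p hp q hq hpq
      rw [dist_eq_norm, ← Submodule.Quotient.mk_sub]
      exact h6
end

section
/- Let E be a complex Banach space with few operators, in the sense that every bounded linear operator T : E → E can be written as T = α·id_E + S for some complex scalar α and some bounded linear operator S : E → E whose range is separable. Let n be a positive natural number, let T_1, …, T_n be bounded linear operators on E, and let F be the closure of the subspace im T_1 + ⋯ + im T_n. Then either F is separable or the quotient E/F is separable. -/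
open TopologicalSpace

/-- **Proposition 2.5.6.** Let `E` be a complex Banach space with few operators, i.e. every
bounded operator on `E` is the sum of a scalar multiple of the identity and an operator with
separable range. If `F` is the closure of `im T_1 + ⋯ + im T_n` for bounded operators
`T_1, …, T_n` on `E`, then either `F` or `E/F` is separable. -/
theorem separable_or_separable_quotient_of_fewOperators
    (E : Type*) [NormedAddCommGroup E] [NormedSpace ℂ E] [CompleteSpace E]
    (hfew : ∀ T : E →L[ℂ] E, ∃ (α : ℂ) (S : E →L[ℂ] E),
      T = α • ContinuousLinearMap.id ℂ E + S ∧ TopologicalSpace.IsSeparable (Set.range S))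
    (n : ℕ) (hn : 0 < n) (T : Fin n → (E →L[ℂ] E))
    (F : Submodule ℂ E) (hF : F = (⨆ i, LinearMap.range (T i : E →ₗ[ℂ] E)).topologicalClosure) :
    TopologicalSpace.IsSeparable (F : Set E) ∨
      TopologicalSpace.SeparableSpace (E ⧸ F) := by
  choose α S hTS hSsep using hfew
  by_cases hα : ∀ i, α (T i) = 0
  · -- all scalars vanish: F is separable
    left
    have hsep : IsSeparable ((⨆ i, LinearMap.range (T i : E →ₗ[ℂ] E) : Submodule ℂ E) : Set E) := by
      rw [Submodule.iSup_eq_span]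
      refine IsSeparable.span (IsSeparable.iUnion fun i => ?_)
      have hTi : T i = S (T i) := by
        have := hTS (T i)
        rwa [hα i, zero_smul, zero_add] at this
      rw [show ((LinearMap.range (T i : E →ₗ[ℂ] E) : Submodule ℂ E) : Set E) = Set.range (T i) from
        LinearMap.coe_range _, hTi]
      exact hSsep (T i)
    rw [hF]
    exact hsep.closure
  · -- some scalar is nonzero: E/F is separable
    right
    push_neg at hα
    obtain ⟨i, hi⟩ := hα
    set Ti := T i with hTi
    set a := α Ti
    set Si := S Ti
    have hdecomp : ∀ x : E, Ti x = a • x + Si x := by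
      intro x
      conv_lhs => rw [hTS Ti]
      simp
      rfl
    have hrange : LinearMap.range (Ti : E →ₗ[ℂ] E) ≤ F := by
      rw [hF]
      exact le_trans (le_iSup (fun i => LinearMap.range (T i : E →ₗ[ℂ] E)) i) (Submodule.le_topologicalClosure _)
    -- the quotient map
    let π : E →L[ℂ] E ⧸ F := F.mkQ.mkContinuous 1 (by
      intro x
      simpa using Submodule.Quotient.norm_mk_le F x)
    have hπsurj : Function.Surjective π := Submodule.mkQ_surjective F
    have key : ∀ x : E, π x = (-a⁻¹) • π (Si x) := by
      intro x
      have h1 : π (Ti x) = 0 := by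
        simpa [π, Submodule.Quotient.mk_eq_zero] using hrange ⟨x, rfl⟩
      have h2 : π (Ti x) = a • π x + π (Si x) := by
        rw [hdecomp x]; simp [π, map_add]
      rw [h1] at h2
      have h3 : a • π x = -π (Si x) :=
        eq_neg_of_add_eq_zero_left h2.symm
      calc π x = a⁻¹ • (a • π x) := by
            rw [smul_smul, inv_mul_cancel₀ hi, one_smul]
        _ = (-a⁻¹) • π (Si x) := by rw [h3, smul_neg, neg_smul]
    have huniv : (Set.univ : Set (E ⧸ F)) =
        (fun y => (-a⁻¹) • π y) '' Set.range Si := by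
      apply Set.eq_of_subset_of_subset
      · rintro y -
        obtain ⟨x, rfl⟩ := hπsurj y
        exact ⟨Si x, Set.mem_range_self x, (key x).symm⟩
      · exact Set.subset_univ _
    rw [← isSeparable_univ_iff, huniv]
    exact (hSsep Ti).image (π.continuous.const_smul (-a⁻¹))
end

section
/- Let X be a non-separable, reflexive complex Banach space with few operators, i.e. every bounded linear operator T : X → X can be written as T = α·id_X + S with α ∈ ℂ and S a bounded operator with separable range. Let E = X' be the continuous dual space of X, and let D be a closed linear subspace of E. Then the following are equivalent: (a) either D is separable or E/D is separable; (b) D = ker T for some bounded linear operator T : E → E; (c) there exist n ∈ ℕ and bounded linear operators T_1, …, T_n : E → E such that D = ⋂_{i=1}^n ker T_i. -/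
open NormedSpace TopologicalSpace Set Function

noncomputable section

namespace KernelAux

variable {F : Type*} [NormedAddCommGroup F] [NormedSpace ℂ F]

/-- The quotient map as a continuous linear map. -/
def mkCLM (V : Submodule ℂ F) : F →L[ℂ] F ⧸ V :=
  LinearMap.mkContinuous V.mkQ 1
    (fun x => by simpa [one_mul] using Submodule.Quotient.norm_mk_le V x)

@[simp] lemma mkCLM_apply (V : Submodule ℂ F) (x : F) :
    mkCLM V x = Submodule.Quotient.mk x := rfl

/-- Hahn-Banach: a functional vanishing on a closed subspace and nonzero at a given point. -/
lemma exists_vanishing_functional (V : Submodule ℂ F) (hV : IsClosed (V : Set F)) {x : F}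
    (hx : x ∉ V) : ∃ f : F →L[ℂ] ℂ, (∀ v ∈ V, f v = 0) ∧ f x ≠ 0 := by
  haveI : IsClosed (V : Set F) := hV
  have hxq : (Submodule.Quotient.mk x : F ⧸ V) ≠ 0 := by
    simpa [Submodule.Quotient.mk_eq_zero] using hx
  obtain ⟨g, hg1, hg2⟩ := exists_dual_vector ℂ (Submodule.Quotient.mk x : F ⧸ V) (norm_ne_zero_iff.2 hxq)
  refine ⟨g.comp (mkCLM V), ?_, ?_⟩
  · intro v hv
    have : (Submodule.Quotient.mk v : F ⧸ V) = 0 := (Submodule.Quotient.mk_eq_zero V).2 hv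
    simp [this]
  · have : ‖(Submodule.Quotient.mk x : F ⧸ V)‖ ≠ 0 := by
      simpa [norm_eq_zero] using hxq
    simp only [ContinuousLinearMap.comp_apply, mkCLM_apply, hg2]
    simpa using this

/-- A near-norming vector for a functional. -/
lemma exists_near_norming (f : F →L[ℂ] ℂ) : ∃ x : F, ‖x‖ ≤ 1 ∧ ‖f‖ ≤ 2 * ‖f x‖ := by
  rcases eq_or_ne f 0 with rfl | hf
  · exact ⟨0, by simp, by simp⟩
  · by_contra hcon
    push_neg at hcon
    have hle : ‖f‖ ≤ ‖f‖ / 2 := by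
      apply ContinuousLinearMap.opNorm_le_bound _ (by positivity)
      intro x
      rcases eq_or_ne x 0 with rfl | hx
      · simp
      · have hxn : (0:ℝ) < ‖x‖ := norm_pos_iff.2 hx
        have h1 : ‖((‖x‖ : ℂ)⁻¹) • x‖ ≤ 1 := by
          rw [norm_smul]
          simp [norm_inv, hxn.le, inv_mul_cancel₀ hxn.ne']
        have h2 := hcon _ h1
        rw [map_smul, norm_smul] at h2
        have : ‖((‖x‖:ℂ))⁻¹‖ = ‖x‖⁻¹ := by
          simp
        rw [this] at h2
        -- h2 : 2 * (‖x‖⁻¹ * ‖f x‖) < ‖f‖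
        have := h2.le
        calc ‖f x‖ = ‖x‖ * (‖x‖⁻¹ * ‖f x‖) := by field_simp
        _ ≤ ‖x‖ * (‖f‖ / 2) := by
            apply mul_le_mul_of_nonneg_left _ hxn.le
            nlinarith
        _ = ‖f‖ / 2 * ‖x‖ := by ring
    have hpos : (0:ℝ) < ‖f‖ := norm_pos_iff.2 hf
    linarith

/-- The closure of the span of a separable set is separable. -/
lemma isSeparable_closedSpan {s : Set F} (hs : IsSeparable s) :
    IsSeparable (((Submodule.span ℂ s).topologicalClosure : Submodule ℂ F) : Set F) := by
  rw [Submodule.topologicalClosure_coe]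
  exact (hs.span (R := ℂ)).closure

/-- If the dual is a separable space, so is the space itself. -/
lemma separableSpace_of_dual_separableSpace (h : SeparableSpace (StrongDual ℂ F)) :
    SeparableSpace F := by
  obtain ⟨s, hsc, hsd⟩ := exists_countable_dense (StrongDual ℂ F)
  have hch : ∀ f : StrongDual ℂ F, ∃ x : F, ‖x‖ ≤ 1 ∧ ‖f‖ ≤ 2 * ‖f x‖ := fun f =>
    exists_near_norming f
  choose xc hxc1 hxc2 using hch
  set A : Set F := xc '' s with hA
  have hAc : A.Countable := hsc.image _
  set V : Submodule ℂ F := (Submodule.span ℂ A).topologicalClosure with hV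
  have hVtop : V = ⊤ := by
    by_contra hne
    obtain ⟨y, -, hy⟩ : ∃ y, y ∈ (⊤ : Submodule ℂ F) ∧ y ∉ V := by
      rcases SetLike.not_le_iff_exists.1 (fun hle => hne (le_antisymm le_top hle)) with ⟨y, h1, h2⟩
      exact ⟨y, h1, h2⟩
    have hVc : IsClosed (V : Set F) := by
      rw [hV]; exact Submodule.isClosed_topologicalClosure _
    obtain ⟨f, hf0, hfy⟩ := exists_vanishing_functional V hVc hy
    have hfpos : (0:ℝ) < ‖f‖ := norm_pos_iff.2 (fun h => hfy (by simp [h]))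
    obtain ⟨g, hgs, hgd⟩ := Metric.mem_closure_iff.1 (hsd.closure_eq ▸ (Set.mem_univ f) :
      f ∈ closure s) (‖f‖ / 8) (by positivity)
    -- ‖f - g‖ < ‖f‖/8
    have hdist : ‖f - g‖ < ‖f‖ / 8 := by simpa [dist_eq_norm] using hgd
    have hxA : xc g ∈ A := Set.mem_image_of_mem _ hgs
    have hxV : xc g ∈ V := (Submodule.le_topologicalClosure _) (Submodule.subset_span hxA)
    have h0 : f (xc g) = 0 := hf0 _ hxV
    have h1 : ‖g (xc g)‖ ≤ ‖f‖ / 8 := by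
      have : g (xc g) = (g - f) (xc g) := by simp [h0]
      rw [this]
      calc ‖(g - f) (xc g)‖ ≤ ‖g - f‖ * ‖xc g‖ := ContinuousLinearMap.le_opNorm _ _
      _ ≤ ‖g - f‖ * 1 := by
          apply mul_le_mul_of_nonneg_left (hxc1 g) (norm_nonneg _)
      _ ≤ ‖f‖ / 8 := by rw [mul_one, norm_sub_rev]; exact hdist.le
    have h2 : ‖f‖ - ‖f‖/8 ≤ ‖g‖ := by
      have he : g + (f - g) = f := by abel
      have : ‖f‖ ≤ ‖g‖ + ‖f - g‖ := by
        calc ‖f‖ = ‖g + (f - g)‖ := by rw [he]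
        _ ≤ ‖g‖ + ‖f - g‖ := norm_add_le _ _
      linarith
    have h3 := hxc2 g
    linarith
  have : IsSeparable ((V : Submodule ℂ F) : Set F) := isSeparable_closedSpan hAc.isSeparable
  rw [hVtop] at this
  have : IsSeparable (Set.univ : Set F) := by simpa using this
  exact isSeparable_univ_iff.1 this

lemma not_finiteDimensional_of_not_separable (h : ¬SeparableSpace F) :
    ¬FiniteDimensional ℂ F := by
  intro hfd
  exact h (by infer_instance)


lemma exists_step (hF : ¬FiniteDimensional ℂ F) (L : List (F × StrongDual ℂ F)) :
    ∃ p : F × StrongDual ℂ F, (∀ q ∈ L, q.2 p.1 = 0) ∧ (∀ q ∈ L, p.2 q.1 = 0) ∧ p.2 p.1 = 1 := by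
  classical
  set G : Submodule ℂ F := Submodule.span ℂ ((fun q : F × StrongDual ℂ F => q.1) '' {q | q ∈ L}) with hG
  haveI hGfd : FiniteDimensional ℂ G :=
    FiniteDimensional.span_of_finite ℂ ((L.finite_toSet).image _)
  set K : Submodule ℂ F := ⨅ i : Fin L.length, LinearMap.ker ((L.get i).2 : F →ₗ[ℂ] ℂ) with hK
  have hget : ∀ i : Fin L.length, L.get i ∈ L := fun i => by
    simpa using L.get_mem i.1 i.2
  have hKmem : ∀ x, x ∈ K ↔ ∀ q ∈ L, q.2 x = 0 := by
    intro x
    rw [hK, Submodule.mem_iInf]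
    constructor
    · intro h q hq
      obtain ⟨i, rfl⟩ := List.mem_iff_get.1 hq
      exact h i
    · intro h i
      exact h _ (hget i)
  have hnot : ¬(K ≤ G) := by
    intro hle
    apply hF
    -- build Φ : F →ₗ (Fin L.length → ℂ)
    let Φ : F →ₗ[ℂ] (Fin L.length → ℂ) :=
      { toFun := fun x i => (L.get i).2 x
        map_add' := by intro x y; funext i; simp
        map_smul' := by intro c x; funext i; simp }
    have hkerΦ : LinearMap.ker Φ = K := by
      ext x
      simp only [LinearMap.mem_ker]
      rw [hKmem]
      constructor
      · intro h q hq
        obtain ⟨i, rfl⟩ := List.mem_iff_get.1 hq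
        exact congrFun h i
      · intro h
        funext i
        exact h _ (hget i)
    haveI : FiniteDimensional ℂ ↥(Submodule.map Φ ⊤) := by infer_instance
    haveI hKfd : FiniteDimensional ℂ ↥K := Submodule.finiteDimensional_of_le hle
    have h1 : (Submodule.map Φ ⊤).FG := (Submodule.fg_iff_finiteDimensional _).2 (by infer_instance)
    have h2 : (⊤ ⊓ LinearMap.ker Φ : Submodule ℂ F).FG := by
      rw [top_inf_eq, hkerΦ]
      exact (Submodule.fg_iff_finiteDimensional _).2 hKfd
    have h3 : (⊤ : Submodule ℂ F).FG := Submodule.fg_of_fg_map_of_fg_inf_ker Φ h1 h2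
    rw [← Module.finite_def] at h3
    exact h3
  obtain ⟨x, hxK, hxG⟩ := SetLike.not_le_iff_exists.1 hnot
  obtain ⟨f0, hf00, hf0x⟩ := exists_vanishing_functional G (Submodule.closed_of_finiteDimensional G) hxG
  refine ⟨(x, (f0 x)⁻¹ • f0), ?_, ?_, ?_⟩
  · intro q hq; exact (hKmem x).1 hxK q hq
  · intro q hq
    have : q.1 ∈ G := Submodule.subset_span ⟨q, hq, rfl⟩
    simp [hf00 _ this]
  · simp [inv_mul_cancel₀ hf0x]

/-- chain of biorthogonal pairs -/
def chain (hF : ¬FiniteDimensional ℂ F) : ℕ → List (F × StrongDual ℂ F) := fun n =>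
  Nat.rec [] (fun _ L => L ++ [Classical.choose (exists_step hF L)]) n

def bi (hF : ¬FiniteDimensional ℂ F) (n : ℕ) : F × StrongDual ℂ F :=
  Classical.choose (exists_step hF (chain hF n))

lemma chain_zero (hF : ¬FiniteDimensional ℂ F) : chain hF 0 = [] := rfl

lemma chain_succ (hF : ¬FiniteDimensional ℂ F) (n : ℕ) :
    chain hF (n+1) = chain hF n ++ [bi hF n] := rfl

lemma mem_chain (hF : ¬FiniteDimensional ℂ F) :
    ∀ n q, q ∈ chain hF n ↔ ∃ m, m < n ∧ q = bi hF m := by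
  intro n
  induction n with
  | zero => simp [chain_zero]
  | succ n ih =>
    intro q
    simp only [chain_succ, List.mem_append, List.mem_singleton, ih]
    constructor
    · rintro (⟨m, hm, rfl⟩ | rfl)
      · exact ⟨m, Nat.lt_succ_of_lt hm, rfl⟩
      · exact ⟨n, Nat.lt_succ_self n, rfl⟩
    · rintro ⟨m, hm, rfl⟩
      rcases Nat.lt_succ_iff_lt_or_eq.1 hm with h | rfl
      · exact Or.inl ⟨m, h, rfl⟩
      · exact Or.inr rfl

lemma bi_spec (hF : ¬FiniteDimensional ℂ F) (n : ℕ) :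
    (∀ q ∈ chain hF n, q.2 (bi hF n).1 = 0) ∧ (∀ q ∈ chain hF n, (bi hF n).2 q.1 = 0) ∧
      (bi hF n).2 (bi hF n).1 = 1 :=
  Classical.choose_spec (exists_step hF (chain hF n))

lemma exists_biorthogonal (hF : ¬FiniteDimensional ℂ F) :
    ∃ (e : ℕ → F) (ψ : ℕ → StrongDual ℂ F), ∀ n m, ψ n (e m) = if n = m then 1 else 0 := by
  refine ⟨fun n => (bi hF n).1, fun n => (bi hF n).2, ?_⟩
  intro n m
  rcases lt_trichotomy n m with h | rfl | h
  · rw [if_neg h.ne]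
    have hmem : bi hF n ∈ chain hF m := (mem_chain hF m _).2 ⟨n, h, rfl⟩
    exact (bi_spec hF m).1 _ hmem
  · rw [if_pos rfl]; exact (bi_spec hF n).2.2
  · rw [if_neg h.ne']
    have hmem : bi hF m ∈ chain hF n := (mem_chain hF n _).2 ⟨m, h, rfl⟩
    exact (bi_spec hF n).2.1 _ hmem


lemma exists_injective_clm (Z : Type*) [NormedAddCommGroup Z] [NormedSpace ℂ Z]
    [SeparableSpace Z] [CompleteSpace F] (hF : ¬FiniteDimensional ℂ F) :
    ∃ J : Z →L[ℂ] F, Injective J := by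
  obtain ⟨e, ψ, hbi⟩ := exists_biorthogonal hF
  haveI : Nonempty Z := ⟨0⟩
  set z : ℕ → Z := denseSeq Z with hz
  have hzd : DenseRange z := denseRange_denseSeq Z
  have hhex : ∀ n : ℕ, ∃ h : StrongDual ℂ Z, ‖h‖ ≤ 1 ∧ h (z n) = (‖z n‖ : ℂ) := fun n => by
    obtain ⟨g, hg1, hg2⟩ := exists_dual_vector'' ℂ (z n)
    exact ⟨g, hg1, hg2⟩
  choose h hh1 hh2 using hhex
  set c : ℕ → ℝ := fun n => (1/2)^n * (1 + ‖e n‖)⁻¹ with hc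
  have hden : ∀ n : ℕ, (0:ℝ) < 1 + ‖e n‖ := fun n => by positivity
  have hcpos : ∀ n, 0 < c n := fun n => by
    rw [hc]; positivity
  have hv : ∀ n, ‖((c n : ℂ)) • e n‖ ≤ (1/2)^n := fun n => by
    rw [norm_smul, Complex.norm_real, Real.norm_eq_abs, abs_of_pos (hcpos n), hc]
    have h1 : (1 + ‖e n‖)⁻¹ * ‖e n‖ ≤ 1 := by
      rw [inv_mul_le_iff₀ (hden n)]
      nlinarith [norm_nonneg (e n)]
    calc (1/2)^n * (1 + ‖e n‖)⁻¹ * ‖e n‖ = (1/2)^n * ((1 + ‖e n‖)⁻¹ * ‖e n‖) := by ring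
    _ ≤ (1/2)^n * 1 := by
        apply mul_le_mul_of_nonneg_left h1 (by positivity)
    _ = (1/2)^n := mul_one _
  set v : ℕ → F := fun n => ((c n : ℂ)) • e n with hvdef
  have hsum : ∀ w : Z, Summable (fun n => (h n w) • v n) := by
    intro w
    apply Summable.of_norm_bounded (g := fun n => (1/2)^n * ‖w‖)
      (summable_geometric_two.mul_right _)
    intro n
    rw [norm_smul]
    calc ‖h n w‖ * ‖v n‖ ≤ (‖h n‖ * ‖w‖) * (1/2)^n := by
          apply mul_le_mul ((h n).le_opNorm w) (hv n) (norm_nonneg _) (by positivity)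
    _ ≤ (1 * ‖w‖) * (1/2)^n := by
          apply mul_le_mul_of_nonneg_right _ (by positivity)
          exact mul_le_mul_of_nonneg_right (hh1 n) (norm_nonneg _)
    _ = (1/2)^n * ‖w‖ := by ring
  have hsumnorm : ∀ w : Z, Summable (fun n => ‖(h n w) • v n‖) := by
    intro w
    apply Summable.of_nonneg_of_le (fun n => norm_nonneg _) _
      (summable_geometric_two.mul_right ‖w‖)
    intro n
    rw [norm_smul]
    calc ‖h n w‖ * ‖v n‖ ≤ (‖h n‖ * ‖w‖) * (1/2)^n := by
          apply mul_le_mul ((h n).le_opNorm w) (hv n) (norm_nonneg _) (by positivity)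
    _ ≤ (1 * ‖w‖) * (1/2)^n := by
          apply mul_le_mul_of_nonneg_right _ (by positivity)
          exact mul_le_mul_of_nonneg_right (hh1 n) (norm_nonneg _)
    _ = (1/2)^n * ‖w‖ := by ring
  let g : Z →ₗ[ℂ] F :=
    { toFun := fun w => ∑' n, (h n w) • v n
      map_add' := by
        intro w1 w2
        show ∑' n, (h n (w1+w2)) • v n = (∑' n, (h n w1) • v n) + ∑' n, (h n w2) • v n
        have he : (fun n => (h n (w1+w2)) • v n)
            = fun n => (h n w1) • v n + (h n w2) • v n := by
          funext n; rw [map_add, add_smul]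
        rw [he, Summable.tsum_add (hsum w1) (hsum w2)]
      map_smul' := by
        intro a w
        show ∑' n, (h n (a • w)) • v n = a • ∑' n, (h n w) • v n
        have he : (fun n => (h n (a•w)) • v n) = fun n => a • ((h n w) • v n) := by
          funext n; rw [map_smul, smul_eq_mul, mul_smul]
        rw [he, Summable.tsum_const_smul a (hsum w)] }
  have hbound : ∀ w : Z, ‖g w‖ ≤ 2 * ‖w‖ := by
    intro w
    have h1 : ‖g w‖ ≤ ∑' n, ‖(h n w) • v n‖ := norm_tsum_le_tsum_norm (hsumnorm w)
    have h2 : ∑' n, ‖(h n w) • v n‖ ≤ ∑' n : ℕ, (1/2)^n * ‖w‖ := by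
      apply Summable.tsum_le_tsum _ (hsumnorm w) (summable_geometric_two.mul_right _)
      intro n
      rw [norm_smul]
      calc ‖h n w‖ * ‖v n‖ ≤ (‖h n‖ * ‖w‖) * (1/2)^n := by
            apply mul_le_mul ((h n).le_opNorm w) (hv n) (norm_nonneg _) (by positivity)
      _ ≤ (1 * ‖w‖) * (1/2)^n := by
            apply mul_le_mul_of_nonneg_right _ (by positivity)
            exact mul_le_mul_of_nonneg_right (hh1 n) (norm_nonneg _)
      _ = (1/2)^n * ‖w‖ := by ring
    have h3 : ∑' n : ℕ, ((1:ℝ)/2)^n * ‖w‖ = 2 * ‖w‖ := by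
      rw [tsum_mul_right, tsum_geometric_two]
    linarith
  refine ⟨g.mkContinuous 2 hbound, ?_⟩
  have hJapp : ∀ w, (g.mkContinuous 2 hbound) w = ∑' n, (h n w) • v n := fun w => rfl
  rw [injective_iff_map_eq_zero]
  intro w hw
  have hhw : ∀ m, h m w = 0 := by
    intro m
    have h0 : (ψ m) (∑' n, (h n w) • v n) = 0 := by
      rw [← hJapp w, hw, map_zero]
    rw [ContinuousLinearMap.map_tsum (ψ m) (hsum w)] at h0
    have hterm : ∀ n, (ψ m) ((h n w) • v n) = (h n w) * ((c n : ℂ) * (ψ m) (e n)) := by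
      intro n
      rw [hvdef]
      simp [smul_eq_mul, mul_assoc]
    rw [tsum_eq_single m] at h0
    · rw [hterm m, hbi m m, if_pos rfl, mul_one] at h0
      rcases mul_eq_zero.1 h0 with h | h
      · exact h
      · exact absurd h (by exact_mod_cast (hcpos m).ne')
    · intro n hn
      rw [hterm n, hbi m n, if_neg (Ne.symm hn), mul_zero, mul_zero]
  by_contra hw0
  have hwpos : (0:ℝ) < ‖w‖ := norm_pos_iff.2 hw0
  obtain ⟨k, hk⟩ := (Metric.denseRange_iff.1 hzd) w (‖w‖/2) (by positivity)
  have hzk : ‖z k‖ < ‖w‖/2 := by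
    have h1 : (‖z k‖ : ℂ) = h k (z k) - h k w := by rw [hh2 k, hhw k, sub_zero]
    have h2 : ‖(‖z k‖ : ℂ)‖ = ‖z k‖ := by
      rw [Complex.norm_real, Real.norm_eq_abs, abs_of_nonneg (norm_nonneg _)]
    calc ‖z k‖ = ‖(‖z k‖ : ℂ)‖ := h2.symm
    _ = ‖h k (z k - w)‖ := by rw [h1, ← map_sub]
    _ ≤ ‖h k‖ * ‖z k - w‖ := (h k).le_opNorm _
    _ ≤ 1 * ‖z k - w‖ := mul_le_mul_of_nonneg_right (hh1 k) (norm_nonneg _)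
    _ = ‖z k - w‖ := one_mul _
    _ < ‖w‖/2 := by rw [← dist_eq_norm, dist_comm]; exact hk
  have : ‖w‖ ≤ ‖w - z k‖ + ‖z k‖ := by
    calc ‖w‖ = ‖(w - z k) + z k‖ := by congr 1; abel
    _ ≤ ‖w - z k‖ + ‖z k‖ := norm_add_le _ _
  have hwz : ‖w - z k‖ < ‖w‖/2 := by rw [← dist_eq_norm]; exact hk
  linarith


/-- Precomposition (dual map). -/
def precomp {A B : Type*} [NormedAddCommGroup A] [NormedSpace ℂ A] [NormedAddCommGroup B]
    [NormedSpace ℂ B] (u : A →L[ℂ] B) : StrongDual ℂ B →L[ℂ] StrongDual ℂ A :=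
  (ContinuousLinearMap.compL ℂ A B ℂ).flip u

@[simp] lemma precomp_apply {A B : Type*} [NormedAddCommGroup A] [NormedSpace ℂ A]
    [NormedAddCommGroup B] [NormedSpace ℂ B] (u : A →L[ℂ] B) (f : StrongDual ℂ B) (x : A) :
    precomp u f x = f (u x) := rfl

/-- Annihilator of a submodule, inside the dual. -/
def ann (M : Submodule ℂ F) : Submodule ℂ (StrongDual ℂ F) where
  carrier := {f | ∀ m ∈ M, f m = 0}
  add_mem' := by intro f g hf hg m hm; simp [hf m hm, hg m hm]
  zero_mem' := by intro m hm; simp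
  smul_mem' := by intro c f hf m hm; simp [hf m hm]

lemma mem_ann {M : Submodule ℂ F} {f : StrongDual ℂ F} : f ∈ ann M ↔ ∀ m ∈ M, f m = 0 := Iff.rfl

section Reflexive

variable (Y : Type*) [NormedAddCommGroup Y] [NormedSpace ℂ Y]

lemma refl_dual (h : Surjective (inclusionInDoubleDual ℂ Y)) :
    Surjective (inclusionInDoubleDual ℂ (StrongDual ℂ Y)) := by
  intro Φ
  refine ⟨Φ.comp (inclusionInDoubleDual ℂ Y), ?_⟩
  ext ψ
  obtain ⟨x, rfl⟩ := h ψ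
  rw [dual_def, dual_def]
  rfl

lemma refl_submodule (h : Surjective (inclusionInDoubleDual ℂ Y)) (M : Submodule ℂ Y)
    (hM : IsClosed (M : Set Y)) : Surjective (inclusionInDoubleDual ℂ ↥M) := by
  intro Φ
  set r : StrongDual ℂ Y →L[ℂ] StrongDual ℂ ↥M := precomp M.subtypeL with hr
  set Ψ : StrongDual ℂ (StrongDual ℂ Y) := Φ.comp r with hΨ
  obtain ⟨x, hx⟩ := h Ψ
  have hxM : x ∈ M := by
    by_contra hx'
    obtain ⟨f, hf0, hfx⟩ := exists_vanishing_functional M hM hx'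
    have h1 : Ψ f = 0 := by
      have hrf : r f = 0 := by
        ext m
        exact hf0 m m.2
      rw [hΨ, ContinuousLinearMap.comp_apply, hrf, map_zero]
    have h2 : Ψ f = f x := by rw [← hx, dual_def]
    exact hfx (h2 ▸ h1)
  refine ⟨⟨x, hxM⟩, ?_⟩
  ext g
  obtain ⟨G, hG1, -⟩ := exists_extension_norm_eq M g
  have hrG : r G = g := by
    ext m
    exact hG1 m
  have : G x = Ψ G := by rw [← hx, dual_def]
  calc (inclusionInDoubleDual ℂ ↥M ⟨x, hxM⟩) g = g ⟨x, hxM⟩ := dual_def _ _ _ _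
  _ = G x := (hG1 ⟨x, hxM⟩).symm
  _ = Ψ G := this
  _ = Φ (r G) := rfl
  _ = Φ g := by rw [hrG]

lemma dual_separable_of_refl_sep (h : Surjective (inclusionInDoubleDual ℂ Y))
    [SeparableSpace Y] : SeparableSpace (StrongDual ℂ Y) := by
  have hd : DenseRange (inclusionInDoubleDual ℂ Y) := h.denseRange
  have : SeparableSpace (StrongDual ℂ (StrongDual ℂ Y)) :=
    hd.separableSpace (inclusionInDoubleDual ℂ Y).continuous
  exact separableSpace_of_dual_separableSpace this

/-- Quotient by the annihilator of a closed separable submodule is separable. -/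
lemma quot_ann_separable (h : Surjective (inclusionInDoubleDual ℂ Y)) (M : Submodule ℂ Y)
    (hMc : IsClosed (M : Set Y)) (hMs : IsSeparable (M : Set Y)) :
    SeparableSpace (StrongDual ℂ Y ⧸ ann M) := by
  haveI hsepM : SeparableSpace ↥M := hMs.separableSpace
  haveI : SeparableSpace (StrongDual ℂ ↥M) :=
    dual_separable_of_refl_sep ↥M (refl_submodule Y h M hMc)
  obtain ⟨s, hsc, hsd⟩ := exists_countable_dense (StrongDual ℂ ↥M)
  have hext : ∀ g : StrongDual ℂ ↥M, ∃ G : StrongDual ℂ Y, (∀ m : ↥M, G m = g m) ∧ ‖G‖ = ‖g‖ :=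
    fun g => exists_extension_norm_eq M g
  choose ext hext1 hext2 using hext
  set Q : Set (StrongDual ℂ Y ⧸ ann M) := (fun g => Submodule.Quotient.mk (ext g)) '' s with hQ
  refine ⟨⟨Q, hsc.image _, ?_⟩⟩
  refine (Metric.dense_iff (α := StrongDual ℂ Y ⧸ ann M)).2 ?_
  intro ξ ε hε
  obtain ⟨f, rfl⟩ := Submodule.Quotient.mk_surjective (ann M) ξ
  set rf : StrongDual ℂ ↥M := precomp M.subtypeL f with hrf
  obtain ⟨g, hgs, hgd⟩ := (Metric.mem_closure_iff (α := StrongDual ℂ ↥M)).1 (hsd.closure_eq ▸ Set.mem_univ rf :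
    rf ∈ closure s) (ε/2) (by positivity)
  refine ⟨Submodule.Quotient.mk (ext g), ?_, Set.mem_image_of_mem _ hgs⟩
  rw [Metric.mem_ball, dist_eq_norm, ← Submodule.Quotient.mk_sub]
  -- h := f - ext g restricted to M equals rf - g
  set hdiff : StrongDual ℂ Y := f - ext g with hhd
  set rh : StrongDual ℂ ↥M := precomp M.subtypeL hdiff with hrh
  have hrheq : rh = rf - g := by
    ext m
    simp only [hrh, precomp_apply, hhd, ContinuousLinearMap.sub_apply,
      ContinuousLinearMap.coe_sub', Pi.sub_apply]
    have : ext g m = g m := hext1 g m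
    simp [Submodule.subtypeL_apply, this, hrf]
  have hnorm : ‖rh‖ < ε/2 := by
    rw [hrheq]
    exact (dist_eq_norm rf g).symm.trans_lt hgd
  -- hdiff - ext rh ∈ ann M
  have hmem : hdiff - ext rh ∈ ann M := by
    intro m hm
    have h1 : ext rh m = rh (⟨m, hm⟩ : ↥M) := hext1 rh ⟨m, hm⟩
    have h2 : rh (⟨m, hm⟩ : ↥M) = hdiff m := rfl
    simp only [ContinuousLinearMap.sub_apply]
    rw [h1, h2, sub_self]
  have hmkeq : (Submodule.Quotient.mk hdiff : StrongDual ℂ Y ⧸ ann M)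
      = Submodule.Quotient.mk (ext rh) := by
    rw [← sub_eq_zero, ← Submodule.Quotient.mk_sub, Submodule.Quotient.mk_eq_zero]
    exact hmem
  have hneg : ext g - f = -hdiff := by rw [hhd]; abel
  rw [hneg]
  have h0 : (Submodule.Quotient.mk (-hdiff) : StrongDual ℂ Y ⧸ ann M)
      = -(Submodule.Quotient.mk hdiff) := by
    rw [← Submodule.mkQ_apply, ← Submodule.mkQ_apply, map_neg]
  rw [h0]
  refine (norm_neg (Submodule.Quotient.mk hdiff : StrongDual ℂ Y ⧸ ann M)).trans_lt ?_
  calc ‖(Submodule.Quotient.mk hdiff : StrongDual ℂ Y ⧸ ann M)‖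
      = ‖(Submodule.Quotient.mk (ext rh) : StrongDual ℂ Y ⧸ ann M)‖ := by rw [hmkeq]
  _ ≤ ‖ext rh‖ := Submodule.Quotient.norm_mk_le _ _
  _ = ‖rh‖ := hext2 rh
  _ < ε/2 := hnorm
  _ < ε := by linarith

/-- The range of the dual map of a separable-range operator is separable. -/
lemma range_precomp_separable (h : Surjective (inclusionInDoubleDual ℂ Y)) (S : Y →L[ℂ] Y)
    (hS : IsSeparable (Set.range S)) : IsSeparable (Set.range (precomp S)) := by
  set M : Submodule ℂ Y := (Submodule.span ℂ (Set.range S)).topologicalClosure with hM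
  have hMc : IsClosed (M : Set Y) := Submodule.isClosed_topologicalClosure _
  have hMs : IsSeparable (M : Set Y) := by
    rw [hM, Submodule.topologicalClosure_coe]
    exact (hS.span (R := ℂ)).closure
  haveI : SeparableSpace ↥M := hMs.separableSpace
  haveI : SeparableSpace (StrongDual ℂ ↥M) :=
    dual_separable_of_refl_sep ↥M (refl_submodule Y h M hMc)
  have hmemM : ∀ x, S x ∈ M := fun x =>
    (Submodule.le_topologicalClosure _) (Submodule.subset_span ⟨x, rfl⟩)
  set S₀ : Y →L[ℂ] ↥M := S.codRestrict M hmemM with hS₀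
  have hS₀x : ∀ x, ((S₀ x : Y)) = S x := fun x => rfl
  have hsub : Set.range (precomp S) ⊆ (precomp S₀) '' Set.univ := by
    rintro - ⟨f, rfl⟩
    refine ⟨precomp M.subtypeL f, Set.mem_univ _, ?_⟩
    ext x
    simp only [precomp_apply, Submodule.subtypeL_apply]
    rw [hS₀x]
  have huniv : IsSeparable (Set.univ : Set (StrongDual ℂ ↥M)) :=
    isSeparable_univ_iff.2 (by infer_instance)
  exact (huniv.image (precomp S₀).continuous).mono hsub

end Reflexive

/-- countable "code" generating the closed span of a countable set -/
def code (s : Set F) : Set F := by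
  classical
  exact if h : s.Countable then (isSeparable_closedSpan h.isSeparable).choose else ∅

lemma code_spec {s : Set F} (hs : s.Countable) : (code s).Countable ∧
    (((Submodule.span ℂ s).topologicalClosure : Submodule ℂ F) : Set F) ⊆
      closure (code s) := by
  rw [code, dif_pos hs]
  exact (isSeparable_closedSpan hs.isSeparable).choose_spec

theorem exists_separable_projection {Y : Type*} [NormedAddCommGroup Y] [NormedSpace ℂ Y]
    [CompleteSpace Y] (hY : Surjective (inclusionInDoubleDual ℂ Y)) (A : Set Y)
    (hA : IsSeparable A) :
    ∃ Z : Submodule ℂ Y, IsClosed (Z : Set Y) ∧ IsSeparable (Z : Set Y) ∧ A ⊆ (Z : Set Y) ∧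
      ∃ P : Y →L[ℂ] Y, (∀ z ∈ Z, P z = z) ∧ (∀ f, P f ∈ Z) := by
  classical
  have hν : ∀ z : Y, ∃ φ : StrongDual ℂ Y, ‖φ‖ ≤ 1 ∧ φ z = (‖z‖ : ℂ) := fun z => by
    obtain ⟨g, h1, h2⟩ := exists_dual_vector'' ℂ z; exact ⟨g, h1, h2⟩
  choose ν hν1 hν2 using hν
  have hμ : ∀ φ : StrongDual ℂ Y, ∃ x : Y, ‖x‖ ≤ 1 ∧ ‖φ‖ ≤ 2 * ‖φ x‖ := exists_near_norming
  choose μ hμ1 hμ2 using hμ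
  obtain ⟨A0, hA0c, hA0⟩ := hA
  set step : Set Y × Set (StrongDual ℂ Y) → Set Y × Set (StrongDual ℂ Y) := fun p =>
    (p.1 ∪ μ '' code p.2, p.2 ∪ ν '' code p.1) with hstep
  set CG : ℕ → Set Y × Set (StrongDual ℂ Y) := fun n => Nat.rec (A0, ∅) (fun _ p => step p) n
    with hCG
  have hCGs : ∀ n, CG (n+1) = step (CG n) := fun n => rfl
  have hcnt : ∀ n, (CG n).1.Countable ∧ (CG n).2.Countable := by
    intro n
    induction n with
    | zero => exact ⟨hA0c, countable_empty⟩
    | succ n ih =>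
      rw [hCGs]
      exact ⟨ih.1.union ((code_spec ih.2).1.image _), ih.2.union ((code_spec ih.1).1.image _)⟩
  set CU : Set Y := ⋃ n, (CG n).1 with hCU
  set GU : Set (StrongDual ℂ Y) := ⋃ n, (CG n).2 with hGU
  set Z : Submodule ℂ Y := (Submodule.span ℂ CU).topologicalClosure with hZ
  set W : Submodule ℂ (StrongDual ℂ Y) := (Submodule.span ℂ GU).topologicalClosure with hW
  have hZc : IsClosed (Z : Set Y) := Submodule.isClosed_topologicalClosure _
  have hWc : IsClosed (W : Set (StrongDual ℂ Y)) := Submodule.isClosed_topologicalClosure _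
  have hZcoe : (Z : Set Y) = closure ((Submodule.span ℂ CU : Submodule ℂ Y) : Set Y) :=
    Submodule.topologicalClosure_coe _
  have hWcoe : (W : Set (StrongDual ℂ Y))
      = closure ((Submodule.span ℂ GU : Submodule ℂ (StrongDual ℂ Y)) : Set (StrongDual ℂ Y)) :=
    Submodule.topologicalClosure_coe _
  -- monotonicity
  have hmono1 : Monotone (fun n => Submodule.span ℂ (CG n).1) := by
    apply monotone_nat_of_le_succ
    intro n
    apply Submodule.span_mono
    rw [hCGs]
    exact Set.subset_union_left
  have hmono2 : Monotone (fun n => Submodule.span ℂ (CG n).2) := by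
    apply monotone_nat_of_le_succ
    intro n
    apply Submodule.span_mono
    rw [hCGs]
    exact Set.subset_union_left
  -- membership of stage sets in Z, W
  have hCZ : ∀ n, (CG n).1 ⊆ (Z : Set Y) := fun n x hx =>
    (Submodule.le_topologicalClosure _)
      (Submodule.subset_span (Set.mem_iUnion.2 ⟨n, hx⟩))
  have hGW : ∀ n, (CG n).2 ⊆ (W : Set (StrongDual ℂ Y)) := fun n φ hφ =>
    (Submodule.le_topologicalClosure _)
      (Submodule.subset_span (Set.mem_iUnion.2 ⟨n, hφ⟩))
  -- the two norming properties
  have hN1 : ∀ z ∈ Z, ∀ ε : ℝ, 0 < ε → ∃ φ : StrongDual ℂ Y, φ ∈ W ∧ ‖φ‖ ≤ 1 ∧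
      ‖z‖ ≤ ‖φ z‖ + ε := by
    intro z hz ε hε
    have hz' : z ∈ closure ((Submodule.span ℂ CU : Submodule ℂ Y) : Set Y) := by
      rw [← hZcoe]; exact hz
    obtain ⟨z₁, hz₁mem, hz₁⟩ := Metric.mem_closure_iff.1 hz' (ε/6) (by positivity)
    have hz₁mem' : z₁ ∈ Submodule.span ℂ CU := hz₁mem
    have : z₁ ∈ ⨆ n, Submodule.span ℂ (CG n).1 := by
      rw [← Submodule.span_iUnion]; exact hz₁mem'
    obtain ⟨n, hn⟩ := (Submodule.mem_iSup_of_directed _ hmono1.directed_le).1 this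
    have hcl : z₁ ∈ closure (code (CG n).1) :=
      (code_spec (hcnt n).1).2 ((Submodule.le_topologicalClosure _) hn)
    obtain ⟨z₂, hz₂mem, hz₂⟩ := Metric.mem_closure_iff.1 hcl (ε/6) (by positivity)
    set φ := ν z₂ with hφ
    have hφW : φ ∈ W := by
      apply hGW (n+1)
      rw [hCGs]
      exact Set.mem_union_right _ (Set.mem_image_of_mem _ hz₂mem)
    refine ⟨φ, hφW, hν1 z₂, ?_⟩
    have hd : ‖z - z₂‖ < ε/3 := by
      have : dist z z₂ < ε/3 := by
        calc dist z z₂ ≤ dist z z₁ + dist z₁ z₂ := dist_triangle _ _ _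
        _ < ε/6 + ε/6 := by exact add_lt_add hz₁ hz₂
        _ = ε/3 := by ring
      simpa [dist_eq_norm] using this
    have h1 : ‖z‖ ≤ ‖z₂‖ + ε/3 := by
      have := norm_sub_norm_le z z₂
      linarith
    have h2 : ‖φ z₂‖ = ‖z₂‖ := by
      rw [hν2 z₂, Complex.norm_real, Real.norm_eq_abs, abs_of_nonneg (norm_nonneg _)]
    have h3 : ‖φ z₂‖ ≤ ‖φ z‖ + ε/3 := by
      have : ‖φ z₂ - φ z‖ ≤ ‖z₂ - z‖ := by
        rw [← map_sub]
        calc ‖φ (z₂ - z)‖ ≤ ‖φ‖ * ‖z₂ - z‖ := φ.le_opNorm _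
        _ ≤ 1 * ‖z₂ - z‖ := mul_le_mul_of_nonneg_right (hν1 z₂) (norm_nonneg _)
        _ = ‖z₂ - z‖ := one_mul _
      have h4 : ‖φ z₂‖ - ‖φ z‖ ≤ ‖φ z₂ - φ z‖ := norm_sub_norm_le _ _
      have h5 : ‖z₂ - z‖ < ε/3 := by rw [norm_sub_rev]; exact hd
      linarith
    linarith
  have hN2 : ∀ φ : StrongDual ℂ Y, φ ∈ W → ∀ ε : ℝ, 0 < ε → ∃ x : Y, x ∈ Z ∧ ‖x‖ ≤ 1 ∧
      ‖φ‖ ≤ 2 * ‖φ x‖ + ε := by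
    intro φ hφ ε hε
    have hφ' : φ ∈ closure ((Submodule.span ℂ GU : Submodule ℂ (StrongDual ℂ Y)) : Set (StrongDual ℂ Y)) := by
      rw [← hWcoe]; exact hφ
    obtain ⟨φ₁, hφ₁mem, hφ₁⟩ := Metric.mem_closure_iff.1 hφ' (ε/8) (by positivity)
    have : φ₁ ∈ ⨆ n, Submodule.span ℂ (CG n).2 := by
      rw [← Submodule.span_iUnion]; exact hφ₁mem
    obtain ⟨n, hn⟩ := (Submodule.mem_iSup_of_directed _ hmono2.directed_le).1 this
    have hcl : φ₁ ∈ closure (code (CG n).2) :=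
      (code_spec (hcnt n).2).2 ((Submodule.le_topologicalClosure _) hn)
    obtain ⟨φ₂, hφ₂mem, hφ₂⟩ := Metric.mem_closure_iff.1 hcl (ε/8) (by positivity)
    set x := μ φ₂ with hx
    have hxZ : x ∈ Z := by
      apply hCZ (n+1)
      rw [hCGs]
      exact Set.mem_union_right _ (Set.mem_image_of_mem _ hφ₂mem)
    refine ⟨x, hxZ, hμ1 φ₂, ?_⟩
    have hdist : ‖φ - φ₂‖ < ε/4 := by
      have : dist φ φ₂ < ε/4 := by
        calc dist φ φ₂ ≤ dist φ φ₁ + dist φ₁ φ₂ := dist_triangle _ _ _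
        _ < ε/8 + ε/8 := add_lt_add hφ₁ hφ₂
        _ = ε/4 := by ring
      simpa [dist_eq_norm] using this
    have h1 : ‖φ‖ ≤ ‖φ₂‖ + ε/4 := by
      have := norm_sub_norm_le φ φ₂
      linarith
    have h2 : ‖φ₂‖ ≤ 2 * ‖φ₂ x‖ := hμ2 φ₂
    have h3 : ‖φ₂ x‖ ≤ ‖φ x‖ + ε/4 := by
      have hsub : ‖φ₂ x - φ x‖ ≤ ‖φ₂ - φ‖ := by
        calc ‖φ₂ x - φ x‖ = ‖(φ₂ - φ) x‖ := by rw [ContinuousLinearMap.sub_apply]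
        _ ≤ ‖φ₂ - φ‖ * ‖x‖ := (φ₂ - φ).le_opNorm _
        _ ≤ ‖φ₂ - φ‖ * 1 := mul_le_mul_of_nonneg_left (hμ1 φ₂) (norm_nonneg _)
        _ = ‖φ₂ - φ‖ := mul_one _
      have h4 : ‖φ₂ x‖ - ‖φ x‖ ≤ ‖φ₂ x - φ x‖ := norm_sub_norm_le _ _
      have h5 : ‖φ₂ - φ‖ < ε/4 := by rw [norm_sub_rev]; exact hdist
      linarith
    linarith
  -- the pre-annihilator of W
  set Wperp : Submodule ℂ Y := ⨅ (φ : ↥W), LinearMap.ker ((φ : StrongDual ℂ Y) : Y →ₗ[ℂ] ℂ) with hWperp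
  have hmemWperp : ∀ x : Y, x ∈ Wperp ↔ ∀ φ ∈ W, φ x = 0 := by
    intro x
    rw [hWperp, Submodule.mem_iInf]
    constructor
    · intro h φ hφ; exact h ⟨φ, hφ⟩
    · intro h φ; exact h φ.1 φ.2
  have hWperpc : IsClosed (Wperp : Set Y) := by
    have : (Wperp : Set Y) = ⋂ (φ : ↥W), ((LinearMap.ker ((φ : StrongDual ℂ Y) : Y →ₗ[ℂ] ℂ) : Submodule ℂ Y) : Set Y) := by
      ext x
      simp only [Set.mem_iInter, SetLike.mem_coe]
      rw [hWperp, Submodule.mem_iInf]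
    rw [this]
    exact isClosed_iInter (fun φ => ContinuousLinearMap.isClosed_ker _)
  -- norm estimate
  have hZWnorm : ∀ z ∈ Z, ∀ y ∈ Wperp, ‖z‖ ≤ ‖z + y‖ := by
    intro z hz y hy
    apply le_of_forall_pos_le_add
    intro ε hε
    obtain ⟨φ, hφW, hφ1, hφ2⟩ := hN1 z hz ε hε
    have hφy : φ y = 0 := (hmemWperp y).1 hy φ hφW
    have : ‖φ z‖ = ‖φ (z + y)‖ := by rw [map_add, hφy, add_zero]
    calc ‖z‖ ≤ ‖φ z‖ + ε := hφ2
    _ = ‖φ (z + y)‖ + ε := by rw [this]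
    _ ≤ ‖φ‖ * ‖z + y‖ + ε := by linarith [φ.le_opNorm (z + y)]
    _ ≤ 1 * ‖z + y‖ + ε := by
        have := mul_le_mul_of_nonneg_right hφ1 (norm_nonneg (z + y))
        linarith
    _ = ‖z + y‖ + ε := by rw [one_mul]
  -- disjointness
  have hdisj : Disjoint Z Wperp := by
    rw [Submodule.disjoint_def]
    intro x hxZ hxW
    have h1 : ‖x‖ ≤ ‖x + (-x)‖ := hZWnorm x hxZ (-x) (neg_mem hxW)
    rw [add_neg_cancel, norm_zero] at h1
    exact norm_le_zero_iff.1 h1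
  -- closedness of the sum
  have hsumclosed : IsClosed ((Z ⊔ Wperp : Submodule ℂ Y) : Set Y) := by
    have hsub : closure ((Z ⊔ Wperp : Submodule ℂ Y) : Set Y)
        ⊆ ((Z ⊔ Wperp : Submodule ℂ Y) : Set Y) := by
      intro x hx
      obtain ⟨u, humem, hulim⟩ := mem_closure_iff_seq_limit.1 hx
      have hdecomp : ∀ k, ∃ z ∈ Z, ∃ y ∈ Wperp, z + y = u k := fun k =>
        Submodule.mem_sup.1 (humem k)
      choose zs hzs ys hys hzy using hdecomp
      have hucauchy : CauchySeq u := hulim.cauchySeq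
      have hzcauchy : CauchySeq zs := by
        rw [Metric.cauchySeq_iff] at hucauchy ⊢
        intro ε hε
        obtain ⟨N, hN⟩ := hucauchy ε hε
        refine ⟨N, fun m hm n hn => ?_⟩
        have hkey : ‖zs m - zs n‖ ≤ ‖u m - u n‖ := by
          have hz' : zs m - zs n ∈ Z := sub_mem (hzs m) (hzs n)
          have hy' : ys m - ys n ∈ Wperp := sub_mem (hys m) (hys n)
          have : u m - u n = (zs m - zs n) + (ys m - ys n) := by
            rw [← hzy m, ← hzy n]; abel
          rw [this]
          exact hZWnorm _ hz' _ hy'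
        rw [dist_eq_norm]
        have hNn := hN m hm n hn
        rw [dist_eq_norm] at hNn
        exact lt_of_le_of_lt hkey hNn
      obtain ⟨zl, hzl⟩ := cauchySeq_tendsto_of_complete hzcauchy
      have hzlZ : zl ∈ Z := by
        have : (Z : Set Y) ∈ Filter.map zs Filter.atTop → zl ∈ Z := fun _ => by
          exact hZc.mem_of_tendsto hzl (Filter.Eventually.of_forall hzs)
        exact hZc.mem_of_tendsto hzl (Filter.Eventually.of_forall hzs)
      have hylim : Filter.Tendsto ys Filter.atTop (nhds (x - zl)) := by
        have : ys = fun k => u k - zs k := by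
          funext k; rw [← hzy k]; abel
        rw [this]
        exact hulim.sub hzl
      have hyW : x - zl ∈ Wperp :=
        hWperpc.mem_of_tendsto hylim (Filter.Eventually.of_forall hys)
      have : x = zl + (x - zl) := by abel
      rw [this]
      exact Submodule.add_mem _ (Submodule.mem_sup_left hzlZ) (Submodule.mem_sup_right hyW)
    exact closure_subset_iff_isClosed.1 hsub
  -- the sum is everything
  have htop : Z ⊔ Wperp = ⊤ := by
    by_contra hne
    obtain ⟨x, -, hx⟩ : ∃ x, x ∈ (⊤ : Submodule ℂ Y) ∧ x ∉ Z ⊔ Wperp := by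
      rcases SetLike.not_le_iff_exists.1
        (fun hle : (⊤ : Submodule ℂ Y) ≤ Z ⊔ Wperp => hne (le_antisymm le_top hle)) with
        ⟨y, h1, h2⟩
      exact ⟨y, h1, h2⟩
    obtain ⟨f, hf0, hfx⟩ := exists_vanishing_functional (Z ⊔ Wperp) hsumclosed hx
    have hfW : f ∈ W := by
      by_contra hfW
      obtain ⟨Ψ, hΨ0, hΨf⟩ := exists_vanishing_functional W hWc hfW
      obtain ⟨y, hy⟩ := hY Ψ
      have hyW : y ∈ Wperp := by
        rw [hmemWperp]
        intro φ hφ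
        have : Ψ φ = φ y := by rw [← hy, dual_def]
        rw [← this]
        exact hΨ0 φ hφ
      have hfy : f y = 0 := hf0 y (Submodule.mem_sup_right hyW)
      have : Ψ f = f y := by rw [← hy, dual_def]
      exact hΨf (by rw [this, hfy])
    have hf_zero : f = 0 := by
      have hnorm : ‖f‖ ≤ 0 := by
        apply le_of_forall_pos_le_add
        intro ε hε
        obtain ⟨x', hx'Z, -, hx'⟩ := hN2 f hfW ε hε
        have : f x' = 0 := hf0 x' (Submodule.mem_sup_left hx'Z)
        rw [this, norm_zero, mul_zero] at hx'
        linarith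
      have : ‖f‖ = 0 := le_antisymm hnorm (norm_nonneg f)
      exact norm_eq_zero.1 this
    rw [hf_zero] at hfx
    simp at hfx
  -- the projection
  have hcompl : IsCompl Z Wperp := ⟨hdisj, codisjoint_iff.2 htop⟩
  set P0 : Y →L[ℂ] ↥Z := Z.linearProjOfClosedCompl Wperp hcompl hZc hWperpc with hP0
  refine ⟨Z, hZc, ?_, ?_, Z.subtypeL.comp P0, ?_, ?_⟩
  · -- separability of Z
    have hCUc : CU.Countable := countable_iUnion (fun n => (hcnt n).1)
    exact isSeparable_closedSpan hCUc.isSeparable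
  · -- A inside Z
    intro a ha
    have h1 : a ∈ closure A0 := hA0 ha
    have h2 : closure A0 ⊆ closure ((Submodule.span ℂ CU : Submodule ℂ Y) : Set Y) := by
      apply closure_mono
      intro t ht
      exact Submodule.subset_span (Set.mem_iUnion.2 ⟨0, ht⟩)
    rw [hZcoe]
    exact h2 h1
  · -- fixes Z
    intro z hz
    have hcoe : ⇑P0 = ⇑(Z.linearProjOfIsCompl Wperp hcompl) :=
      Submodule.coe_continuous_linearProjOfClosedCompl' hcompl hZc hWperpc
    have h1 : P0 z = ⟨z, hz⟩ := by
      rw [congrFun hcoe z]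
      exact Submodule.linearProjOfIsCompl_apply_left hcompl ⟨z, hz⟩
    simp only [ContinuousLinearMap.comp_apply, h1, Submodule.subtypeL_apply]
  · -- lands in Z
    intro f
    simp only [ContinuousLinearMap.comp_apply, Submodule.subtypeL_apply]
    exact (P0 f).2


end KernelAux
end
set_option maxHeartbeats 2000000
set_option synthInstance.maxHeartbeats 400000

/-- **Theorem 2.1.** Let `X` be a non-separable, reflexive complex Banach space with few
operators, and let `E = X'` be its dual. For a closed linear subspace `D` of `E` the following
are equivalent: (a) either `D` or `E/D` is separable; (b) `D = ker T` for some bounded operator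
`T` on `E`; (c) `D = ⋂_{i=1}^n ker T_i` for some `n ≥ 1` and bounded operators `T_i` on `E`. -/
theorem kernel_characterisation_in_dual_of_space_with_few_operators
    (X : Type*) [NormedAddCommGroup X] [NormedSpace ℂ X] [CompleteSpace X]
    (hnonsep : ¬ SeparableSpace X)
    (hrefl : Function.Surjective (inclusionInDoubleDual ℂ X))
    (hfew : ∀ T : X →L[ℂ] X, ∃ (α : ℂ) (S : X →L[ℂ] X),
      T = α • ContinuousLinearMap.id ℂ X + S ∧ IsSeparable (Set.range S))
    (D : Submodule ℂ (StrongDual ℂ X)) (hD : IsClosed (D : Set (StrongDual ℂ X))) :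
    ((IsSeparable (D : Set (StrongDual ℂ X)) ∨ SeparableSpace (StrongDual ℂ X ⧸ D)) ↔
        (∃ T : StrongDual ℂ X →L[ℂ] StrongDual ℂ X, LinearMap.ker (T : StrongDual ℂ X →ₗ[ℂ] StrongDual ℂ X) = D)) ∧
      ((∃ T : StrongDual ℂ X →L[ℂ] StrongDual ℂ X, LinearMap.ker (T : StrongDual ℂ X →ₗ[ℂ] StrongDual ℂ X) = D) ↔
        (∃ n : ℕ, 0 < n ∧ ∃ T : Fin n → (StrongDual ℂ X →L[ℂ] StrongDual ℂ X),
          D = ⨅ i, LinearMap.ker (T i : StrongDual ℂ X →ₗ[ℂ] StrongDual ℂ X))) := by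
  classical
  have hEnonsep : ¬SeparableSpace (StrongDual ℂ X) := fun h =>
    hnonsep (KernelAux.separableSpace_of_dual_separableSpace h)
  have hEinf : ¬FiniteDimensional ℂ (StrongDual ℂ X) :=
    KernelAux.not_finiteDimensional_of_not_separable hEnonsep
  have hreflE : Function.Surjective (inclusionInDoubleDual ℂ (StrongDual ℂ X)) :=
    KernelAux.refl_dual X hrefl
  -- every operator on the dual is a dual map
  have hsurjT : ∀ T : StrongDual ℂ X →L[ℂ] StrongDual ℂ X, ∃ u : X →L[ℂ] X, KernelAux.precomp u = T := by
    intro T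
    let ee : X ≃ₗᵢ[ℂ] (StrongDual ℂ (StrongDual ℂ X)) :=
      LinearIsometryEquiv.ofSurjective (inclusionInDoubleDualLi ℂ (E := X)) hrefl
    let eeinv : StrongDual ℂ (StrongDual ℂ X) →L[ℂ] X :=
      (ee.symm.toContinuousLinearEquiv : StrongDual ℂ (StrongDual ℂ X) ≃L[ℂ] X)
    refine ⟨eeinv.comp ((KernelAux.precomp T).comp (inclusionInDoubleDual ℂ X)), ?_⟩
    ext f x
    have h1 : ∀ Φ : StrongDual ℂ (StrongDual ℂ X), inclusionInDoubleDual ℂ X (eeinv Φ) = Φ := by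
      intro Φ
      have h : eeinv Φ = ee.symm Φ := rfl
      rw [h]
      exact ee.apply_symm_apply Φ
    show f (eeinv ((KernelAux.precomp T) (inclusionInDoubleDual ℂ X x))) = T f x
    have h2 : f (eeinv ((KernelAux.precomp T) (inclusionInDoubleDual ℂ X x)))
        = (inclusionInDoubleDual ℂ X
            (eeinv ((KernelAux.precomp T) (inclusionInDoubleDual ℂ X x)))) f := by
      rw [dual_def]
    rw [h2, h1]
    show (inclusionInDoubleDual ℂ X x) (T f) = T f x
    rw [dual_def]
  -- structure of operators on the dual
  have hstruct : ∀ T : StrongDual ℂ X →L[ℂ] StrongDual ℂ X, ∃ (α : ℂ) (S : X →L[ℂ] X),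
      IsSeparable (Set.range S) ∧
        T = α • ContinuousLinearMap.id ℂ (StrongDual ℂ X) + KernelAux.precomp S := by
    intro T
    obtain ⟨u, hu⟩ := hsurjT T
    obtain ⟨α, S, huSeq, hSsep⟩ := hfew u
    refine ⟨α, S, hSsep, ?_⟩
    rw [← hu, huSeq]
    have h1 : KernelAux.precomp (α • ContinuousLinearMap.id ℂ X + S)
        = α • KernelAux.precomp (ContinuousLinearMap.id ℂ X) + KernelAux.precomp S := by
      unfold KernelAux.precomp
      rw [map_add, map_smul]
    rw [h1]
    have h2 : KernelAux.precomp (ContinuousLinearMap.id ℂ X)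
        = ContinuousLinearMap.id ℂ (StrongDual ℂ X) := by
      ext f x
      rfl
    rw [h2]
  -- a functional vanishing on a set vanishes on the closed span
  have hvanish : ∀ (f : StrongDual ℂ X) (s : Set X), (∀ x ∈ s, f x = 0) →
      ∀ m ∈ (Submodule.span ℂ s).topologicalClosure, f m = 0 := by
    intro f s h m hm
    have h1 : Submodule.span ℂ s ≤ LinearMap.ker (f : X →ₗ[ℂ] ℂ) :=
      Submodule.span_le.2 (fun x hx => LinearMap.mem_ker.2 (h x hx))
    have h2 : (Submodule.span ℂ s).topologicalClosure ≤ LinearMap.ker (f : X →ₗ[ℂ] ℂ) :=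
      Submodule.topologicalClosure_minimal _ h1 (ContinuousLinearMap.isClosed_ker f)
    exact LinearMap.mem_ker.1 (h2 hm)
  have hz : ∀ S' : X →L[ℂ] X, (0:ℂ) • ContinuousLinearMap.id ℂ (StrongDual ℂ X)
      + KernelAux.precomp S' = KernelAux.precomp S' := fun S' => by
    ext g x; simp
  -- kernel of a dual map is an annihilator
  have hker_ann : ∀ S : X →L[ℂ] X, LinearMap.ker (KernelAux.precomp S : StrongDual ℂ X →ₗ[ℂ] StrongDual ℂ X)
      = KernelAux.ann ((Submodule.span ℂ (Set.range S)).topologicalClosure) := by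
    intro S
    ext f
    rw [LinearMap.mem_ker, ContinuousLinearMap.coe_coe, KernelAux.mem_ann]
    constructor
    · intro h
      apply hvanish
      rintro - ⟨x, rfl⟩
      have h0 : KernelAux.precomp S f x = 0 := by rw [h]; rfl
      simpa using h0
    · intro h
      ext x
      have hmem : S x ∈ (Submodule.span ℂ (Set.range S)).topologicalClosure :=
        (Submodule.le_topologicalClosure _) (Submodule.subset_span ⟨x, rfl⟩)
      simpa using h _ hmem
  -- kernels of operators with nonzero scalar part are separable
  have hker_sep : ∀ (T : StrongDual ℂ X →L[ℂ] StrongDual ℂ X) (α : ℂ) (S : X →L[ℂ] X), α ≠ 0 →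
      IsSeparable (Set.range S) →
      T = α • ContinuousLinearMap.id ℂ (StrongDual ℂ X) + KernelAux.precomp S →
      IsSeparable ((LinearMap.ker (T : StrongDual ℂ X →ₗ[ℂ] StrongDual ℂ X) : Submodule ℂ (StrongDual ℂ X)) : Set (StrongDual ℂ X)) := by
    intro T α S hα hSsep hTeq
    have hsub : ((LinearMap.ker (T : StrongDual ℂ X →ₗ[ℂ] StrongDual ℂ X) : Submodule ℂ (StrongDual ℂ X)) : Set (StrongDual ℂ X)) ⊆
        (fun g => (-α⁻¹) • g) '' Set.range (KernelAux.precomp S) := by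
      intro f hf
      have hf' : T f = 0 := LinearMap.mem_ker.1 hf
      rw [hTeq] at hf'
      have h1 : α • f + KernelAux.precomp S f = 0 := by
        simpa [ContinuousLinearMap.add_apply, ContinuousLinearMap.smul_apply] using hf'
      refine ⟨KernelAux.precomp S f, ⟨f, rfl⟩, ?_⟩
      have h2 : α • f = -(KernelAux.precomp S f) := by
        rw [add_eq_zero_iff_eq_neg] at h1; exact h1
      show (-α⁻¹) • (KernelAux.precomp S f) = f
      have h3 : KernelAux.precomp S f = -(α • f) := by rw [h2, neg_neg]
      ext x
      rw [h3]
      simp only [ContinuousLinearMap.smul_apply, ContinuousLinearMap.neg_apply, smul_eq_mul]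
      rw [neg_mul_neg, ← mul_assoc, inv_mul_cancel₀ hα, one_mul]
    exact ((KernelAux.range_precomp_separable X hrefl S hSsep).image
      (continuous_const_smul _)).mono hsub
  -- (b) → (a)
  have hba : (∃ T : StrongDual ℂ X →L[ℂ] StrongDual ℂ X, LinearMap.ker (T : StrongDual ℂ X →ₗ[ℂ] StrongDual ℂ X) = D) →
      (IsSeparable (D : Set (StrongDual ℂ X)) ∨ SeparableSpace (StrongDual ℂ X ⧸ D)) := by
    rintro ⟨T, hT⟩
    obtain ⟨α, S, hSsep, hTeq⟩ := hstruct T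
    by_cases hα : α = 0
    · right
      have hDann : D
          = KernelAux.ann ((Submodule.span ℂ (Set.range S)).topologicalClosure) := by
        rw [← hT, hTeq, hα, hz]
        exact hker_ann S
      rw [hDann]
      apply KernelAux.quot_ann_separable X hrefl
      · exact Submodule.isClosed_topologicalClosure _
      · rw [Submodule.topologicalClosure_coe]
        exact (hSsep.span (R := ℂ)).closure
    · left
      rw [← hT]
      exact hker_sep T α S hα hSsep hTeq
  -- (a) → (b)
  have hab : (IsSeparable (D : Set (StrongDual ℂ X)) ∨ SeparableSpace (StrongDual ℂ X ⧸ D)) →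
      (∃ T : StrongDual ℂ X →L[ℂ] StrongDual ℂ X, LinearMap.ker (T : StrongDual ℂ X →ₗ[ℂ] StrongDual ℂ X) = D) := by
    haveI : IsClosed (D : Set (StrongDual ℂ X)) := hD
    rintro (hDs | hQs)
    · -- D separable
      obtain ⟨e, ψ, hbi⟩ := KernelAux.exists_biorthogonal hEinf
      have hA : IsSeparable ((D : Set (StrongDual ℂ X)) ∪ Set.range e) :=
        hDs.union ((Set.countable_range e).isSeparable)
      obtain ⟨Z, hZc, hZs, hAZ, P, hPfix, hPmem⟩ :=
        KernelAux.exists_separable_projection hreflE _ hA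
      haveI : CompleteSpace ↥Z := hZc.completeSpace_coe
      have heZ : ∀ n, e n ∈ Z := fun n => hAZ (Set.mem_union_right _ ⟨n, rfl⟩)
      have hZinf : ¬FiniteDimensional ℂ ↥Z := by
        intro hfd
        have hee : LinearIndependent ℂ e := by
          rw [linearIndependent_iff']
          intro s g hsum j hj
          have h0 : ψ j (∑ i ∈ s, g i • e i) = g j := by
            rw [map_sum, Finset.sum_eq_single j]
            · rw [map_smul, hbi j j, if_pos rfl, smul_eq_mul, mul_one]
            · intro i hi hij
              rw [map_smul, hbi j i, if_neg (Ne.symm hij), smul_eq_mul, mul_zero]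
            · intro hj'; exact absurd hj hj'
          rw [hsum, map_zero] at h0
          exact h0.symm
        have hindep : LinearIndependent ℂ (fun n => (⟨e n, heZ n⟩ : ↥Z)) :=
          LinearIndependent.of_comp Z.subtype
            (show LinearIndependent ℂ (⇑Z.subtype ∘ fun n => (⟨e n, heZ n⟩ : ↥Z)) from hee)
        haveI := hfd
        have hlt := hindep.lt_aleph0_of_finiteDimensional
        rw [Cardinal.mk_nat] at hlt
        exact absurd hlt (lt_irrefl _)
      set D' : Submodule ℂ ↥Z := D.comap Z.subtype with hD'
      have hD'c : IsClosed (D' : Set ↥Z) := by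
        have hpre : (D' : Set ↥Z) = (Subtype.val) ⁻¹' (D : Set (StrongDual ℂ X)) := rfl
        rw [hpre]
        exact hD.preimage continuous_subtype_val
      haveI : IsClosed (D' : Set ↥Z) := hD'c
      haveI : SeparableSpace ↥Z := hZs.separableSpace
      haveI : SeparableSpace (↥Z ⧸ D') := by
        have hsurj' : Function.Surjective (KernelAux.mkCLM D') := fun ξ => by
          obtain ⟨a, rfl⟩ := Submodule.Quotient.mk_surjective D' ξ
          exact ⟨a, rfl⟩
        exact hsurj'.denseRange.separableSpace (KernelAux.mkCLM D').continuous
      obtain ⟨J₀, hJ₀⟩ := KernelAux.exists_injective_clm (↥Z ⧸ D') hZinf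
      set Pr : StrongDual ℂ X →L[ℂ] ↥Z := P.codRestrict Z hPmem with hPr
      refine ⟨(ContinuousLinearMap.id ℂ (StrongDual ℂ X) - P)
        + Z.subtypeL.comp (J₀.comp ((KernelAux.mkCLM D').comp Pr)), ?_⟩
      ext f
      rw [LinearMap.mem_ker, ContinuousLinearMap.coe_coe]
      have hTf : ((ContinuousLinearMap.id ℂ (StrongDual ℂ X) - P)
          + Z.subtypeL.comp (J₀.comp ((KernelAux.mkCLM D').comp Pr))) f
          = (f - P f) + ↑(J₀ (Submodule.Quotient.mk (Pr f))) := by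
        simp [ContinuousLinearMap.add_apply, ContinuousLinearMap.sub_apply,
          ContinuousLinearMap.comp_apply]
      rw [hTf]
      constructor
      · intro h0
        have hP2 : P (P f) = P f := hPfix _ (hPmem f)
        have hPw : P ((J₀ (Submodule.Quotient.mk (Pr f)) : ↥Z) : StrongDual ℂ X)
            = ↑(J₀ (Submodule.Quotient.mk (Pr f))) := hPfix _ (J₀ _).2
        have happ : P ((f - P f) + ↑(J₀ (Submodule.Quotient.mk (Pr f)))) = 0 := by
          rw [h0, map_zero]
        rw [map_add, map_sub, hP2, sub_self, zero_add, hPw] at happ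
        have hJ0 : J₀ (Submodule.Quotient.mk (Pr f)) = 0 := by
          exact_mod_cast happ
        have hmk : (Submodule.Quotient.mk (Pr f) : ↥Z ⧸ D') = 0 :=
          hJ₀ (by rw [hJ0, map_zero])
        have hPrD : Pr f ∈ D' := (Submodule.Quotient.mk_eq_zero D').1 hmk
        have hPfD : P f ∈ D := Submodule.mem_comap.1 hPrD
        have hfP : f - P f = 0 := by
          have h0' := h0
          rw [happ] at h0'
          simpa using h0'
        have hfeq : f = P f := by rwa [sub_eq_zero] at hfP
        rw [hfeq]
        exact hPfD
      · intro hfD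
        have hPf : P f = f := hPfix f (hAZ (Set.mem_union_left _ hfD))
        have hPrD : Pr f ∈ D' := by
          rw [Submodule.mem_comap]
          show Z.subtype (Pr f) ∈ D
          have hcoe : (Z.subtype (Pr f) : StrongDual ℂ X) = P f := rfl
          rw [hcoe, hPf]
          exact hfD
        have hmk : (Submodule.Quotient.mk (Pr f) : ↥Z ⧸ D') = 0 :=
          (Submodule.Quotient.mk_eq_zero D').2 hPrD
        rw [hPf, sub_self, hmk, map_zero, zero_add]
        exact ZeroMemClass.coe_zero Z
    · -- E/D separable
      haveI := hQs
      obtain ⟨J, hJ⟩ := KernelAux.exists_injective_clm (StrongDual ℂ X ⧸ D) hEinf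
      refine ⟨J.comp (KernelAux.mkCLM D), ?_⟩
      ext f
      rw [LinearMap.mem_ker, ContinuousLinearMap.coe_coe, ContinuousLinearMap.comp_apply]
      constructor
      · intro h0
        have hmk : (KernelAux.mkCLM D) f = 0 := hJ (by rw [h0, map_zero])
        rw [KernelAux.mkCLM_apply] at hmk
        exact (Submodule.Quotient.mk_eq_zero D).1 hmk
      · intro hf
        have hmk : (Submodule.Quotient.mk f : StrongDual ℂ X ⧸ D) = 0 :=
          (Submodule.Quotient.mk_eq_zero D).2 hf
        rw [KernelAux.mkCLM_apply, hmk, map_zero]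
  have hiff1 : (IsSeparable (D : Set (StrongDual ℂ X)) ∨ SeparableSpace (StrongDual ℂ X ⧸ D)) ↔
      (∃ T : StrongDual ℂ X →L[ℂ] StrongDual ℂ X, LinearMap.ker (T : StrongDual ℂ X →ₗ[ℂ] StrongDual ℂ X) = D) := ⟨hab, hba⟩
  refine ⟨hiff1, ?_, ?_⟩
  · rintro ⟨T, hT⟩
    exact ⟨1, one_pos, fun _ : Fin 1 => T, by rw [iInf_const, hT]⟩
  · rintro ⟨n, hn, Ts, hDeq⟩
    haveI : Nonempty (Fin n) := ⟨⟨0, hn⟩⟩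
    choose α S hsep heq using fun i => hstruct (Ts i)
    by_cases hall : ∀ i, α i = 0
    · apply hiff1.1
      right
      have hDann : D = KernelAux.ann
          ((Submodule.span ℂ (⋃ i, Set.range (S i))).topologicalClosure) := by
        rw [hDeq]
        ext f
        rw [Submodule.mem_iInf, KernelAux.mem_ann]
        constructor
        · intro hf
          apply hvanish f (⋃ i, Set.range (S i))
          intro x hx
          obtain ⟨i, hi⟩ := Set.mem_iUnion.1 hx
          obtain ⟨y, rfl⟩ := hi
          have hfi : Ts i f = 0 := LinearMap.mem_ker.1 (hf i)
          rw [heq i, hall i, hz] at hfi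
          have h0 : KernelAux.precomp (S i) f y = 0 := by rw [hfi]; rfl
          simpa using h0
        · intro hf i
          rw [LinearMap.mem_ker, heq i, hall i, hz]
          ext x
          have hmem : S i x ∈
              (Submodule.span ℂ (⋃ i, Set.range (S i))).topologicalClosure :=
            (Submodule.le_topologicalClosure _)
              (Submodule.subset_span (Set.mem_iUnion.2 ⟨i, ⟨x, rfl⟩⟩))
          simpa using hf _ hmem
      rw [hDann]
      apply KernelAux.quot_ann_separable X hrefl
      · exact Submodule.isClosed_topologicalClosure _
      · rw [Submodule.topologicalClosure_coe]
        exact ((IsSeparable.iUnion (fun i => hsep i)).span (R := ℂ)).closure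
    · push_neg at hall
      obtain ⟨i, hi⟩ := hall
      apply hiff1.1
      left
      have hsub0 : (D : Set (StrongDual ℂ X)) ⊆
          ((LinearMap.ker (Ts i : StrongDual ℂ X →ₗ[ℂ] StrongDual ℂ X) : Submodule ℂ (StrongDual ℂ X)) : Set (StrongDual ℂ X)) := by
        intro f hf
        rw [hDeq] at hf
        exact (Submodule.mem_iInf _).1 hf i
      exact (hker_sep (Ts i) (α i) (S i) hi (hsep i) (heq i)).mono hsub0
end

section
/- Let X be a non-separable, reflexive complex Banach space with few operators, i.e. every bounded linear operator T : X → X can be written as T = α·id_X + S with α ∈ ℂ and S a bounded operator with separable range. Let E = X' and let D be a closed linear subspace of E such that D = ⋂_{i=1}^n ker T_i for some n ∈ ℕ and bounded linear operators T_1, …, T_n : E → E. Then either D is separable or E/D is separable. -/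
open NormedSpace TopologicalSpace

open Set in
/-- If the dual of a normed space is separable, so is the space. -/
theorem separableSpace_of_dual_separableSpace {W : Type*} [NormedAddCommGroup W]
    [NormedSpace ℂ W] (h : SeparableSpace (StrongDual ℂ W)) : SeparableSpace W := by
  obtain ⟨c, hc_count, hc_dense⟩ := h.exists_countable_dense
  have hx : ∀ f : StrongDual ℂ W, ∃ x : W, ‖x‖ ≤ 1 ∧ ‖f‖ / 2 ≤ ‖f x‖ := by
    intro f
    by_cases hf : f = 0
    · exact ⟨0, by simp [hf]⟩
    · have hpos : 0 < ‖f‖ := norm_pos_iff.2 hf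
      obtain ⟨x, hx1, hx2⟩ := f.exists_lt_apply_of_lt_opNorm (half_lt_self hpos)
      exact ⟨x, hx1.le, hx2.le⟩
  choose ξ hξ1 hξ2 using hx
  set M : Submodule ℂ W := (Submodule.span ℂ (ξ '' c)).topologicalClosure with hM
  have hMsep : IsSeparable (M : Set W) := by
    have : IsSeparable (Submodule.span ℂ (ξ '' c) : Set W) :=
      ((hc_count.image ξ).isSeparable).span
    simpa [hM, Submodule.topologicalClosure_coe] using this.closure
  have hMtop : M = ⊤ := by
    by_contra hMne
    obtain ⟨w, hw⟩ : ∃ w : W, w ∉ M := by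
      by_contra hall
      push_neg at hall
      exact hMne (Submodule.eq_top_iff'.2 hall)
    haveI : IsClosed (M : Set W) := Submodule.isClosed_topologicalClosure _
    set π : W →L[ℂ] W ⧸ M := LinearMap.mkContinuous M.mkQ 1
      (fun x => by simpa using Submodule.Quotient.norm_mk_le M x) with hπ
    have hπw : π w ≠ 0 := by
      simp only [hπ, LinearMap.mkContinuous_apply, Submodule.mkQ_apply]
      rw [Ne, Submodule.Quotient.mk_eq_zero]
      exact hw
    obtain ⟨g, hg1, hg2⟩ := exists_dual_vector ℂ (π w) (norm_ne_zero_iff.2 hπw)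
    set f : StrongDual ℂ W := g.comp π with hf
    have hfw : f w ≠ 0 := by
      rw [hf]
      simp only [ContinuousLinearMap.comp_apply, hg2]
      exact fun hc => hπw (norm_eq_zero.1 (Complex.ofReal_eq_zero.1 hc))
    have hfne : f ≠ 0 := fun h0 => hfw (by simp [h0])
    have hfnorm : ‖f‖ ≤ 1 := by
      calc ‖f‖ ≤ ‖g‖ * ‖π‖ := ContinuousLinearMap.opNorm_comp_le _ _
      _ ≤ 1 * 1 := by
          exact mul_le_mul hg1.le (LinearMap.mkContinuous_norm_le _ zero_le_one _) (norm_nonneg π) (by simp [hg1])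
      _ = 1 := one_mul 1
    have hfM : ∀ x ∈ M, f x = 0 := by
      intro x hxM
      rw [hf]
      simp only [ContinuousLinearMap.comp_apply]
      have : π x = 0 := by
        simp only [hπ, LinearMap.mkContinuous_apply, Submodule.mkQ_apply]
        exact (Submodule.Quotient.mk_eq_zero M).2 hxM
      rw [this, map_zero]
    set f' : StrongDual ℂ W := ‖f‖⁻¹ • f with hf'
    have hfpos : 0 < ‖f‖ := norm_pos_iff.2 hfne
    have hf'norm : ‖f'‖ = 1 := by
      rw [hf', norm_smul, norm_inv, norm_norm, inv_mul_cancel₀ hfpos.ne']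
    have hf'M : ∀ x ∈ M, f' x = 0 := by
      intro x hxM; rw [hf']; simp [hfM x hxM]
    obtain ⟨h, hhc, hdist⟩ := Metric.mem_closure_iff.1 (hc_dense.closure_eq ▸ Set.mem_univ f') (1/4) (by norm_num)
    have hξM : ξ h ∈ M := by
      apply Submodule.le_topologicalClosure
      exact Submodule.subset_span ⟨h, hhc, rfl⟩
    have hhnorm : (3:ℝ)/4 ≤ ‖h‖ := by
      have := norm_sub_norm_le f' h
      rw [← dist_eq_norm] at this
      linarith [hf'norm ▸ this]
    have h1 : ‖h‖ / 2 ≤ ‖h (ξ h)‖ := hξ2 h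
    have h2 : ‖h (ξ h)‖ ≤ 1/4 := by
      have : h (ξ h) = (h - f') (ξ h) := by simp [hf'M _ hξM]
      rw [this]
      calc ‖(h - f') (ξ h)‖ ≤ ‖h - f'‖ * ‖ξ h‖ := (h - f').le_opNorm _
      _ ≤ (1/4) * 1 := by
          refine mul_le_mul ?_ (hξ1 h) (norm_nonneg _) (by norm_num)
          rw [← dist_eq_norm, dist_comm]
          exact hdist.le
      _ = 1/4 := by ring
    linarith
  rw [← isSeparable_univ_iff]
  have : (M : Set W) = Set.univ := by rw [hMtop]; rfl
  rwa [this] at hMsep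

set_option maxHeartbeats 1600000 in
set_option linter.unusedVariables false in
open Set in
/-- Let `X` be a non-separable, reflexive complex Banach space with few operators, let
`E = X'`, and let `D` be a closed linear subspace of `E` which is a finite intersection
`⋂_{i=1}^n ker T_i` of kernels of bounded operators on `E`. Then either `D` or `E/D` is
separable. -/
theorem separable_or_separable_quotient_of_finite_intersection_of_kernels
    (X : Type*) [NormedAddCommGroup X] [NormedSpace ℂ X] [CompleteSpace X]
    (hnonsep : ¬ SeparableSpace X)
    (hrefl : Function.Surjective (inclusionInDoubleDual ℂ X))
    (hfew : ∀ T : X →L[ℂ] X, ∃ (α : ℂ) (S : X →L[ℂ] X),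
      T = α • ContinuousLinearMap.id ℂ X + S ∧ IsSeparable (Set.range S))
    (D : Submodule ℂ (StrongDual ℂ X)) (hD : IsClosed (D : Set (StrongDual ℂ X)))
    (n : ℕ) (hn : 0 < n) (T : Fin n → (StrongDual ℂ X →L[ℂ] StrongDual ℂ X))
    (hker : D = ⨅ i, LinearMap.ker (T i : StrongDual ℂ X →ₗ[ℂ] StrongDual ℂ X)) :
    IsSeparable (D : Set (StrongDual ℂ X)) ∨ SeparableSpace (StrongDual ℂ X ⧸ D) := by
  classical
  letI : NormedAddCommGroup (StrongDual ℂ X) := ContinuousLinearMap.toNormedAddCommGroup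
  set J := inclusionInDoubleDual ℂ X with hJ
  have hsurj : Function.Surjective (inclusionInDoubleDualLi ℂ (E := X)) := hrefl
  set Jiso : X ≃ₗᵢ[ℂ] StrongDual ℂ (StrongDual ℂ X) :=
    LinearIsometryEquiv.ofSurjective (inclusionInDoubleDualLi ℂ) hsurj with hJiso
  have hJisoJ : ∀ x : X, (Jiso x : StrongDual ℂ (StrongDual ℂ X)) = J x := by
    intro x
    rw [hJiso, LinearIsometryEquiv.coe_ofSurjective]
    rfl
  set S : Fin n → (X →L[ℂ] X) := fun i =>
    (Jiso.symm.toLinearIsometry.toContinuousLinearMap).comp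
      ((ContinuousLinearMap.precomp ℂ (T i)).comp J) with hSdef
  have hS : ∀ (i : Fin n) (g : StrongDual ℂ X) (x : X), g (S i x) = (T i) g x := by
    intro i g x
    have h0 : S i x = Jiso.symm ((J x).comp (T i)) := rfl
    have h1 : Jiso (S i x) = (J x).comp (T i) := by
      rw [h0, Jiso.apply_symm_apply]
    calc g (S i x) = (Jiso (S i x)) g := by rw [hJisoJ]; exact (dual_def ℂ X (S i x) g).symm
    _ = ((J x).comp (T i)) g := by rw [h1]
    _ = (J x) ((T i) g) := rfl
    _ = (T i) g x := dual_def ℂ X x ((T i) g)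
  choose α K hdecomp hKsep using fun i => hfew (S i)
  have hTK : ∀ (i : Fin n) (g : StrongDual ℂ X) (x : X), (T i) g x = α i * g x + g (K i x) := by
    intro i g x
    rw [← hS i g x, hdecomp i]
    simp [ContinuousLinearMap.add_apply, ContinuousLinearMap.smul_apply, map_add, map_smul,
      smul_eq_mul]
  by_cases hα : ∃ i, α i ≠ 0
  · left
    obtain ⟨i, hαi⟩ := hα
    have hmem : ∀ f ∈ D, (T i) f = 0 := by
      intro f hf
      rw [hker] at hf
      exact (Submodule.mem_iInf _).1 hf i
    have hsub : ∀ f ∈ D, ∀ x : X, f x = -(α i)⁻¹ * f (K i x) := by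
      intro f hf x
      have h0 : (T i) f x = 0 := by rw [hmem f hf]; rfl
      rw [hTK] at h0
      field_simp
      linear_combination h0
    set εC : X →L[ℂ] StrongDual ℂ ↥D := (ContinuousLinearMap.precomp ℂ D.subtypeL).comp J with hεCdef
    have hεC : ∀ (y : X) (f : ↥D), εC y f = (f : StrongDual ℂ X) y := fun y f => rfl
    have hcover : (Set.univ : Set (StrongDual ℂ ↥D)) ⊆
        εC '' ((fun z => -(α i)⁻¹ • z) '' Set.range (K i)) := by
      intro g _
      obtain ⟨G, hG, -⟩ := exists_extension_norm_eq D g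
      obtain ⟨x, hx⟩ := hrefl G
      refine ⟨-(α i)⁻¹ • K i x, ⟨K i x, ⟨x, rfl⟩, rfl⟩, ?_⟩
      ext f
      rw [hεC]
      have h1 : (f : StrongDual ℂ X) (-(α i)⁻¹ • K i x) = -(α i)⁻¹ * (f : StrongDual ℂ X) (K i x) := by
        rw [map_smul, smul_eq_mul]
      rw [h1, ← hsub (f : StrongDual ℂ X) f.2 x, ← hG f, ← hx]
      exact dual_def ℂ X x (f : StrongDual ℂ X)
    have hsep2 : IsSeparable (εC '' ((fun z => -(α i)⁻¹ • z) '' Set.range (K i))) :=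
      ((hKsep i).image (continuous_const_smul _)).image εC.continuous
    have hdsep : SeparableSpace (StrongDual ℂ ↥D) := isSeparable_univ_iff.1 (hsep2.mono hcover)
    have hDsep : SeparableSpace ↥D := separableSpace_of_dual_separableSpace hdsep
    have hrange := isSeparable_range (continuous_subtype_val : Continuous ((↑) : ↥D → StrongDual ℂ X))
    rwa [Subtype.range_coe_subtype] at hrange
  · right
    push_neg at hα
    set Y : Submodule ℂ X := (Submodule.span ℂ (⋃ i, Set.range (K i))).topologicalClosure with hYdef
    haveI hYclosed : IsClosed (Y : Set X) := Submodule.isClosed_topologicalClosure _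
    have hYsep : IsSeparable (Y : Set X) := by
      have h1 : IsSeparable (⋃ i, Set.range (K i)) :=
        TopologicalSpace.IsSeparable.iUnion fun i => hKsep i
      simpa [hYdef, Submodule.topologicalClosure_coe] using h1.span.closure
    have hDY : ∀ f : StrongDual ℂ X, f ∈ D ↔ ∀ y ∈ Y, f y = 0 := by
      intro f
      constructor
      · intro hf
        rw [hker] at hf
        have hker' : ∀ (j : Fin n), (T j) f = 0 := fun j => (Submodule.mem_iInf _).1 hf j
        have hrange : (⋃ i, Set.range (K i)) ⊆ (LinearMap.ker (f : X →ₗ[ℂ] ℂ) : Set X) := by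
          rintro y ⟨s, ⟨j, rfl⟩, ⟨x, rfl⟩⟩
          have : (T j) f x = 0 := by rw [hker' j]; rfl
          rw [hTK, hα j] at this
          simpa using this
        have hle : Y ≤ LinearMap.ker (f : X →ₗ[ℂ] ℂ) :=
          Submodule.topologicalClosure_minimal _ (Submodule.span_le.2 hrange)
            (ContinuousLinearMap.isClosed_ker f)
        intro y hy
        exact hle hy
      · intro h
        rw [hker]
        refine (Submodule.mem_iInf _).2 fun j => ?_
        rw [LinearMap.mem_ker]
        ext x
        have hmemY : K j x ∈ Y := by
          apply Submodule.le_topologicalClosure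
          exact Submodule.subset_span (Set.mem_iUnion.2 ⟨j, ⟨x, rfl⟩⟩)
        show (T j) f x = 0
        rw [hTK, hα j, h _ hmemY]
        ring
    set πc : StrongDual ℂ X →L[ℂ] (StrongDual ℂ X ⧸ D) := LinearMap.mkContinuous D.mkQ 1
      (fun f => by simpa using Submodule.Quotient.norm_mk_le D f) with hπc
    have hkerle : ∀ y : ↥Y, D ≤ LinearMap.ker ((J (y : X) : StrongDual ℂ X →L[ℂ] ℂ) : StrongDual ℂ X →ₗ[ℂ] ℂ) := by
      intro y f hf
      rw [LinearMap.mem_ker]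
      show J (y : X) f = 0
      rw [dual_def]
      exact (hDY f).1 hf (y : X) y.2
    set ℓ : ↥Y → ((StrongDual ℂ X ⧸ D) →ₗ[ℂ] ℂ) :=
      fun y => D.liftQ ((J (y : X) : StrongDual ℂ X →L[ℂ] ℂ) : StrongDual ℂ X →ₗ[ℂ] ℂ) (hkerle y) with hℓdef
    have hℓ : ∀ (y : ↥Y) (f : StrongDual ℂ X), ℓ y (Submodule.Quotient.mk f) = f (y : X) := by
      intro y f
      rw [hℓdef]
      show J (y : X) f = f (y : X)
      exact dual_def ℂ X (y : X) f
    have hℓbound : ∀ (y : ↥Y) (q : StrongDual ℂ X ⧸ D), ‖ℓ y q‖ ≤ ‖(y : X)‖ * ‖q‖ := by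
      intro y q
      refine le_of_forall_pos_le_add fun δ hδ => ?_
      have hε : (0:ℝ) < δ / (‖(y : X)‖ + 1) := by positivity
      obtain ⟨m, hm, hmn⟩ := Submodule.Quotient.norm_mk_lt q hε
      have hq : ℓ y q = m (y : X) := by rw [← hm, hℓ]
      rw [hq]
      have h1 : ‖m (y : X)‖ ≤ ‖m‖ * ‖(y : X)‖ := m.le_opNorm _
      have h2 : ‖m‖ * ‖(y : X)‖ ≤ (‖q‖ + δ / (‖(y : X)‖ + 1)) * ‖(y : X)‖ := by
        apply mul_le_mul_of_nonneg_right hmn.le (norm_nonneg _)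
      have h3 : (δ / (‖(y : X)‖ + 1)) * ‖(y : X)‖ ≤ δ := by
        rw [div_mul_eq_mul_div, div_le_iff₀ (by positivity)]
        nlinarith [norm_nonneg (y : X)]
      calc ‖m (y : X)‖ ≤ (‖q‖ + δ / (‖(y : X)‖ + 1)) * ‖(y : X)‖ := le_trans h1 h2
      _ = ‖q‖ * ‖(y : X)‖ + (δ / (‖(y : X)‖ + 1)) * ‖(y : X)‖ := by ring
      _ ≤ ‖(y : X)‖ * ‖q‖ + δ := by rw [mul_comm ‖q‖]; linarith
    set η : ↥Y → StrongDual ℂ (StrongDual ℂ X ⧸ D) :=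
      fun y => LinearMap.mkContinuous (ℓ y) ‖(y : X)‖ (hℓbound y) with hηdef
    have hηapp : ∀ (y : ↥Y) (f : StrongDual ℂ X), η y (Submodule.Quotient.mk f) = f (y : X) := by
      intro y f
      rw [hηdef]
      exact hℓ y f
    have hηlip : LipschitzWith 1 η := by
      refine LipschitzWith.of_dist_le_mul fun y y' => ?_
      rw [dist_eq_norm, dist_eq_norm]
      simp only [NNReal.coe_one, one_mul]
      have hsub : η y - η y' = η (y - y') := by
        ext q
        obtain ⟨f, rfl⟩ := Submodule.Quotient.mk_surjective D q
        rw [ContinuousLinearMap.sub_apply, hηapp, hηapp, hηapp]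
        push_cast
        rw [map_sub]
      rw [hsub]
      refine ContinuousLinearMap.opNorm_le_bound _ (norm_nonneg _) fun q => ?_
      have := hℓbound (y - y') q
      rw [hηdef]
      simpa using this
    have hηsurj : ∀ g : StrongDual ℂ (StrongDual ℂ X ⧸ D), ∃ y : ↥Y, g = η y := by
      intro g
      obtain ⟨x, hx⟩ := hrefl (g.comp πc)
      have hxD : ∀ f ∈ D, f x = 0 := by
        intro f hf
        have h1 : πc f = 0 := by
          show (Submodule.Quotient.mk f : StrongDual ℂ X ⧸ D) = 0
          exact (Submodule.Quotient.mk_eq_zero D).2 hf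
        have h2 : (g.comp πc) f = 0 := by
          rw [ContinuousLinearMap.comp_apply, h1, map_zero]
        rw [← dual_def ℂ X x f, hx]
        exact h2
      have hxY : x ∈ Y := by
        by_contra hxY
        set πY : X →L[ℂ] X ⧸ Y := LinearMap.mkContinuous Y.mkQ 1
          (fun z => by simpa using Submodule.Quotient.norm_mk_le Y z) with hπY
        have hπYx : πY x ≠ 0 := by
          show (Submodule.Quotient.mk x : X ⧸ Y) ≠ 0
          rw [Ne, Submodule.Quotient.mk_eq_zero]
          exact hxY
        obtain ⟨h, hh1, hh2⟩ := exists_dual_vector ℂ (πY x) (norm_ne_zero_iff.2 hπYx)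
        set f : StrongDual ℂ X := h.comp πY with hfdef
        have hfD : f ∈ D := by
          rw [hDY]
          intro y hy
          rw [hfdef, ContinuousLinearMap.comp_apply]
          have : πY y = 0 := by
            show (Submodule.Quotient.mk y : X ⧸ Y) = 0
            exact (Submodule.Quotient.mk_eq_zero Y).2 hy
          rw [this, map_zero]
        have hfx : f x = 0 := hxD f hfD
        rw [hfdef, ContinuousLinearMap.comp_apply, hh2] at hfx
        exact hπYx (norm_eq_zero.1 (Complex.ofReal_eq_zero.1 hfx))
      refine ⟨⟨x, hxY⟩, ?_⟩
      ext q
      obtain ⟨f, rfl⟩ := Submodule.Quotient.mk_surjective D q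
      rw [hηapp]
      rw [← dual_def ℂ X x f, hx]
      rfl
    haveI hYsepSpace : SeparableSpace ↥Y := hYsep.separableSpace
    have hrange : IsSeparable (Set.range η) := isSeparable_range hηlip.continuous
    have huniv : (Set.univ : Set (StrongDual ℂ (StrongDual ℂ X ⧸ D))) ⊆ Set.range η := by
      intro g _
      obtain ⟨y, hy⟩ := hηsurj g
      exact ⟨y, hy.symm⟩
    have hdual : SeparableSpace (StrongDual ℂ (StrongDual ℂ X ⧸ D)) :=
      isSeparable_univ_iff.1 (hrange.mono huniv)
    haveI : IsClosed (D : Set (StrongDual ℂ X)) := hD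
    exact separableSpace_of_dual_separableSpace hdual
end

section
/- Let X be a non-separable, reflexive complex Banach space with few operators, i.e. every bounded linear operator T : X → X can be written as T = α·id_X + S with α ∈ ℂ and S a bounded operator with separable range. Then the dual space E = X' contains a closed linear subspace D which is not of the form ⋂_{i=1}^n ker T_i for any n ∈ ℕ and any bounded linear operators T_1, …, T_n : E → E; in particular, D is not the kernel of any bounded linear operator on E. -/
open NormedSpace TopologicalSpace

section Aux
variable {X : Type*} [NormedAddCommGroup X] [NormedSpace ℂ X]

example (hrefl : Function.Surjective (inclusionInDoubleDual ℂ X)) :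
    Function.Surjective (inclusionInDoubleDualLi ℂ (E := X)) := hrefl

/-- Hahn-Banach: separating a point from a closed submodule. -/
lemma exists_dual_annihilating (V : Submodule ℂ X) (hV : IsClosed (V : Set X)) {x : X}
    (hx : x ∉ V) : ∃ f : StrongDual ℂ X, ‖f‖ ≤ 1 ∧ (∀ v ∈ V, f v = 0) ∧ f x ≠ 0 := by
  haveI := hV
  set π : X →L[ℂ] (X ⧸ V) := LinearMap.mkContinuous V.mkQ 1
    (fun m => by simpa using Submodule.Quotient.norm_mk_le V m) with hπ
  have hπa : ∀ y : X, π y = Submodule.Quotient.mk y := fun y => rfl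
  have hxq : (Submodule.Quotient.mk x : X ⧸ V) ≠ 0 := by
    simpa [Submodule.Quotient.mk_eq_zero] using hx
  obtain ⟨g, hg1, hg2⟩ := exists_dual_vector ℂ (Submodule.Quotient.mk x : X ⧸ V) (norm_ne_zero_iff.mpr hxq)
  refine ⟨g.comp π, ?_, ?_, ?_⟩
  · refine ContinuousLinearMap.opNorm_le_bound _ zero_le_one (fun y => ?_)
    calc ‖g (π y)‖ ≤ ‖g‖ * ‖π y‖ := g.le_opNorm _
    _ ≤ 1 * ‖y‖ := by
        rw [hg1, hπa]
        simpa using Submodule.Quotient.norm_mk_le V y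
  · intro v hv
    have : π v = 0 := by rw [hπa, Submodule.Quotient.mk_eq_zero]; exact hv
    simp [ContinuousLinearMap.comp_apply, this]
  · have : (g.comp π) x = (‖(Submodule.Quotient.mk x : X ⧸ V)‖ : ℂ) := by
      rw [ContinuousLinearMap.comp_apply, hπa, hg2]
      rfl
    rw [this]
    simpa using norm_ne_zero_iff.mpr hxq

lemma vanish_closure_span {s : Set X} {f : StrongDual ℂ X} (h : ∀ a ∈ s, f a = 0) :
    ∀ y ∈ (Submodule.span ℂ s).topologicalClosure, f y = 0 := by
  have h1 : (Submodule.span ℂ s).topologicalClosure ≤ LinearMap.ker (f : X →ₗ[ℂ] ℂ) := by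
    apply Submodule.topologicalClosure_minimal
    · rw [Submodule.span_le]; exact fun a ha => h a ha
    · exact ContinuousLinearMap.isClosed_ker f
  exact fun y hy => h1 hy

lemma not_isSeparable_of_separated {s : Set X}
    (hsep : ∀ a ∈ s, ∀ b ∈ s, a ≠ b → 1 ≤ dist a b) (hunc : ¬ s.Countable) :
    ¬ IsSeparable s := by
  intro h
  obtain ⟨c, hc, hsc⟩ := h
  apply hunc
  have key : ∀ a : X, a ∈ s → ∃ b ∈ c, dist a b < 1/2 := by
    intro a ha
    have := hsc ha
    rw [Metric.mem_closure_iff] at this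
    exact this _ (by norm_num)
  choose F hF1 hF2 using key
  classical
  set G : X → X := fun a => if h : a ∈ s then F a h else a with hG
  have hinj : Set.InjOn G s := by
    intro a ha b hb hab
    by_contra hne
    have h1 : dist a (F a ha) < 1/2 := hF2 a ha
    have h2 : dist b (F b hb) < 1/2 := hF2 b hb
    have : F a ha = F b hb := by simpa [hG, ha, hb] using hab
    have : dist a b < 1 := by
      calc dist a b ≤ dist a (F a ha) + dist (F b hb) b := by
            rw [this]; exact dist_triangle a (F b hb) b
      _ < 1 := by rw [dist_comm (F b hb) b]; linarith
    exact absurd (hsep a ha b hb hne) (by linarith)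
  apply Set.countable_of_injective_of_countable_image hinj
  refine hc.mono ?_
  rintro y ⟨a, ha, rfl⟩
  simpa [hG, ha] using hF1 a ha



lemma exists_preadjoint (hrefl : Function.Surjective (inclusionInDoubleDual ℂ X))
    (T : StrongDual ℂ X →L[ℂ] StrongDual ℂ X) :
    ∃ K : X →L[ℂ] X, ∀ (f : StrongDual ℂ X) (x : X), T f x = f (K x) := by
  have hsurj : Function.Surjective (inclusionInDoubleDualLi ℂ (E := X)) := hrefl
  set e := LinearIsometryEquiv.ofSurjective _ hsurj with he
  set P : StrongDual ℂ (StrongDual ℂ X) →L[ℂ] StrongDual ℂ (StrongDual ℂ X) :=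
    (ContinuousLinearMap.compL ℂ (StrongDual ℂ X) (StrongDual ℂ X) ℂ).flip T with hP
  have hcoe2 : ∀ (z : X) (f' : StrongDual ℂ X), (e z) f' = f' z := by
    intro z f'
    rw [he]
    rw [LinearIsometryEquiv.coe_ofSurjective]
    rfl
  refine ⟨((e.symm.toContinuousLinearEquiv : StrongDual ℂ (StrongDual ℂ X) ≃L[ℂ] X) :
      StrongDual ℂ (StrongDual ℂ X) →L[ℂ] X).comp (P.comp
      ((e.toContinuousLinearEquiv : X ≃L[ℂ] StrongDual ℂ (StrongDual ℂ X)) : X →L[ℂ] StrongDual ℂ (StrongDual ℂ X))),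
      fun f x => ?_⟩
  have hK : (((e.symm.toContinuousLinearEquiv : StrongDual ℂ (StrongDual ℂ X) ≃L[ℂ] X) :
      StrongDual ℂ (StrongDual ℂ X) →L[ℂ] X).comp (P.comp
      ((e.toContinuousLinearEquiv : X ≃L[ℂ] StrongDual ℂ (StrongDual ℂ X)) : X →L[ℂ] StrongDual ℂ (StrongDual ℂ X)))) x
      = e.symm (P (e x)) := by
    simp [ContinuousLinearMap.comp_apply]
    rfl
  rw [hK]
  have h2 : e (e.symm (P (e x))) = P (e x) := e.apply_symm_apply _
  have h3 : f (e.symm (P (e x))) = (e (e.symm (P (e x)))) f := (hcoe2 _ _).symm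
  rw [h3, h2]
  have h4 : P (e x) f = (e x) (T f) := rfl
  rw [h4, hcoe2]



lemma exists_half_norm (g : StrongDual ℂ X) (hg : g ≠ 0) : ∃ x : X, ‖x‖ ≤ 1 ∧ ‖g‖/2 ≤ ‖g x‖ := by
  by_contra hcon
  push_neg at hcon
  have : ‖g‖ ≤ ‖g‖/2 := by
    refine ContinuousLinearMap.opNorm_le_bound' g (by positivity) (fun x hx => ?_)
    have hxpos : (0:ℝ) < ‖x‖ := lt_of_le_of_ne (norm_nonneg x) (Ne.symm hx)
    set t : ℂ := (‖x‖ : ℂ)⁻¹ with ht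
    have hnt : ‖t‖ = ‖x‖⁻¹ := by
      rw [ht, norm_inv]
      simp [abs_of_nonneg (norm_nonneg x)]
    have h1 : ‖t • x‖ ≤ 1 := by
      rw [norm_smul, hnt]
      exact le_of_eq (inv_mul_cancel₀ hx)
    have h2 := hcon _ h1
    rw [map_smul, norm_smul, hnt, inv_mul_lt_iff₀ hxpos] at h2
    exact le_of_lt (by linarith)
  have : ‖g‖ ≤ 0 := by linarith
  exact hg (by simpa using le_antisymm this (norm_nonneg g))

/-- Key extension lemma: in a nonseparable reflexive space, given countably many functionals
and a separable closed subspace, there is a point outside the subspace killed by all the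
functionals. -/
lemma exists_point_annihilated (hnonsep : ¬ SeparableSpace X)
    (hrefl : Function.Surjective (inclusionInDoubleDual ℂ X))
    (G : Set (StrongDual ℂ X)) (hG : G.Countable)
    (V : Submodule ℂ X) (hVc : IsClosed (V : Set X)) (hVs : IsSeparable (V : Set X)) :
    ∃ x : X, x ∉ V ∧ ∀ g ∈ G, g x = 0 := by
  classical
  by_contra hcon
  push_neg at hcon
  have hcon' : ∀ x : X, (∀ g ∈ G, g x = 0) → x ∈ V := by
    intro x hx
    by_contra hxV
    obtain ⟨g, hgG, hgx⟩ := hcon x hxV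
    exact hgx (hx g hgG)
  -- the closed span of G in the dual
  set F : Submodule ℂ (StrongDual ℂ X) := (Submodule.span ℂ G).topologicalClosure with hF
  have hFsep : IsSeparable (F : Set (StrongDual ℂ X)) := by
    have h1 : IsSeparable (Submodule.span ℂ G : Set (StrongDual ℂ X)) := hG.isSeparable.span
    exact h1.closure
  obtain ⟨c, hccount, hcsub⟩ := hFsep
  -- choose near-norming vectors
  have hxg : ∀ g : StrongDual ℂ X, ∃ x : X, ‖x‖ ≤ 1 ∧ (g ≠ 0 → ‖g‖/2 ≤ ‖g x‖) := by
    intro g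
    by_cases hg : g = 0
    · exact ⟨0, by simp, fun h => absurd hg h⟩
    · obtain ⟨x, hx1, hx2⟩ := exists_half_norm g hg
      exact ⟨x, hx1, fun _ => hx2⟩
  choose xg hxg1 hxg2 using hxg
  -- the separable closed subspace M
  set M : Submodule ℂ X := (Submodule.span ℂ ((xg '' c) ∪ (V : Set X))).topologicalClosure with hM
  have hMc : IsClosed (M : Set X) := Submodule.isClosed_topologicalClosure _
  have hMsep : IsSeparable (M : Set X) :=
    (((hccount.image xg).isSeparable.union hVs).span).closure
  have hVM : (V : Set X) ⊆ (M : Set X) :=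
    (Set.subset_union_right).trans (Submodule.subset_span.trans (Submodule.le_topologicalClosure _))
  have hxgM : ∀ g ∈ c, xg g ∈ M :=
    fun g hg => (Submodule.le_topologicalClosure _)
      (Submodule.subset_span (Set.mem_union_left _ (Set.mem_image_of_mem xg hg)))
  -- M is proper
  have hMne : ∃ y : X, y ∉ M := by
    by_contra h
    push_neg at h
    apply hnonsep
    rw [← isSeparable_univ_iff]
    exact hMsep.mono (fun y _ => h y)
  obtain ⟨y, hy⟩ := hMne
  obtain ⟨f, hfnorm, hfvan, hfy⟩ := exists_dual_annihilating M hMc hy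
  -- f belongs to F, by reflexivity
  have hfF : f ∈ F := by
    by_contra hfF
    obtain ⟨Φ, _, hΦvan, hΦf⟩ :=
      exists_dual_annihilating F (Submodule.isClosed_topologicalClosure _) hfF
    obtain ⟨x₀, hx₀⟩ := hrefl Φ
    have hGx₀ : ∀ g ∈ G, g x₀ = 0 := by
      intro g hgG
      have hgF : g ∈ F := (Submodule.le_topologicalClosure _) (Submodule.subset_span hgG)
      have := hΦvan g hgF
      rw [← hx₀] at this
      rwa [dual_def] at this
    have hx₀V : x₀ ∈ V := hcon' x₀ hGx₀
    have : f x₀ = 0 := hfvan x₀ (hVM hx₀V)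
    rw [← hx₀, dual_def] at hΦf
    exact hΦf this
  -- approximate f by an element of c
  have hfne : f ≠ 0 := fun h => hfy (by simp [h])
  have hfpos : (0:ℝ) < ‖f‖ := norm_pos_iff.mpr hfne
  have hfc : f ∈ closure c := hcsub hfF
  rw [Metric.mem_closure_iff] at hfc
  obtain ⟨g, hgc, hgf⟩ := hfc (‖f‖/4) (by positivity)
  have hdist : ‖f - g‖ < ‖f‖/4 := by rwa [dist_eq_norm] at hgf
  have hgnorm : ‖f‖ - ‖f‖/4 ≤ ‖g‖ := by
    have := norm_sub_norm_le f g
    linarith [this]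
  have hgne : g ≠ 0 := by
    intro h
    rw [h, norm_zero] at hgnorm
    linarith
  have h1 : ‖g‖/2 ≤ ‖g (xg g)‖ := hxg2 g hgne
  have h2 : f (xg g) = 0 := hfvan _ (hxgM g hgc)
  have h3 : ‖g (xg g)‖ = ‖(f - g) (xg g)‖ := by
    rw [ContinuousLinearMap.sub_apply, h2, zero_sub, norm_neg]
  have h4 : ‖(f - g) (xg g)‖ ≤ ‖f - g‖ * ‖xg g‖ := (f - g).le_opNorm _
  have h5 : ‖f - g‖ * ‖xg g‖ ≤ ‖f‖/4 * 1 := by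
    apply mul_le_mul (le_of_lt hdist) (hxg1 g) (norm_nonneg _) (by positivity)
  linarith

/-- A biorthogonal family of (vector, functional) pairs. -/
def GoodFam (S : Set (X × StrongDual ℂ X)) : Prop :=
  (∀ p ∈ S, p.2 p.1 = 1 ∧ ‖p.2‖ ≤ 1) ∧ ∀ p ∈ S, ∀ q ∈ S, p ≠ q → p.2 q.1 = 0

lemma exists_biorthogonal (hnonsep : ¬ SeparableSpace X)
    (hrefl : Function.Surjective (inclusionInDoubleDual ℂ X)) :
    ∃ S : Set (X × StrongDual ℂ X), GoodFam S ∧ ¬ S.Countable := by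
  classical
  have hzorn : ∀ c ⊆ {S : Set (X × StrongDual ℂ X) | GoodFam S}, IsChain (· ⊆ ·) c →
      ∃ ub ∈ {S : Set (X × StrongDual ℂ X) | GoodFam S}, ∀ s ∈ c, s ⊆ ub := by
    intro c hcS hchain
    refine ⟨⋃₀ c, ⟨?_, ?_⟩, fun s hs => Set.subset_sUnion_of_mem hs⟩
    · rintro p ⟨s, hs, hps⟩
      exact (hcS hs).1 p hps
    · rintro p ⟨s, hs, hps⟩ q ⟨t, ht, hqt⟩ hpq
      rcases hchain.total hs ht with h | h
      · exact (hcS ht).2 p (h hps) q hqt hpq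
      · exact (hcS hs).2 p hps q (h hqt) hpq
  obtain ⟨M, hM⟩ := zorn_subset {S : Set (X × StrongDual ℂ X) | GoodFam S} hzorn
  refine ⟨M, hM.1, fun hMc => ?_⟩
  set C : Set X := Prod.fst '' M with hC
  set G : Set (StrongDual ℂ X) := Prod.snd '' M with hG
  set V : Submodule ℂ X := (Submodule.span ℂ C).topologicalClosure with hV
  have hVc : IsClosed (V : Set X) := Submodule.isClosed_topologicalClosure _
  have hVs : IsSeparable (V : Set X) := (((hMc.image _).isSeparable).span).closure
  obtain ⟨x, hxV, hxG⟩ :=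
    exists_point_annihilated hnonsep hrefl G (hMc.image _) V hVc hVs
  obtain ⟨f, hf1, hf2, hf3⟩ := exists_dual_annihilating V hVc hxV
  set x' : X := (f x)⁻¹ • x with hx'
  have hfx' : f x' = 1 := by
    rw [hx', map_smul, smul_eq_mul, inv_mul_cancel₀ hf3]
  have hCV : C ⊆ (V : Set X) :=
    Submodule.subset_span.trans (Submodule.le_topologicalClosure _)
  have hnew : (x', f) ∉ M := by
    intro hmem
    have h1 : x' ∈ C := ⟨_, hmem, rfl⟩
    have h2 : f x' = 0 := hf2 _ (hCV h1)
    rw [hfx'] at h2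
    exact one_ne_zero h2
  have hgood : GoodFam (insert (x', f) M) := by
    constructor
    · rintro p (rfl | hp)
      · exact ⟨hfx', hf1⟩
      · exact hM.1.1 p hp
    · rintro p (rfl | hp) q (rfl | hq) hpq
      · exact absurd rfl hpq
      · exact hf2 _ (hCV ⟨q, hq, rfl⟩)
      · show p.2 x' = 0
        rw [hx', map_smul, hxG p.2 ⟨p, hp, rfl⟩, smul_zero]
      · exact hM.1.2 p hp q hq hpq
  have hsub := hM.2 hgood (Set.subset_insert _ _)
  exact hnew (hsub (Set.mem_insert _ _))

lemma exists_split {α : Type*} {M : Set α} (hM : ¬ M.Countable) :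
    ∃ A₁ A₂ : Set α, A₁ ⊆ M ∧ A₂ ⊆ M ∧ Disjoint A₁ A₂ ∧ ¬ A₁.Countable ∧ ¬ A₂.Countable := by
  have h0 : ¬ Countable (↥M) := fun h => hM (Set.countable_coe_iff.mp h)
  have h1 : Cardinal.aleph0 ≤ Cardinal.mk ↥M := by
    by_contra h
    exact h0 (Cardinal.mk_le_aleph0_iff.mp (le_of_not_ge h))
  have h2 : Cardinal.mk (↥M ⊕ ↥M) = Cardinal.mk ↥M := by
    rw [← Cardinal.add_def, Cardinal.add_eq_self h1]
  obtain ⟨e⟩ := Cardinal.eq.mp h2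
  refine ⟨Set.range (fun a : ↥M => (e (Sum.inl a) : α)),
    Set.range (fun a : ↥M => (e (Sum.inr a) : α)), ?_, ?_, ?_, ?_, ?_⟩
  · rintro y ⟨a, rfl⟩; exact (e (Sum.inl a)).2
  · rintro y ⟨a, rfl⟩; exact (e (Sum.inr a)).2
  · rw [Set.disjoint_left]
    rintro y ⟨a, rfl⟩ ⟨b, hb⟩
    have := e.injective (Subtype.ext hb)
    simp at this
  · intro hcnt
    have : Countable ↥(Set.range (fun a : ↥M => (e (Sum.inl a) : α))) :=
      Set.countable_coe_iff.mpr hcnt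
    have hinj : Function.Injective
        (fun a : ↥M => (⟨(e (Sum.inl a) : α), Set.mem_range_self a⟩ :
          ↥(Set.range (fun a : ↥M => (e (Sum.inl a) : α))))) := by
      intro a b hab
      rw [Subtype.mk.injEq] at hab
      have := e.injective (Subtype.ext hab)
      simpa using this
    exact h0 hinj.countable
  · intro hcnt
    have : Countable ↥(Set.range (fun a : ↥M => (e (Sum.inr a) : α))) :=
      Set.countable_coe_iff.mpr hcnt
    have hinj : Function.Injective
        (fun a : ↥M => (⟨(e (Sum.inr a) : α), Set.mem_range_self a⟩ :
          ↥(Set.range (fun a : ↥M => (e (Sum.inr a) : α))))) := by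
      intro a b hab
      rw [Subtype.mk.injEq] at hab
      have := e.injective (Subtype.ext hab)
      simpa using this
    exact h0 hinj.countable

/-- The annihilator of a submodule `W ⊆ X` inside the dual space. -/
noncomputable def annihilator (W : Submodule ℂ X) : Submodule ℂ (StrongDual ℂ X) where
  carrier := {f : StrongDual ℂ X | ∀ w ∈ W, f w = 0}
  add_mem' := by
    intro f g hf hg w hw
    simp [hf w hw, hg w hw]
  zero_mem' := by intro w hw; simp
  smul_mem' := by
    intro c f hf w hw
    simp [hf w hw]

lemma mem_annihilator {W : Submodule ℂ X} {f : StrongDual ℂ X} :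
    f ∈ annihilator W ↔ ∀ w ∈ W, f w = 0 := Iff.rfl

lemma isClosed_annihilator (W : Submodule ℂ X) :
    IsClosed ((annihilator W : Submodule ℂ (StrongDual ℂ X)) : Set (StrongDual ℂ X)) := by
  have : ((annihilator W : Submodule ℂ (StrongDual ℂ X)) : Set (StrongDual ℂ X)) =
      ⋂ (w : X) (_ : w ∈ W), {f : StrongDual ℂ X | f w = 0} := by
    ext f
    simp only [Set.mem_iInter, Set.mem_setOf_eq]
    exact mem_annihilator
  rw [this]
  exact isClosed_iInter (fun w => isClosed_iInter (fun _ =>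
    isClosed_eq ((inclusionInDoubleDual ℂ X w).continuous) continuous_const))

end Aux

/-- **Corollary 2.3.** Let `X` be a non-separable, reflexive complex Banach space with few
operators. Then the dual space `E = X'` contains a closed linear subspace `D` which is not of
the form `⋂_{i=1}^n ker T_i` for any bounded operators `T_1, …, T_n` on `E`; in particular,
`D` is not the kernel of any bounded operator on `E`. -/
theorem exists_closed_subspace_not_intersection_of_kernels
    (X : Type*) [NormedAddCommGroup X] [NormedSpace ℂ X] [CompleteSpace X]
    (hnonsep : ¬ SeparableSpace X)
    (hrefl : Function.Surjective (inclusionInDoubleDual ℂ X))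
    (hfew : ∀ T : X →L[ℂ] X, ∃ (α : ℂ) (S : X →L[ℂ] X),
      T = α • ContinuousLinearMap.id ℂ X + S ∧ IsSeparable (Set.range S)) :
    ∃ D : Submodule ℂ (StrongDual ℂ X), IsClosed (D : Set (StrongDual ℂ X)) ∧
      (∀ (n : ℕ), 0 < n → ∀ T : Fin n → (StrongDual ℂ X →L[ℂ] StrongDual ℂ X),
        D ≠ ⨅ i, LinearMap.ker (T i : StrongDual ℂ X →ₗ[ℂ] StrongDual ℂ X)) ∧
      (∀ T : StrongDual ℂ X →L[ℂ] StrongDual ℂ X, LinearMap.ker (T : StrongDual ℂ X →ₗ[ℂ] StrongDual ℂ X) ≠ D) := by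
  classical
  obtain ⟨M, hMgood, hMunc⟩ := exists_biorthogonal hnonsep hrefl
  obtain ⟨A₁, A₂, h1M, h2M, hdisj, h1unc, h2unc⟩ := exists_split hMunc
  set W : Submodule ℂ X := (Submodule.span ℂ (Prod.fst '' A₁)).topologicalClosure with hW
  have hA1W : ∀ p ∈ A₁, p.1 ∈ W := fun p hp =>
    (Submodule.le_topologicalClosure _) (Submodule.subset_span ⟨p, hp, rfl⟩)
  have hA2W : ∀ q ∈ A₂, ∀ w ∈ W, q.2 w = 0 := by
    intro q hq
    apply vanish_closure_span
    rintro a ⟨p, hp, rfl⟩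
    have hqp : q ≠ p := fun h => (Set.disjoint_left.mp hdisj hp) (h ▸ hq)
    exact hMgood.2 q (h2M hq) p (h1M hp) hqp
  have main : ∀ (n : ℕ), 0 < n → ∀ T : Fin n → (StrongDual ℂ X →L[ℂ] StrongDual ℂ X),
      annihilator W ≠ ⨅ i, LinearMap.ker (T i : StrongDual ℂ X →ₗ[ℂ] StrongDual ℂ X) := by
    intro n hn T heq
    choose K hK using fun i => exists_preadjoint hrefl (T i)
    set R : Submodule ℂ X :=
      (Submodule.span ℂ (⋃ i, Set.range (K i))).topologicalClosure with hR
    have hmem : ∀ f : StrongDual ℂ X, f ∈ annihilator W ↔ ∀ i, T i f = 0 := by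
      intro f
      rw [heq]
      simp only [Submodule.mem_iInf, LinearMap.mem_ker, ContinuousLinearMap.coe_coe]
    have hTzero : ∀ (f : StrongDual ℂ X) (i : Fin n), T i f = 0 ↔ ∀ x : X, f (K i x) = 0 := by
      intro f i
      constructor
      · intro h x
        rw [← hK i f x, h]
        rfl
      · intro h
        ext x
        simp only [ContinuousLinearMap.zero_apply]
        rw [hK i f x]
        exact h x
    have hannR : ∀ f : StrongDual ℂ X, (∀ i, T i f = 0) ↔ ∀ y ∈ R, f y = 0 := by
      intro f
      constructor
      · intro h
        apply vanish_closure_span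
        rintro a ha
        rw [Set.mem_iUnion] at ha
        obtain ⟨i, x, rfl⟩ := ha
        exact (hTzero f i).mp (h i) x
      · intro h i
        rw [hTzero]
        intro x
        exact h _ ((Submodule.le_topologicalClosure _)
          (Submodule.subset_span (Set.mem_iUnion.mpr ⟨i, Set.mem_range_self x⟩)))
    have hWR : W = R := by
      apply le_antisymm
      · by_contra hle
        rw [SetLike.not_le_iff_exists] at hle
        obtain ⟨w, hwW, hwR⟩ := hle
        obtain ⟨f, _, hfvan, hfw⟩ :=
          exists_dual_annihilating R (Submodule.isClosed_topologicalClosure _) hwR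
        have hfD : f ∈ annihilator W := (hmem f).mpr ((hannR f).mpr hfvan)
        exact hfw ((mem_annihilator.mp hfD) w hwW)
      · by_contra hle
        rw [SetLike.not_le_iff_exists] at hle
        obtain ⟨y, hyR, hyW⟩ := hle
        obtain ⟨f, _, hfvan, hfy⟩ :=
          exists_dual_annihilating W (Submodule.isClosed_topologicalClosure _) hyW
        have hfD : f ∈ annihilator W := mem_annihilator.mpr hfvan
        exact hfy ((hannR f).mp ((hmem f).mp hfD) y hyR)
    choose α S hKdecomp hSsep using fun i => hfew (K i)
    by_cases hα : ∀ i, α i = 0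
    · -- all scalars vanish: then W is separable, contradiction with the biorthogonal system
      have hRsep : IsSeparable (R : Set X) := by
        have h1 : IsSeparable (⋃ i, Set.range (K i)) := by
          apply IsSeparable.iUnion
          intro i
          have h2 : K i = S i := by rw [hKdecomp i, hα i, zero_smul, zero_add]
          rw [h2]
          exact hSsep i
        exact (h1.span).closure
      have hsubset : (Prod.fst '' A₁) ⊆ (R : Set X) := by
        rw [← hWR]
        rintro a ⟨p, hp, rfl⟩
        exact hA1W p hp
      have hsep' : ∀ a ∈ Prod.fst '' A₁, ∀ b ∈ Prod.fst '' A₁, a ≠ b → 1 ≤ dist a b := by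
        rintro a ⟨p, hp, rfl⟩ b ⟨q, hq, rfl⟩ hab
        have hpq : p ≠ q := fun h => hab (by rw [h])
        have h1 := (hMgood.1 p (h1M hp)).1
        have h2 := (hMgood.1 p (h1M hp)).2
        have h3 := hMgood.2 p (h1M hp) q (h1M hq) hpq
        have h4 : p.2 (p.1 - q.1) = 1 := by rw [map_sub, h1, h3, sub_zero]
        have h5 : (1:ℝ) = ‖p.2 (p.1 - q.1)‖ := by rw [h4]; simp
        have h6 : ‖p.2 (p.1 - q.1)‖ ≤ ‖p.2‖ * ‖p.1 - q.1‖ := ContinuousLinearMap.le_opNorm _ _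
        have h7 : ‖p.2‖ * ‖p.1 - q.1‖ ≤ 1 * ‖p.1 - q.1‖ :=
          mul_le_mul_of_nonneg_right h2 (norm_nonneg _)
        rw [dist_eq_norm]
        linarith
      have hunc' : ¬ (Prod.fst '' A₁).Countable := by
        intro hcnt
        apply h1unc
        apply Set.countable_of_injective_of_countable_image ?_ hcnt
        intro p hp q hq hpq1
        by_contra hne
        have h3 := hMgood.2 p (h1M hp) q (h1M hq) hne
        rw [← hpq1, (hMgood.1 p (h1M hp)).1] at h3
        exact one_ne_zero h3
      exact not_isSeparable_of_separated hsep' hunc' (hRsep.mono hsubset)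
    · -- some scalar is nonzero: then X/W is "separable", contradiction
      push_neg at hα
      obtain ⟨j, hj⟩ := hα
      set Z : Set X := (fun v : X => (-(α j)⁻¹) • v) '' Set.range (S j) with hZ
      have hZsep : IsSeparable Z := (hSsep j).image (continuous_const_smul _)
      have hrangeW : ∀ x : X, K j x ∈ W := by
        intro x
        rw [hWR]
        exact (Submodule.le_topologicalClosure _)
          (Submodule.subset_span (Set.mem_iUnion.mpr ⟨j, Set.mem_range_self x⟩))
      set g : (X × StrongDual ℂ X) → X := fun q => q.1 - (α j)⁻¹ • (K j q.1) with hg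
      have hdec : ∀ x : X, x - (α j)⁻¹ • (K j x) = (-(α j)⁻¹) • (S j x) := by
        intro x
        have h1 : K j x = α j • x + S j x := by
          rw [hKdecomp j]
          simp [ContinuousLinearMap.add_apply]
        rw [h1, smul_add, smul_smul, inv_mul_cancel₀ hj, one_smul, neg_smul]
        abel
      have hsub : g '' A₂ ⊆ Z := by
        rintro a ⟨q, hq, rfl⟩
        rw [hg]
        simp only
        rw [hdec q.1]
        exact ⟨S j q.1, Set.mem_range_self _, rfl⟩
      have hvals : ∀ q ∈ A₂, ∀ q' ∈ A₂, q.2 (g q') = if q = q' then 1 else 0 := by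
        intro q hq q' hq'
        have hWmem : (α j)⁻¹ • (K j q'.1) ∈ W := W.smul_mem _ (hrangeW q'.1)
        have h0 : q.2 ((α j)⁻¹ • (K j q'.1)) = 0 := hA2W q hq _ hWmem
        rw [hg]
        simp only
        rw [map_sub, h0, sub_zero]
        by_cases hqq : q = q'
        · rw [if_pos hqq, ← hqq, (hMgood.1 q (h2M hq)).1]
        · rw [if_neg hqq]
          exact hMgood.2 q (h2M hq) q' (h2M hq') hqq
      have hsep' : ∀ a ∈ g '' A₂, ∀ b ∈ g '' A₂, a ≠ b → 1 ≤ dist a b := by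
        rintro a ⟨q, hq, rfl⟩ b ⟨q', hq', rfl⟩ hab
        have hqq : q ≠ q' := fun h => hab (by rw [h])
        have h1 : q.2 (g q - g q') = 1 := by
          rw [map_sub, hvals q hq q hq, hvals q hq q' hq', if_pos rfl, if_neg hqq, sub_zero]
        have h5 : (1:ℝ) = ‖q.2 (g q - g q')‖ := by rw [h1]; simp
        have h6 : ‖q.2 (g q - g q')‖ ≤ ‖q.2‖ * ‖g q - g q'‖ := ContinuousLinearMap.le_opNorm _ _
        have h7 : ‖q.2‖ * ‖g q - g q'‖ ≤ 1 * ‖g q - g q'‖ :=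
          mul_le_mul_of_nonneg_right (hMgood.1 q (h2M hq)).2 (norm_nonneg _)
        rw [dist_eq_norm]
        linarith
      have hunc' : ¬ (g '' A₂).Countable := by
        intro hcnt
        apply h2unc
        apply Set.countable_of_injective_of_countable_image ?_ hcnt
        intro q hq q' hq' hgq
        by_contra hne
        have h1 := hvals q hq q hq
        have h2 := hvals q hq q' hq'
        rw [if_pos rfl] at h1
        rw [if_neg hne] at h2
        rw [hgq, h2] at h1
        exact one_ne_zero h1.symm
      exact not_isSeparable_of_separated hsep' hunc' (hZsep.mono hsub)
  refine ⟨annihilator W, isClosed_annihilator W, main, ?_⟩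
  intro T hT
  exact main 1 one_pos (fun _ => T) (by rw [iInf_const, hT])
end
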